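/- arXiv:1511.02333 — 11 statements merged into one kernel-verified Lean document; each statement's English description precedes it below -/
import Mathlib

section
/- Let P(z) = a_n z^n + a_{n-1} z^{n-1} + ... + a_1 z + a_0 be a polynomial of degree n with real coefficients satisfying a_n ≥ a_{n-1} ≥ ... ≥ a_1 ≥ a_0 > 0. Then every complex zero z of P satisfies |z| ≤ 1. -/
/-- Classical Eneström–Kakeya theorem. -/
theorem enestrom_kakeya (n : ℕ) (a : ℕ → ℝ) (hn : 0 < n)
    (hmono : ∀ j, j < n → a j ≤ a (j + 1)) (h0 : 0 < a 0)
    (z : ℂ) (hz : ∑ j ∈ Finset.range (n + 1), (a j : ℂ) * z ^ j = 0) :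
    ‖z‖ ≤ 1 := by
  by_contra hr
  push_neg at hr
  set r := ‖z‖ with hrdef
  have hr0 : (0:ℝ) < r := lt_trans one_pos hr
  have hle : ∀ j, j ≤ n → a 0 ≤ a j := by
    intro j hj
    induction j with
    | zero => exact le_refl _
    | succ k ih =>
        exact le_trans (ih (Nat.le_of_succ_le hj)) (hmono k (Nat.lt_of_succ_le hj))
  have han : 0 < a n := lt_of_lt_of_le h0 (hle n le_rfl)
  -- key identity
  have key : (a n : ℂ) * z ^ (n+1) =
      (a 0 : ℂ) + ∑ j ∈ Finset.range n, ((a (j+1) : ℂ) - (a j : ℂ)) * z ^ (j+1) := by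
    have h1 : (∑ j ∈ Finset.range (n + 1), (a j : ℂ) * z ^ j) * (z - 1) = 0 := by
      rw [hz]; ring
    have h2 : (∑ j ∈ Finset.range (n + 1), (a j : ℂ) * z ^ j) * (z - 1)
        = ∑ j ∈ Finset.range (n+1), (a j : ℂ) * z ^ (j+1)
          - ∑ j ∈ Finset.range (n+1), (a j : ℂ) * z ^ j := by
      rw [Finset.sum_mul, ← Finset.sum_sub_distrib]
      exact Finset.sum_congr rfl fun j _ => by ring
    rw [h2] at h1
    rw [Finset.sum_range_succ (fun j => (a j : ℂ) * z ^ (j+1)) n,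
        Finset.sum_range_succ' (fun j => (a j : ℂ) * z ^ j) n] at h1
    have h3 : ∑ j ∈ Finset.range n, ((a (j+1) : ℂ) - (a j : ℂ)) * z ^ (j+1)
        = ∑ j ∈ Finset.range n, ((a (j+1) : ℂ) * z ^ (j+1) - (a j : ℂ) * z ^ (j+1)) :=
      Finset.sum_congr rfl fun j _ => by ring
    rw [h3, Finset.sum_sub_distrib]
    linear_combination h1
  -- take absolute values
  have habs : a n * r ^ (n+1) ≤ a 0 + ∑ j ∈ Finset.range n, (a (j+1) - a j) * r ^ (j+1) := by
    have := congrArg (‖·‖) key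
    rw [norm_mul, norm_pow, Complex.norm_real, Real.norm_eq_abs, abs_of_pos han] at this
    rw [this]
    calc ‖(a 0 : ℂ) + ∑ j ∈ Finset.range n, ((a (j+1) : ℂ) - (a j : ℂ)) * z ^ (j+1)‖
        ≤ ‖(a 0 : ℂ)‖
          + ‖∑ j ∈ Finset.range n, ((a (j+1) : ℂ) - (a j : ℂ)) * z ^ (j+1)‖ := by
          exact norm_add_le _ _
      _ ≤ a 0 + ∑ j ∈ Finset.range n, (a (j+1) - a j) * r ^ (j+1) := by
          gcongr
          · rw [Complex.norm_real, Real.norm_eq_abs, abs_of_pos h0]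
          · refine le_trans (norm_sum_le _ _) ?_
            refine Finset.sum_le_sum fun j hj => ?_
            rw [norm_mul, norm_pow]
            have : ‖(a (j+1) : ℂ) - (a j : ℂ)‖ = a (j+1) - a j := by
              rw [← Complex.ofReal_sub, Complex.norm_real, Real.norm_eq_abs,
                abs_of_nonneg (sub_nonneg.2 (hmono j (Finset.mem_range.1 hj)))]
            rw [this]
  -- bound the RHS by a n * r ^ n
  have hbound : a 0 + ∑ j ∈ Finset.range n, (a (j+1) - a j) * r ^ (j+1) ≤ a n * r ^ n := by
    have hrn : (1:ℝ) ≤ r ^ n := by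
      calc (1:ℝ) = 1 ^ n := (one_pow n).symm
        _ ≤ r ^ n := pow_le_pow_left₀ (by norm_num) hr.le n
    have h1 : a 0 ≤ a 0 * r ^ n := le_mul_of_one_le_right h0.le hrn
    have h2 : ∑ j ∈ Finset.range n, (a (j+1) - a j) * r ^ (j+1)
        ≤ ∑ j ∈ Finset.range n, (a (j+1) - a j) * r ^ n := by
      refine Finset.sum_le_sum fun j hj => ?_
      have hcoef : 0 ≤ a (j+1) - a j := sub_nonneg.2 (hmono j (Finset.mem_range.1 hj))
      exact mul_le_mul_of_nonneg_left
        (pow_le_pow_right₀ hr.le (Nat.succ_le_of_lt (Finset.mem_range.1 hj))) hcoef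
    have h3 : ∑ j ∈ Finset.range n, (a (j+1) - a j) * r ^ n = (a n - a 0) * r ^ n := by
      rw [← Finset.sum_mul, Finset.sum_range_sub (fun j => a j)]
    nlinarith [h1, h2, h3]
  have hfinal : a n * r ^ (n+1) ≤ a n * r ^ n := le_trans habs hbound
  rw [pow_succ] at hfinal
  have : r ≤ 1 := by
    have h := (mul_le_mul_iff_right₀ han).1 hfinal
    nlinarith [pow_pos hr0 n]
  linarith
end

section
/- Let P(z) = Σ_{j=0}^n a_j z^j be a polynomial of degree n with complex coefficients such that |arg a_j − β| ≤ α ≤ π/2 for j = 0, 1, ..., n, for some real β, and |a_n| ≥ |a_{n-1}| ≥ ... ≥ |a_1| ≥ |a_0|. Then every zero z of P satisfies |z| ≤ (cos α + sin α) + (2 sin α / |a_n|) · Σ_{ν=0}^{n} |a_ν|. -/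
lemma sector_sub (α β : ℝ) (hα : α ≤ Real.pi / 2) (hα0 : 0 ≤ α) (a b : ℂ)
    (ha : |Complex.arg a - β| ≤ α) (hb : |Complex.arg b - β| ≤ α)
    (hle : ‖b‖ ≤ ‖a‖) :
    ‖a - b‖ ≤ (‖a‖ - ‖b‖) * Real.cos α
      + (‖a‖ + ‖b‖) * Real.sin α := by
  have hpi := Real.pi_pos
  set r := ‖a‖ with hr
  set s := ‖b‖ with hs
  have hs0 : 0 ≤ s := norm_nonneg b
  have hr0 : 0 ≤ r := norm_nonneg a
  have hsin : 0 ≤ Real.sin α := Real.sin_nonneg_of_nonneg_of_le_pi hα0 (by linarith)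
  have hcos : 0 ≤ Real.cos α := Real.cos_nonneg_of_mem_Icc ⟨by linarith, hα⟩
  -- re of a * conj b
  have hre : (a * (starRingEnd ℂ) b).re = r * s * Real.cos (Complex.arg a - Complex.arg b) := by
    conv_lhs => rw [← Complex.norm_mul_exp_arg_mul_I a, ← Complex.norm_mul_exp_arg_mul_I b]
    rw [map_mul, Complex.conj_ofReal, ← Complex.exp_conj]
    have hc : (starRingEnd ℂ) (↑(Complex.arg b) * Complex.I) = ↑(-Complex.arg b) * Complex.I := by
      simp [Complex.conj_ofReal]
    rw [hc]
    have : (↑r * Complex.exp (↑(Complex.arg a) * Complex.I)) *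
        (↑s * Complex.exp (↑(-Complex.arg b) * Complex.I))
        = (↑(r*s) : ℂ) * Complex.exp (↑(Complex.arg a - Complex.arg b) * Complex.I) := by
      rw [mul_mul_mul_comm, ← Complex.exp_add]
      congr 1
      · push_cast; ring
      · congr 1; push_cast; ring
    rw [this, Complex.re_ofReal_mul, Complex.exp_ofReal_mul_I_re]
  have key : ‖a - b‖ ^ 2
      = r^2 + s^2 - 2 * (r * s * Real.cos (Complex.arg a - Complex.arg b)) := by
    rw [Complex.sq_norm, Complex.normSq_sub, hre, hr, hs, Complex.sq_norm, Complex.sq_norm]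
  have hθ : |Complex.arg a - Complex.arg b| ≤ 2 * α := by
    calc |Complex.arg a - Complex.arg b|
        = |(Complex.arg a - β) - (Complex.arg b - β)| := by ring_nf
      _ ≤ |Complex.arg a - β| + |Complex.arg b - β| := abs_sub _ _
      _ ≤ 2 * α := by linarith
  have hcos2 : Real.cos (2 * α) ≤ Real.cos (Complex.arg a - Complex.arg b) := by
    rw [← Real.cos_abs (Complex.arg a - Complex.arg b)]
    exact Real.cos_le_cos_of_nonneg_of_le_pi (abs_nonneg _) (by linarith) hθ
  have hpyth := Real.sin_sq_add_cos_sq α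
  have h2α : Real.cos (2*α) = Real.cos α ^ 2 - Real.sin α ^ 2 := by
    rw [Real.cos_two_mul]; linarith
  have hY0 : 0 ≤ (r - s) * Real.cos α + (r + s) * Real.sin α := by
    have := mul_nonneg (sub_nonneg.mpr hle) hcos
    have := mul_nonneg (by linarith : (0:ℝ) ≤ r + s) hsin
    linarith
  have hdiff : ((r - s) * Real.cos α + (r + s) * Real.sin α)^2 - ‖a - b‖ ^ 2
      = 2*r*s*(Real.cos (Complex.arg a - Complex.arg b) - (Real.cos α^2 - Real.sin α^2))
        + 2*(r-s)*(r+s)*(Real.sin α)*(Real.cos α)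
        + (r^2+s^2)*(Real.sin α^2 + Real.cos α^2 - 1) := by
    rw [key]; ring
  have hsq : ‖a - b‖ ^ 2 ≤ ((r - s) * Real.cos α + (r + s) * Real.sin α)^2 := by
    nlinarith [mul_nonneg (mul_nonneg hr0 hs0) (sub_nonneg.mpr (h2α ▸ hcos2)),
      mul_nonneg (mul_nonneg (mul_nonneg (sub_nonneg.mpr hle) (by linarith : (0:ℝ) ≤ r + s)) hsin) hcos]
  nlinarith [norm_nonneg (a - b), hY0, hsq]

lemma gr_telescope (a : ℕ → ℂ) (z : ℂ) (m : ℕ) :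
    (z - 1) * ∑ j ∈ Finset.range (m + 1), a j * z ^ j
      = a m * z ^ (m + 1) - a 0
        - ∑ j ∈ Finset.range m, (a (j + 1) - a j) * z ^ (j + 1) := by
  induction m with
  | zero => simp; ring
  | succ k ih =>
      rw [Finset.sum_range_succ, Finset.sum_range_succ (f := fun j => (a (j + 1) - a j) * z ^ (j + 1))]
      linear_combination ih

/-- Govil–Rahman extension of the Eneström–Kakeya theorem. -/
theorem govil_rahman (n : ℕ) (a : ℕ → ℂ) (hn : 0 < n) (han : a n ≠ 0)
    (α β : ℝ) (hα : α ≤ Real.pi / 2)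
    (harg : ∀ j ≤ n, |Complex.arg (a j) - β| ≤ α)
    (hmono : ∀ j, j < n → ‖a j‖ ≤ ‖a (j + 1)‖)
    (z : ℂ) (hz : ∑ j ∈ Finset.range (n + 1), a j * z ^ j = 0) :
    ‖z‖ ≤ (Real.cos α + Real.sin α) +
      (2 * Real.sin α / ‖a n‖) *
        ∑ ν ∈ Finset.range (n + 1), ‖a ν‖ := by
  have hpi := Real.pi_pos
  set S := ∑ ν ∈ Finset.range (n + 1), ‖a ν‖ with hSdef
  set A := ‖a n‖ with hAdef
  set R := ‖z‖ with hRdef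
  have hα0 : 0 ≤ α := le_trans (abs_nonneg _) (harg n le_rfl)
  have hsin : 0 ≤ Real.sin α := Real.sin_nonneg_of_nonneg_of_le_pi hα0 (by linarith)
  have hcos : 0 ≤ Real.cos α := Real.cos_nonneg_of_mem_Icc ⟨by linarith, hα⟩
  have hcs1 : 1 ≤ Real.cos α + Real.sin α := by
    nlinarith [Real.sin_sq_add_cos_sq α, Real.sin_le_one α, Real.cos_le_one α]
  have hA : 0 < A := norm_pos_iff.mpr han
  have hSA : A ≤ S :=
    Finset.single_le_sum (fun i _ => norm_nonneg (a i)) (Finset.self_mem_range_succ n)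
  have hS0 : 0 ≤ S := Finset.sum_nonneg fun i _ => norm_nonneg (a i)
  by_cases hR1 : R ≤ 1
  · have h1 : 0 ≤ 2 * Real.sin α / A * S :=
      mul_nonneg (div_nonneg (by linarith) hA.le) hS0
    linarith
  · push_neg at hR1
    have hR0 : (0:ℝ) < R := by linarith
    -- key algebraic identity
    have hkey : a n * z ^ (n + 1)
        = a 0 + ∑ j ∈ Finset.range n, (a (j + 1) - a j) * z ^ (j + 1) := by
      have ht := gr_telescope a z n
      rw [hz, mul_zero] at ht
      linear_combination -ht
    have h1 : A * R ^ (n + 1)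
        ≤ ‖a 0‖ + ∑ j ∈ Finset.range n, ‖a (j + 1) - a j‖ * R ^ (j + 1) := by
      calc A * R ^ (n + 1) = ‖a n * z ^ (n + 1)‖ := by
            rw [norm_mul, norm_pow]
        _ = ‖a 0 + ∑ j ∈ Finset.range n, (a (j + 1) - a j) * z ^ (j + 1)‖ := by
            rw [hkey]
        _ ≤ ‖a 0‖
            + ‖∑ j ∈ Finset.range n, (a (j + 1) - a j) * z ^ (j + 1)‖ :=
            norm_add_le _ _
        _ ≤ ‖a 0‖
            + ∑ j ∈ Finset.range n, ‖(a (j + 1) - a j) * z ^ (j + 1)‖ := by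
            gcongr
            exact norm_sum_le _ _
        _ = ‖a 0‖ + ∑ j ∈ Finset.range n, ‖a (j + 1) - a j‖ * R ^ (j + 1) := by
            simp [norm_mul, norm_pow, hRdef]
    have hRn1 : (1:ℝ) ≤ R ^ n := by calc (1:ℝ) = 1 ^ n := (one_pow n).symm
      _ ≤ R ^ n := pow_le_pow_left₀ one_pos.le hR1.le n
    have h3 : A * R ^ (n + 1)
        ≤ (‖a 0‖ + ∑ j ∈ Finset.range n, ‖a (j + 1) - a j‖) * R ^ n := by
      rw [add_mul, Finset.sum_mul]
      refine le_trans h1 (add_le_add ?_ ?_)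
      · nlinarith [norm_nonneg (a 0)]
      · refine Finset.sum_le_sum fun j hj => ?_
        have hjn : j + 1 ≤ n := Finset.mem_range.mp hj
        exact mul_le_mul_of_nonneg_left (pow_le_pow_right₀ hR1.le hjn) (norm_nonneg _)
    have h4 : A * R ≤ ‖a 0‖ + ∑ j ∈ Finset.range n, ‖a (j + 1) - a j‖ := by
      have hRn0 : (0:ℝ) < R ^ n := by positivity
      have := h3
      rw [pow_succ] at this
      have h5 : A * R * R ^ n
          ≤ (‖a 0‖ + ∑ j ∈ Finset.range n, ‖a (j + 1) - a j‖) * R ^ n := by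
        calc A * R * R ^ n = A * (R ^ n * R) := by ring
          _ ≤ _ := this
      exact le_of_mul_le_mul_right h5 hRn0
    -- bound the sum of differences
    have h5 : ∑ j ∈ Finset.range n, ‖a (j + 1) - a j‖
        ≤ (A - ‖a 0‖) * Real.cos α
          + (2 * S - A - ‖a 0‖) * Real.sin α := by
      have hstep : ∑ j ∈ Finset.range n, ‖a (j + 1) - a j‖
          ≤ ∑ j ∈ Finset.range n,
            ((‖a (j + 1)‖ - ‖a j‖) * Real.cos α
              + (‖a (j + 1)‖ + ‖a j‖) * Real.sin α) := by
        refine Finset.sum_le_sum fun j hj => ?_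
        have hjn : j < n := Finset.mem_range.mp hj
        exact sector_sub α β hα hα0 (a (j + 1)) (a j)
          (harg (j + 1) hjn) (harg j hjn.le) (hmono j hjn)
      have t1 : ∑ j ∈ Finset.range n, (‖a (j + 1)‖ - ‖a j‖)
          = A - ‖a 0‖ := Finset.sum_range_sub (fun i => ‖a i‖) n
      have t2 : ∑ j ∈ Finset.range n, ‖a (j + 1)‖ = S - ‖a 0‖ := by
        have := Finset.sum_range_succ' (fun i => ‖a i‖) n
        rw [hSdef]; rw [this]; ring
      have t3 : ∑ j ∈ Finset.range n, ‖a j‖ = S - A := by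
        have := Finset.sum_range_succ (fun i => ‖a i‖) n
        rw [hSdef, hAdef]; rw [this]; ring
      have t4 : ∑ j ∈ Finset.range n,
            ((‖a (j + 1)‖ - ‖a j‖) * Real.cos α
              + (‖a (j + 1)‖ + ‖a j‖) * Real.sin α)
          = (∑ j ∈ Finset.range n, (‖a (j + 1)‖ - ‖a j‖)) * Real.cos α
            + ((∑ j ∈ Finset.range n, ‖a (j + 1)‖)
              + ∑ j ∈ Finset.range n, ‖a j‖) * Real.sin α := by
        rw [Finset.sum_add_distrib, ← Finset.sum_mul, ← Finset.sum_mul,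
          Finset.sum_add_distrib, add_mul]
      rw [t4, t1, t2, t3] at hstep
      calc ∑ j ∈ Finset.range n, ‖a (j + 1) - a j‖ ≤ _ := hstep
        _ = (A - ‖a 0‖) * Real.cos α
            + (2 * S - A - ‖a 0‖) * Real.sin α := by ring
    have h6 : A * R ≤ A * (Real.cos α + Real.sin α) + 2 * Real.sin α * S := by
      have ha0 : 0 ≤ ‖a 0‖ := norm_nonneg _
      nlinarith [mul_nonneg ha0 (by linarith : (0:ℝ) ≤ Real.cos α + Real.sin α - 1),
        mul_nonneg hA.le hsin]
    calc R ≤ ((Real.cos α + Real.sin α) * A + 2 * Real.sin α * S) / A := by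
          rw [le_div_iff₀ hA]; linarith
      _ = (Real.cos α + Real.sin α) + 2 * Real.sin α / A * S := by
          field_simp
end

section
/- If a and b are complex numbers with |arg a − β| ≤ α ≤ π/2 and |arg b − β| ≤ α ≤ π/2 for some real β, and c is a complex number also satisfying |arg c − β| ≤ α, then for reals t_1 > t_2 ≥ 0: |t_1 t_2 a + (t_1 − t_2) b − c| ≤ | t_1 t_2 |a| + (t_1 − t_2)|b| − |c| | · cos α + ( t_1 t_2 |a| + (t_1 − t_2)|b| + |c| ) · sin α. -/
private lemma cone_diff (z w : ℂ) (α β : ℝ) (hα : α ≤ Real.pi / 2) (hα0 : 0 ≤ α)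
    (hz : z ≠ 0 → |Complex.arg z - β| ≤ α) (hw : w ≠ 0 → |Complex.arg w - β| ≤ α) :
    ‖z - w‖ ≤ |‖z‖ - ‖w‖| * Real.cos α +
      (‖z‖ + ‖w‖) * Real.sin α := by
  have hpi := Real.pi_pos
  have hsin : 0 ≤ Real.sin α := Real.sin_nonneg_of_nonneg_of_le_pi hα0 (by linarith)
  have hcos : 0 ≤ Real.cos α := Real.cos_nonneg_of_mem_Icc ⟨by linarith, hα⟩
  have hr : 0 ≤ ‖z‖ := norm_nonneg z
  have hs : 0 ≤ ‖w‖ := norm_nonneg w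
  have hzre : z.re = ‖z‖ * Real.cos (Complex.arg z) := by
    conv_lhs => rw [← Complex.norm_mul_cos_add_sin_mul_I z]
    simp
  have hzim : z.im = ‖z‖ * Real.sin (Complex.arg z) := by
    conv_lhs => rw [← Complex.norm_mul_cos_add_sin_mul_I z]
    simp
  have hwre : w.re = ‖w‖ * Real.cos (Complex.arg w) := by
    conv_lhs => rw [← Complex.norm_mul_cos_add_sin_mul_I w]
    simp
  have hwim : w.im = ‖w‖ * Real.sin (Complex.arg w) := by
    conv_lhs => rw [← Complex.norm_mul_cos_add_sin_mul_I w]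
    simp
  have hdot : ‖z‖ * ‖w‖ * Real.cos (2 * α) ≤
      z.re * w.re + z.im * w.im := by
    by_cases h0 : z = 0
    · simp [h0]
    by_cases h1 : w = 0
    · simp [h1]
    have hΔ : |Complex.arg z - Complex.arg w| ≤ 2 * α := by
      calc |Complex.arg z - Complex.arg w|
          ≤ |Complex.arg z - β| + |β - Complex.arg w| := abs_sub_le _ _ _
        _ = |Complex.arg z - β| + |Complex.arg w - β| := by rw [abs_sub_comm β]
        _ ≤ 2 * α := by linarith [hz h0, hw h1]
    have hcos2 : Real.cos (2 * α) ≤ Real.cos (Complex.arg z - Complex.arg w) := by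
      rw [← Real.cos_abs (Complex.arg z - Complex.arg w)]
      exact Real.cos_le_cos_of_nonneg_of_le_pi (abs_nonneg _) (by linarith) hΔ
    have heq : z.re * w.re + z.im * w.im =
        ‖z‖ * ‖w‖ * Real.cos (Complex.arg z - Complex.arg w) := by
      rw [hzre, hzim, hwre, hwim, Real.cos_sub]; ring
    rw [heq]
    exact mul_le_mul_of_nonneg_left hcos2 (mul_nonneg hr hs)
  have hL2 : (‖z - w‖) ^ 2 =
      (‖z‖) ^ 2 + (‖w‖) ^ 2 - 2 * (z.re * w.re + z.im * w.im) := by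
    rw [Complex.sq_norm, Complex.normSq_apply, Complex.sub_re, Complex.sub_im,
      Complex.sq_norm, Complex.normSq_apply, Complex.sq_norm, Complex.normSq_apply]
    ring
  set R := |‖z‖ - ‖w‖| * Real.cos α +
      (‖z‖ + ‖w‖) * Real.sin α with hRdef
  have hR : 0 ≤ R := by positivity
  have hsq : (‖z - w‖) ^ 2 ≤ R ^ 2 := by
    rw [hL2, hRdef]
    have hpyth := Real.sin_sq_add_cos_sq α
    have hcos2eq : Real.cos (2 * α) = Real.cos α ^ 2 - Real.sin α ^ 2 := by
      rw [Real.cos_two_mul]; nlinarith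
    have habs2 : |‖z‖ - ‖w‖| ^ 2 =
        (‖z‖ - ‖w‖) ^ 2 := sq_abs _
    nlinarith [hdot, mul_nonneg (mul_nonneg (mul_nonneg (abs_nonneg
      (‖z‖ - ‖w‖)) (add_nonneg hr hs)) hcos) hsin]
  calc ‖z - w‖ = Real.sqrt ((‖z - w‖) ^ 2) :=
        (Real.sqrt_sq (norm_nonneg _)).symm
    _ ≤ Real.sqrt (R ^ 2) := Real.sqrt_le_sqrt hsq
    _ = R := Real.sqrt_sq hR

private lemma cone_diff_scaled (a c : ℂ) (α β : ℝ) (hα : α ≤ Real.pi / 2) (hα0 : 0 ≤ α)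
    (ha : |Complex.arg a - β| ≤ α) (hc : |Complex.arg c - β| ≤ α)
    (s μ : ℝ) (hs : 0 ≤ s) (hμ : 0 ≤ μ) :
    ‖(s : ℂ) * a - (μ : ℂ) * c‖ ≤
      |s * ‖a‖ - μ * ‖c‖| * Real.cos α +
      (s * ‖a‖ + μ * ‖c‖) * Real.sin α := by
  have h1 : ‖(s : ℂ) * a‖ = s * ‖a‖ := by
    rw [norm_mul, Complex.norm_real, Real.norm_eq_abs, abs_of_nonneg hs]
  have h2 : ‖(μ : ℂ) * c‖ = μ * ‖c‖ := by
    rw [norm_mul, Complex.norm_real, Real.norm_eq_abs, abs_of_nonneg hμ]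
  have := cone_diff ((s : ℂ) * a) ((μ : ℂ) * c) α β hα hα0 ?_ ?_
  · rwa [h1, h2] at this
  · intro hne
    have hs' : 0 < s := by
      rcases lt_or_eq_of_le hs with h | h
      · exact h
      · exfalso; apply hne; rw [← h]; simp
    rwa [Complex.arg_real_mul a hs']
  · intro hne
    have hμ' : 0 < μ := by
      rcases lt_or_eq_of_le hμ with h | h
      · exact h
      · exfalso; apply hne; rw [← h]; simp
    rwa [Complex.arg_real_mul c hμ']

/-- Lemma 2.1. -/
theorem lemma21 (a b c : ℂ) (α β : ℝ) (hα : α ≤ Real.pi / 2)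
    (ha : |Complex.arg a - β| ≤ α) (hb : |Complex.arg b - β| ≤ α)
    (hc : |Complex.arg c - β| ≤ α)
    (t1 t2 : ℝ) (ht : t1 > t2) (ht2 : 0 ≤ t2) :
    ‖((t1 * t2 : ℝ) : ℂ) * a + ((t1 - t2 : ℝ) : ℂ) * b - c‖ ≤
      |t1 * t2 * ‖a‖ + (t1 - t2) * ‖b‖ - ‖c‖| * Real.cos α +
      (t1 * t2 * ‖a‖ + (t1 - t2) * ‖b‖ + ‖c‖) * Real.sin α := by
  have hα0 : 0 ≤ α := le_trans (abs_nonneg _) ha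
  have hpi := Real.pi_pos
  have hsin : 0 ≤ Real.sin α := Real.sin_nonneg_of_nonneg_of_le_pi hα0 (by linarith)
  have hcos : 0 ≤ Real.cos α := Real.cos_nonneg_of_mem_Icc ⟨by linarith, hα⟩
  have hcs1 : 1 ≤ Real.cos α + Real.sin α := by
    nlinarith [Real.sin_sq_add_cos_sq α, Real.sin_le_one α, Real.cos_le_one α]
  have ht12 : 0 ≤ t1 * t2 := mul_nonneg (by linarith) ht2
  have htd : 0 < t1 - t2 := by linarith
  have hA : 0 ≤ t1 * t2 * ‖a‖ := mul_nonneg ht12 (norm_nonneg a)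
  have hB : 0 ≤ (t1 - t2) * ‖b‖ := mul_nonneg htd.le (norm_nonneg b)
  by_cases hS : t1 * t2 * ‖a‖ + (t1 - t2) * ‖b‖ = 0
  · have hA0 : t1 * t2 * ‖a‖ = 0 := by linarith
    have hB0 : (t1 - t2) * ‖b‖ = 0 := by linarith
    have ha0 : ((t1 * t2 : ℝ) : ℂ) * a = 0 := by
      have : ‖((t1 * t2 : ℝ) : ℂ) * a‖ = 0 := by
        rw [norm_mul, Complex.norm_real, Real.norm_eq_abs, abs_of_nonneg ht12]; exact hA0
      exact norm_eq_zero.mp this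
    have hb0 : ((t1 - t2 : ℝ) : ℂ) * b = 0 := by
      have : ‖((t1 - t2 : ℝ) : ℂ) * b‖ = 0 := by
        rw [norm_mul, Complex.norm_real, Real.norm_eq_abs, abs_of_nonneg htd.le]; exact hB0
      exact norm_eq_zero.mp this
    rw [ha0, hb0, hA0, hB0]
    simp only [zero_add, zero_sub, norm_neg, abs_neg, abs_of_nonneg (norm_nonneg c)]
    nlinarith [norm_nonneg c]
  · have hSpos : 0 < t1 * t2 * ‖a‖ + (t1 - t2) * ‖b‖ :=
      lt_of_le_of_ne (by linarith) (Ne.symm hS)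
    set S := t1 * t2 * ‖a‖ + (t1 - t2) * ‖b‖ with hSdef
    set l1 := t1 * t2 * ‖a‖ / S with hl1def
    set l2 := (t1 - t2) * ‖b‖ / S with hl2def
    have hl1 : 0 ≤ l1 := div_nonneg hA hSpos.le
    have hl2 : 0 ≤ l2 := div_nonneg hB hSpos.le
    have hsum : l1 + l2 = 1 := by
      rw [hl1def, hl2def, ← add_div, hSdef, div_self hS]
    have hl1S : l1 * S = t1 * t2 * ‖a‖ := div_mul_cancel₀ _ hS
    have hl2S : l2 * S = (t1 - t2) * ‖b‖ := div_mul_cancel₀ _ hS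
    have hsumC : ((l1 : ℝ) : ℂ) + ((l2 : ℝ) : ℂ) = 1 := by
      rw [← Complex.ofReal_add, hsum, Complex.ofReal_one]
    have hdecomp : ((t1 * t2 : ℝ) : ℂ) * a + ((t1 - t2 : ℝ) : ℂ) * b - c =
        (((t1 * t2 : ℝ) : ℂ) * a - ((l1 : ℝ) : ℂ) * c) +
        (((t1 - t2 : ℝ) : ℂ) * b - ((l2 : ℝ) : ℂ) * c) := by
      linear_combination c * hsumC
    rw [hdecomp]
    have hC : 0 ≤ ‖c‖ := norm_nonneg c
    calc ‖(((t1 * t2 : ℝ) : ℂ) * a - ((l1 : ℝ) : ℂ) * c) +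
            (((t1 - t2 : ℝ) : ℂ) * b - ((l2 : ℝ) : ℂ) * c)‖
        ≤ ‖((t1 * t2 : ℝ) : ℂ) * a - ((l1 : ℝ) : ℂ) * c‖ +
          ‖((t1 - t2 : ℝ) : ℂ) * b - ((l2 : ℝ) : ℂ) * c‖ :=
          norm_add_le _ _
      _ ≤ (|t1 * t2 * ‖a‖ - l1 * ‖c‖| * Real.cos α +
            (t1 * t2 * ‖a‖ + l1 * ‖c‖) * Real.sin α) +
          (|(t1 - t2) * ‖b‖ - l2 * ‖c‖| * Real.cos α +
            ((t1 - t2) * ‖b‖ + l2 * ‖c‖) * Real.sin α) :=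
          add_le_add
            (cone_diff_scaled a c α β hα hα0 ha hc (t1 * t2) l1 ht12 hl1)
            (cone_diff_scaled b c α β hα hα0 hb hc (t1 - t2) l2 htd.le hl2)
      _ = |S - ‖c‖| * Real.cos α + (S + ‖c‖) * Real.sin α := by
          have e1 : t1 * t2 * ‖a‖ - l1 * ‖c‖ =
              l1 * (S - ‖c‖) := by rw [mul_sub, hl1S]
          have e2 : (t1 - t2) * ‖b‖ - l2 * ‖c‖ =
              l2 * (S - ‖c‖) := by rw [mul_sub, hl2S]
          rw [e1, e2, abs_mul, abs_mul, abs_of_nonneg hl1, abs_of_nonneg hl2]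
          linear_combination (|S - ‖c‖| * Real.cos α + ‖c‖ * Real.sin α) *
            hsum + (-Real.sin α) * hSdef
end

section
/- Let P(z) = Σ_{j=0}^n a_j z^j be a polynomial of degree n ≥ 3 with complex coefficients such that |arg a_j − β| ≤ α ≤ π/2 for j = 0, ..., n, for some real β. Suppose t_1 ≠ 0 and t_2 with t_1 ≥ t_2 ≥ 0 satisfy t_1 t_2 |a_r| + (t_1 − t_2)|a_{r-1}| − |a_{r-2}| ≥ 0 for r = 1, ..., k+1, and t_1 t_2 |a_r| + (t_1 − t_2)|a_{r-1}| − |a_{r-2}| ≤ 0 for r = k+2, ..., n+1, where 0 ≤ k ≤ n−3 and a_{-2} = a_{-1} = a_{n+1} = 0. Then every zero z of P satisfies |z + a_{n-1}/a_n − (t_1 − t_2)| ≤ (2 t_2 |a_{k+1}| + 2|a_k|)/(|a_n| t_1^{n-k-1}) · cos α + (2 sin α / |a_n|) Σ_{ν=0}^{n-2} |a_ν| / t_1^{n-ν-1} + ( t_2 + |a_{n-1}/a_n| )(sin α − cos α). -/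
open Finset

noncomputable def Complex.abs : AbsoluteValue ℂ ℝ := NormedField.toAbsoluteValue ℂ

theorem Complex.abs_apply' (z : ℂ) : ‖z‖ = Complex.abs z := rfl

theorem Complex.abs_ofReal (x : ℝ) : Complex.abs (x : ℂ) = |x| := by
  rw [← Complex.abs_apply']; simp

theorem Complex.sq_abs (z : ℂ) : Complex.abs z ^ 2 = Complex.normSq z := Complex.sq_norm z

lemma keysq (p q S x y s t c si d : ℝ) (hpyth : si^2 + c^2 = 1)
    (hU : x^2 + y^2 = p^2) (hV : s^2 + t^2 = q^2)
    (hq2 : q^2 ≤ S^2)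
    (hres : p * c * (S * c) ≤ x * s)
    (hcross : -(p * si * (S * si)) ≤ y * t)
    (hd : d^2 = (p - S)^2)
    (hmid : 0 ≤ d * c * ((p + S) * si)) :
    (x - s)^2 + (y - t)^2 ≤ (d * c + (p + S) * si)^2 := by
  nlinarith [hres, hcross, hq2, hd, hmid, hU, hV, hpyth]

lemma sq_step (A R : ℝ) (hR : 0 ≤ R) (h : A^2 ≤ R^2) (hA : 0 ≤ A) : A ≤ R := by
  nlinarith

lemma im_abs_le (y2 P : ℝ) (hP : 0 ≤ P) (h : y2^2 ≤ P^2) : |y2| ≤ P := by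
  have := sq_abs y2
  nlinarith [abs_nonneg y2]

lemma sector_diff_bound (α β : ℝ) (hs : 0 ≤ Real.sin α) (hc : 0 ≤ Real.cos α)
    (u v : ℂ) (S : ℝ) (hS : 0 ≤ S)
    (hu : Complex.abs u * Real.cos α ≤ (Complex.exp (-(β:ℂ) * Complex.I) * u).re)
    (hvS : Complex.abs v ≤ S)
    (hv : S * Real.cos α ≤ (Complex.exp (-(β:ℂ) * Complex.I) * v).re) :
    Complex.abs (u - v) ≤
      |Complex.abs u - S| * Real.cos α + (Complex.abs u + S) * Real.sin α := by
  set E := Complex.exp (-(β:ℂ) * Complex.I) with hE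
  have hEabs : Complex.abs E = 1 := by
    simp [hE, ← Complex.abs_apply', Complex.norm_exp]
  set p := Complex.abs u with hp
  set q := Complex.abs v with hq
  have hp0 : 0 ≤ p := Complex.abs.nonneg u
  have hq0 : 0 ≤ q := Complex.abs.nonneg v
  have hUabs : Complex.abs (E * u) = p := by rw [map_mul, hEabs, one_mul]
  have hVabs : Complex.abs (E * v) = q := by rw [map_mul, hEabs, one_mul]
  have hUsq : (E*u).re^2 + (E*u).im^2 = p^2 := by
    rw [← hUabs, Complex.sq_abs, Complex.normSq_apply]; ring
  have hVsq : (E*v).re^2 + (E*v).im^2 = q^2 := by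
    rw [← hVabs, Complex.sq_abs, Complex.normSq_apply]; ring
  have hdiff : Complex.abs (u - v) = Complex.abs (E*u - E*v) := by
    rw [← mul_sub, map_mul, hEabs, one_mul]
  have hdsq : Complex.abs (u - v)^2 = ((E*u).re - (E*v).re)^2 + ((E*u).im - (E*v).im)^2 := by
    rw [hdiff, Complex.sq_abs, Complex.normSq_apply]
    simp only [Complex.sub_re, Complex.sub_im]; ring
  set x := (E*u).re with hx; set y := (E*u).im with hy
  set s := (E*v).re with hsdef; set t := (E*v).im with htdef
  have hpyth := Real.sin_sq_add_cos_sq α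
  have hx1 : (p * Real.cos α)^2 ≤ x^2 := pow_le_pow_left₀ (mul_nonneg hp0 hc) hu 2
  have hs1 : (S * Real.cos α)^2 ≤ s^2 := pow_le_pow_left₀ (mul_nonneg hS hc) hv 2
  have hq2 : q^2 ≤ S^2 := pow_le_pow_left₀ hq0 hvS 2
  have hy2 : y^2 ≤ (p * Real.sin α)^2 := by nlinarith [hx1, hUsq, hpyth]
  have ht2 : t^2 ≤ (S * Real.sin α)^2 := by nlinarith [hs1, hVsq, hq2, hpyth]
  have hyabs : |y| ≤ p * Real.sin α := im_abs_le y _ (mul_nonneg hp0 hs) hy2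
  have htabs : |t| ≤ S * Real.sin α := im_abs_le t _ (mul_nonneg hS hs) ht2
  have hcross : -(p * Real.sin α * (S * Real.sin α)) ≤ y * t := by
    have h1 : |y * t| ≤ p * Real.sin α * (S * Real.sin α) := by
      rw [abs_mul]
      exact mul_le_mul hyabs htabs (abs_nonneg t) (mul_nonneg hp0 hs)
    linarith [neg_abs_le (y*t)]
  have hx0 : 0 ≤ x := le_trans (mul_nonneg hp0 hc) hu
  have hres : p * Real.cos α * (S * Real.cos α) ≤ x * s :=
    mul_le_mul hu hv (mul_nonneg hS hc) hx0
  have habs2 : |p - S|^2 = (p - S)^2 := sq_abs _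
  have hmid : 0 ≤ |p - S| * Real.cos α * ((p + S) * Real.sin α) :=
    mul_nonneg (mul_nonneg (abs_nonneg _) hc) (mul_nonneg (add_nonneg hp0 hS) hs)
  have hR0 : 0 ≤ |p - S| * Real.cos α + (p + S) * Real.sin α :=
    add_nonneg (mul_nonneg (abs_nonneg _) hc) (mul_nonneg (add_nonneg hp0 hS) hs)
  have hsq : Complex.abs (u - v)^2 ≤ (|p - S| * Real.cos α + (p + S) * Real.sin α)^2 := by
    rw [hdsq]
    exact keysq p q S x y s t (Real.cos α) (Real.sin α) (|p - S|) hpyth hUsq hVsq hq2 hres hcross habs2 hmid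
  exact sq_step _ _ hR0 hsq (Complex.abs.nonneg _)

lemma re_rot (α β : ℝ) (hα : α ≤ Real.pi / 2) (w : ℂ)
    (h : |Complex.arg w - β| ≤ α) :
    Complex.abs w * Real.cos α ≤ (Complex.exp (-(β:ℂ) * Complex.I) * w).re := by
  have hw : (Complex.abs w : ℂ) * Complex.exp (Complex.arg w * Complex.I) = w :=
    Complex.norm_mul_exp_arg_mul_I w
  have key : Complex.exp (-(β:ℂ) * Complex.I) * w
      = (Complex.abs w : ℂ) * Complex.exp (((Complex.arg w - β : ℝ) : ℂ) * Complex.I) := by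
    calc Complex.exp (-(β:ℂ) * Complex.I) * w
        = (Complex.abs w : ℂ) *
            (Complex.exp (-(β:ℂ) * Complex.I) * Complex.exp ((Complex.arg w : ℂ) * Complex.I)) := by
          conv_lhs => rw [← hw]
          ring
      _ = (Complex.abs w : ℂ) * Complex.exp (((Complex.arg w - β : ℝ) : ℂ) * Complex.I) := by
          rw [← Complex.exp_add]
          congr 1
          push_cast
          ring
  rw [key, Complex.re_ofReal_mul, Complex.exp_ofReal_mul_I_re]
  have hcos : Real.cos α ≤ Real.cos (Complex.arg w - β) := by
    rw [← Real.cos_abs (Complex.arg w - β)]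
    apply Real.cos_le_cos_of_nonneg_of_le_pi (abs_nonneg _) _ h
    linarith [Real.pi_pos]
  exact mul_le_mul_of_nonneg_left hcos (Complex.abs.nonneg w)

set_option linter.unreachableTactic false in
set_option linter.unusedTactic false in
lemma telescope_lemma (m k : ℕ) (b : ℤ → ℝ) (t1 t2 : ℝ) (ht1p : 0 < t1) (ht2 : 0 ≤ t2)
    (hk : k ≤ m)
    (hb0 : ∀ j : ℤ, 0 ≤ b j) (hbm1 : b (-1) = 0) (hbm2 : b (-2) = 0)
    (hc1 : ∀ r : ℤ, 1 ≤ r → r ≤ k + 1 →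
      0 ≤ t1 * t2 * b r + (t1 - t2) * b (r - 1) - b (r - 2))
    (hc2 : ∀ r : ℤ, k + 2 ≤ r → r ≤ (m:ℤ) + 4 →
      t1 * t2 * b r + (t1 - t2) * b (r - 1) - b (r - 2) ≤ 0) :
    (∑ i ∈ range (m+4), |t1*t2*b ↑i + (t1-t2)*b (↑i-1) - b (↑i-2)| * t1^i
      = 2*((t2*b (↑k+1) + b ↑k)*t1^(k+2)) - (t2*b (↑m+3) + b (↑m+2))*t1^(m+4))
    ∧ ((t2*b (↑m+3) + b (↑m+2))*t1^(m+4) ≤ (t2*b (↑k+1) + b ↑k)*t1^(k+2))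
    ∧ (∑ i ∈ range (m+4), (b (↑i-2) + ((t1-t2)*b (↑i-1) + t1*t2*b ↑i)) * t1^i
      = 2*∑ ν ∈ range (m+2), b ↑ν * t1^(ν+2) + (t2*b (↑m+3) + b (↑m+2))*t1^(m+4)) := by
  set M : ℕ → ℝ := fun i => t1*t2*b ↑i + (t1-t2)*b (↑i-1) - b (↑i-2) with hM
  set f : ℕ → ℝ := fun i => t2 * b (↑i - 1) * t1^i + b (↑i - 2) * t1^i with hf
  have htel : ∀ i : ℕ, M i * t1^i = f (i+1) - f i := by
    intro i
    simp only [hM, hf]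
    push_cast
    rw [show ((i:ℤ) + 1 - 1) = (i:ℤ) from by ring, show ((i:ℤ) + 1 - 2) = (i:ℤ) - 1 from by ring]
    ring
  have hf0 : f 0 = 0 := by simp [hf, hbm1, hbm2]
  have hsum_tel : ∀ N : ℕ, ∑ i ∈ range N, M i * t1^i = f N := by
    intro N
    calc ∑ i ∈ range N, M i * t1^i = ∑ i ∈ range N, (f (i+1) - f i) :=
          Finset.sum_congr rfl (fun i _ => htel i)
      _ = f N - f 0 := Finset.sum_range_sub f N
      _ = f N := by rw [hf0, sub_zero]
  have hfk2 : f (k+2) = (t2*b (↑k+1) + b ↑k)*t1^(k+2) := by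
    simp only [hf]
    push_cast
    rw [show ((k:ℤ) + 2 - 1) = (k:ℤ) + 1 from by ring, show ((k:ℤ) + 2 - 2) = (k:ℤ) from by ring]
    ring
  have hfm4 : f (m+4) = (t2*b (↑m+3) + b (↑m+2))*t1^(m+4) := by
    simp only [hf]
    push_cast
    rw [show ((m:ℤ) + 4 - 1) = (m:ℤ) + 3 from by ring, show ((m:ℤ) + 4 - 2) = (m:ℤ) + 2 from by ring]
    ring
  have hMpos : ∀ i : ℕ, i ≤ k + 1 → 0 ≤ M i := by
    intro i hi
    rcases Nat.eq_zero_or_pos i with h0 | hpos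
    · subst h0
      simp only [hM]
      norm_num [hbm1, hbm2]
      exact mul_nonneg (mul_nonneg ht1p.le ht2) (hb0 0)
    · exact hc1 (i:ℤ) (by exact_mod_cast hpos) (by exact_mod_cast hi)
  have hMneg : ∀ i : ℕ, k + 2 ≤ i → i ≤ m + 3 → M i ≤ 0 := by
    intro i h1 h2
    have hcast : (i:ℤ) ≤ (m:ℤ) + 4 := by
      have : (i:ℤ) ≤ (m:ℤ) + 3 := by exact_mod_cast h2
      omega
    exact hc2 (i:ℤ) (by exact_mod_cast h1) hcast
  have hIco : ∑ i ∈ Ico (k+2) (m+4), M i * t1^i = f (m+4) - f (k+2) := by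
    have e1 := hsum_tel (k+2)
    have e2 := hsum_tel (m+4)
    have h3 : (∑ i ∈ range (k+2), M i * t1^i) + ∑ i ∈ Ico (k+2) (m+4), M i * t1^i
        = ∑ i ∈ range (m+4), M i * t1^i := by
      rw [Finset.range_eq_Ico, Finset.range_eq_Ico]
      exact Finset.sum_Ico_consecutive (fun i => M i * t1^i) (Nat.zero_le (k+2)) (by omega : k+2 ≤ m+4)
    linarith
  have hsplit : ∑ i ∈ range (m+4), |M i| * t1^i = 2 * f (k+2) - f (m+4) := by
    have hr : range (m+4) = range (k+2) ∪ Ico (k+2) (m+4) := by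
      rw [Finset.range_eq_Ico, ← Finset.Ico_union_Ico_eq_Ico (Nat.zero_le _) (by omega : k+2 ≤ m+4)]
      rw [Finset.range_eq_Ico]
    have hdisj : Disjoint (range (k+2)) (Ico (k+2) (m+4)) := by
      simp only [Finset.disjoint_left, Finset.mem_range, Finset.mem_Ico]
      omega
    rw [hr, Finset.sum_union hdisj]
    have h1 : ∑ i ∈ range (k+2), |M i| * t1^i = f (k+2) := by
      rw [← hsum_tel (k+2)]
      apply Finset.sum_congr rfl
      intro i hi
      simp only [Finset.mem_range] at hi
      rw [abs_of_nonneg (hMpos i (by omega))]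
    have h2 : ∑ i ∈ Ico (k+2) (m+4), |M i| * t1^i = -(f (m+4) - f (k+2)) := by
      rw [← hIco, ← Finset.sum_neg_distrib]
      apply Finset.sum_congr rfl
      intro i hi
      simp only [Finset.mem_Ico] at hi
      rw [abs_of_nonpos (hMneg i hi.1 (by omega))]
      ring
    rw [h1, h2]
    ring
  refine ⟨by rw [hsplit, hfk2, hfm4], ?_, ?_⟩
  · rw [← hfk2, ← hfm4]
    have hnp : ∑ i ∈ Ico (k+2) (m+4), M i * t1^i ≤ 0 := by
      apply Finset.sum_nonpos
      intro i hi
      simp only [Finset.mem_Ico] at hi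
      exact mul_nonpos_of_nonpos_of_nonneg (hMneg i hi.1 (by omega)) (le_of_lt (pow_pos ht1p i))
    linarith
  · have hA2 : ∑ i ∈ range (m+4), b (↑i-2) * t1^i = ∑ j ∈ range (m+2), b ↑j * t1^(j+2) := by
      rw [Finset.sum_range_succ' _ (m+3), Finset.sum_range_succ' _ (m+2)]
      simp only [Nat.cast_zero, Nat.cast_add, Nat.cast_one]
      norm_num [hbm1, hbm2]
      apply Finset.sum_congr rfl
      intro j hj
      rw [show ((j:ℤ) + 1 + 1 - 2) = (j:ℤ) from by ring]
    have hA1 : ∑ i ∈ range (m+4), b (↑i-1) * t1^i = ∑ j ∈ range (m+3), b ↑j * t1^(j+1) := by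
      rw [Finset.sum_range_succ' _ (m+3)]
      simp only [Nat.cast_zero, Nat.cast_add, Nat.cast_one]
      norm_num [hbm1]
      try (apply Finset.sum_congr rfl; intro j hj;
           rw [show ((j:ℤ) + 1 - 1) = (j:ℤ) from by ring])
    have hsumT : ∑ i ∈ range (m+4), (b (↑i-2) + ((t1-t2)*b (↑i-1) + t1*t2*b ↑i)) * t1^i
        = (∑ i ∈ range (m+4), b (↑i-2) * t1^i)
          + ((t1-t2) * ∑ i ∈ range (m+4), b (↑i-1) * t1^i
          + t1*t2 * ∑ i ∈ range (m+4), b ↑i * t1^i) := by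
      rw [Finset.mul_sum, Finset.mul_sum, ← Finset.sum_add_distrib, ← Finset.sum_add_distrib]
      apply Finset.sum_congr rfl
      intro i hi
      ring
    have hA1' : ∑ j ∈ range (m+3), b ↑j * t1^(j+1)
        = (∑ j ∈ range (m+2), b ↑j * t1^(j+1)) + b (↑m+2) * t1^(m+3) := by
      rw [Finset.sum_range_succ]
      push_cast
      ring
    have hA0 : ∑ i ∈ range (m+4), b ↑i * t1^i
        = (∑ j ∈ range (m+2), b ↑j * t1^j) + b (↑m+2) * t1^(m+2) + b (↑m+3) * t1^(m+3) := by
      rw [Finset.sum_range_succ, Finset.sum_range_succ]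
      push_cast
      ring
    rw [hsumT, hA2, hA1, hA1', hA0]
    have hsum3 : ∑ j ∈ range (m+2), (b ↑j * t1^(j+2) + ((t1-t2)*(b ↑j * t1^(j+1)) + t1*t2*(b ↑j * t1^j)))
        = (∑ j ∈ range (m+2), b ↑j * t1^(j+2))
          + ((t1-t2) * ∑ j ∈ range (m+2), b ↑j * t1^(j+1)
          + t1*t2 * ∑ j ∈ range (m+2), b ↑j * t1^j) := by
      rw [Finset.mul_sum, Finset.mul_sum, ← Finset.sum_add_distrib, ← Finset.sum_add_distrib]
    have hgoal : ∑ j ∈ range (m+2), (b ↑j * t1^(j+2) + ((t1-t2)*(b ↑j * t1^(j+1)) + t1*t2*(b ↑j * t1^j)))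
        = ∑ j ∈ range (m+2), 2*(b ↑j * t1^(j+2)) :=
      Finset.sum_congr rfl (fun j _ => by ring)
    have h2d : ∑ j ∈ range (m+2), 2*(b ↑j * t1^(j+2)) = 2 * ∑ j ∈ range (m+2), b ↑j * t1^(j+2) :=
      (Finset.mul_sum _ _ _).symm
    linear_combination -hsum3 + hgoal + h2d

set_option maxHeartbeats 2000000 in
/-- Theorem 1.7 (main theorem). -/
theorem thm17 (n k : ℕ) (a : ℤ → ℂ) (hn : 3 ≤ n) (hk : k + 3 ≤ n)
    (han : a n ≠ 0)
    (α β : ℝ) (hα : α ≤ Real.pi / 2)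
    (harg : ∀ j : ℤ, 0 ≤ j → j ≤ n → |Complex.arg (a j) - β| ≤ α)
    (hm2 : a (-2) = 0) (hm1 : a (-1) = 0) (htop : a (n + 1) = 0)
    (t1 t2 : ℝ) (ht1 : t1 ≠ 0) (ht12 : t2 ≤ t1) (ht2 : 0 ≤ t2)
    (hc1 : ∀ r : ℤ, 1 ≤ r → r ≤ k + 1 →
      0 ≤ t1 * t2 * ‖a r‖ + (t1 - t2) * ‖a (r - 1)‖ -
        ‖a (r - 2)‖)
    (hc2 : ∀ r : ℤ, k + 2 ≤ r → r ≤ n + 1 →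
      t1 * t2 * ‖a r‖ + (t1 - t2) * ‖a (r - 1)‖ -
        ‖a (r - 2)‖ ≤ 0)
    (z : ℂ) (hz : ∑ j ∈ Finset.range (n + 1), a j * z ^ j = 0) :
    ‖z + a (n - 1) / a n - ((t1 - t2 : ℝ) : ℂ)‖ ≤
      (2 * t2 * ‖a (k + 1)‖ + 2 * ‖a k‖) /
        (‖a n‖ * t1 ^ (n - k - 1)) * Real.cos α
      + (2 * Real.sin α / ‖a n‖) *
          ∑ ν ∈ Finset.range (n - 1), ‖a ν‖ / t1 ^ (n - ν - 1)
      + (t2 + ‖a (n - 1) / a n‖) * (Real.sin α - Real.cos α) := by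
  simp only [Complex.abs_apply'] at hc1 hc2 ⊢
  obtain ⟨m, rfl⟩ : ∃ m, n = m + 3 := ⟨n - 3, by omega⟩
  have hkm : k ≤ m := by omega
  -- basic positivity facts
  have ht1p : 0 < t1 := lt_of_le_of_ne (ht2.trans ht12) (Ne.symm ht1)
  have hncast : ((m+3:ℕ):ℤ) = (m:ℤ)+3 := by push_cast; ring
  rw [hncast] at han htop harg hc2 ⊢
  rw [show ((m:ℤ)+3-1) = (m:ℤ)+2 from by ring]
  rw [show m+3-k-1 = m+2-k from by omega, show m+3-1 = m+2 from by omega]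
  have htop' : a ((m:ℤ)+4) = 0 := by
    rw [show ((m:ℤ)+4) = (m:ℤ)+3+1 from by ring]; exact htop
  have hα0 : 0 ≤ α := le_trans (abs_nonneg _) (harg 0 le_rfl (by omega))
  have hsin : 0 ≤ Real.sin α :=
    Real.sin_nonneg_of_nonneg_of_le_pi hα0 (by linarith [Real.pi_pos])
  have hcos : 0 ≤ Real.cos α := Real.cos_nonneg_of_mem_Icc ⟨by linarith [Real.pi_pos], hα⟩
  have hb0 : ∀ j : ℤ, 0 ≤ Complex.abs (a j) := fun j => Complex.abs.nonneg _
  have hbm1 : Complex.abs (a (-1)) = 0 := by simp [hm1]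
  have hbm2 : Complex.abs (a (-2)) = 0 := by simp [hm2]
  have hbm4 : Complex.abs (a ((m:ℤ)+4)) = 0 := by simp [htop']
  have hbn : 0 < Complex.abs (a ((m:ℤ)+3)) := Complex.abs.pos han
  -- cone condition
  set E := Complex.exp (-(β:ℂ) * Complex.I) with hEdef
  have hcone : ∀ j : ℤ, -2 ≤ j → j ≤ (m:ℤ)+3 →
      Complex.abs (a j) * Real.cos α ≤ (E * a j).re := by
    intro j hj1 hj2
    rcases le_or_gt 0 j with h | h
    · exact re_rot α β hα (a j) (harg j h hj2)
    · have : j = -1 ∨ j = -2 := by omega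
      rcases this with h' | h' <;> subst h' <;> simp [hm1, hm2]
  -- the coefficients of the multiplied polynomial
  set c : ℕ → ℂ := fun r => a ((r:ℤ) - 2) + ((t2 - t1 : ℝ):ℂ) * a ((r:ℤ) - 1)
      - ((t1*t2 : ℝ):ℂ) * a (r:ℤ) with hcdef
  -- bound on |c r|
  have hcbound : ∀ r : ℕ, r ≤ m+3 → Complex.abs (c r) ≤
      |t1*t2*Complex.abs (a (r:ℤ)) + (t1-t2)*Complex.abs (a ((r:ℤ)-1)) - Complex.abs (a ((r:ℤ)-2))| * Real.cos α
      + (Complex.abs (a ((r:ℤ)-2)) + ((t1-t2)*Complex.abs (a ((r:ℤ)-1)) + t1*t2*Complex.abs (a (r:ℤ)))) * Real.sin α := by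
    intro r hr
    have hrz : (r:ℤ) ≤ (m:ℤ)+3 := by exact_mod_cast hr
    have hcval : c r = a ((r:ℤ)-2) - (((t1-t2:ℝ):ℂ) * a ((r:ℤ)-1) + ((t1*t2:ℝ):ℂ) * a (r:ℤ)) := by
      simp only [hcdef]
      push_cast
      ring
    rw [hcval]
    set S : ℝ := (t1-t2)*Complex.abs (a ((r:ℤ)-1)) + t1*t2*Complex.abs (a (r:ℤ)) with hSdef
    have hS0 : 0 ≤ S := add_nonneg (mul_nonneg (by linarith) (hb0 _))
      (mul_nonneg (mul_nonneg ht1p.le ht2) (hb0 _))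
    have hvS : Complex.abs (((t1-t2:ℝ):ℂ) * a ((r:ℤ)-1) + ((t1*t2:ℝ):ℂ) * a (r:ℤ)) ≤ S := by
      refine le_trans (Complex.abs.add_le _ _) ?_
      rw [map_mul, map_mul, Complex.abs_ofReal, Complex.abs_ofReal,
        abs_of_nonneg (by linarith : (0:ℝ) ≤ t1-t2), abs_of_nonneg (mul_nonneg ht1p.le ht2)]
    have hre : (E * (((t1-t2:ℝ):ℂ) * a ((r:ℤ)-1) + ((t1*t2:ℝ):ℂ) * a (r:ℤ))).re
        = (t1-t2) * (E * a ((r:ℤ)-1)).re + t1*t2 * (E * a (r:ℤ)).re := by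
      rw [mul_add,
        show E * (((t1-t2:ℝ):ℂ) * a ((r:ℤ)-1)) = ((t1-t2:ℝ):ℂ) * (E * a ((r:ℤ)-1)) from by ring,
        show E * (((t1*t2:ℝ):ℂ) * a (r:ℤ)) = ((t1*t2:ℝ):ℂ) * (E * a (r:ℤ)) from by ring,
        Complex.add_re, Complex.re_ofReal_mul, Complex.re_ofReal_mul]
    have hv : S * Real.cos α ≤ (E * (((t1-t2:ℝ):ℂ) * a ((r:ℤ)-1) + ((t1*t2:ℝ):ℂ) * a (r:ℤ))).re := by
      rw [hre]
      have h1 := hcone ((r:ℤ)-1) (by omega) (by omega)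
      have h2 := hcone (r:ℤ) (by omega) hrz
      have h1' := mul_le_mul_of_nonneg_left h1 (show (0:ℝ) ≤ t1-t2 by linarith)
      have h2' := mul_le_mul_of_nonneg_left h2 (mul_nonneg ht1p.le ht2)
      rw [hSdef]
      nlinarith [h1', h2']
    have hu := hcone ((r:ℤ)-2) (by omega) (by omega)
    have hmain := sector_diff_bound α β hsin hcos (a ((r:ℤ)-2))
      (((t1-t2:ℝ):ℂ) * a ((r:ℤ)-1) + ((t1*t2:ℝ):ℂ) * a (r:ℤ)) S hS0 hu hvS hv
    have habs_eq : |Complex.abs (a ((r:ℤ)-2)) - S|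
        = |t1*t2*Complex.abs (a (r:ℤ)) + (t1-t2)*Complex.abs (a ((r:ℤ)-1)) - Complex.abs (a ((r:ℤ)-2))| := by
      rw [abs_sub_comm]
      congr 1
      rw [hSdef]
      ring
    rw [habs_eq] at hmain
    exact hmain
  -- key algebraic identity
  have hKEY : a ((m:ℤ)+3) * z^(m+4) * (z + a ((m:ℤ)+2) / a ((m:ℤ)+3) - ((t1 - t2 : ℝ) : ℂ)) =
      -∑ r ∈ Finset.range (m+4), c r * z^r := by
    have hS2 : ∑ r ∈ Finset.range (m+4), a ((r:ℤ) - 2) * z^r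
        = z^2 * ∑ j ∈ Finset.range (m+2), a (j:ℤ) * z^j := by
      rw [Finset.sum_range_succ' _ (m+3), Finset.sum_range_succ' _ (m+2)]
      simp only [Nat.cast_zero, Nat.cast_add, Nat.cast_one]
      norm_num [hm1, hm2]
      rw [Finset.mul_sum]
      apply Finset.sum_congr rfl
      intro j hj
      have : ((j:ℤ) + 1 + 1 - 2) = (j:ℤ) := by ring
      rw [this]
      ring
    have hS1 : ∑ r ∈ Finset.range (m+4), a ((r:ℤ) - 1) * z^r
        = z * ∑ j ∈ Finset.range (m+3), a (j:ℤ) * z^j := by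
      rw [Finset.sum_range_succ' _ (m+3)]
      simp only [Nat.cast_zero, Nat.cast_add, Nat.cast_one]
      norm_num [hm1]
      rw [Finset.mul_sum]
      apply Finset.sum_congr rfl
      intro j hj
      ring
    have hP2 : ∑ j ∈ Finset.range (m+2), a (j:ℤ) * z^j
        = -(a ((m:ℤ)+2) * z^(m+2) + a ((m:ℤ)+3) * z^(m+3)) := by
      have h1 : ∑ j ∈ Finset.range (m+3+1), a (j:ℤ) * z^j
          = (∑ j ∈ Finset.range (m+2), a (j:ℤ) * z^j) + a ((m:ℤ)+2) * z^(m+2) + a ((m:ℤ)+3) * z^(m+3) := by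
        rw [Finset.sum_range_succ, Finset.sum_range_succ]
        push_cast
        ring
      rw [h1] at hz
      linear_combination hz
    have hP1 : ∑ j ∈ Finset.range (m+3), a (j:ℤ) * z^j = -(a ((m:ℤ)+3) * z^(m+3)) := by
      have h1 : ∑ j ∈ Finset.range (m+3+1), a (j:ℤ) * z^j
          = (∑ j ∈ Finset.range (m+3), a (j:ℤ) * z^j) + a ((m:ℤ)+3) * z^(m+3) := by
        rw [Finset.sum_range_succ]; push_cast; ring
      rw [h1] at hz
      linear_combination hz
    have hsum : ∑ r ∈ Finset.range (m+4), c r * z^r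
        = (∑ r ∈ Finset.range (m+4), a ((r:ℤ) - 2) * z^r)
          + ((t2 - t1 : ℝ):ℂ) * (∑ r ∈ Finset.range (m+4), a ((r:ℤ) - 1) * z^r)
          - ((t1*t2 : ℝ):ℂ) * (∑ r ∈ Finset.range (m+4), a (r:ℤ) * z^r) := by
      rw [Finset.mul_sum, Finset.mul_sum, ← Finset.sum_add_distrib, ← Finset.sum_sub_distrib]
      apply Finset.sum_congr rfl
      intro r hr
      simp only [hcdef]
      ring
    have hz' : ∑ r ∈ Finset.range (m+4), a (r:ℤ) * z^r = 0 := hz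
    have hdiv : a ((m:ℤ)+3) * (a ((m:ℤ)+2) / a ((m:ℤ)+3)) = a ((m:ℤ)+2) :=
      mul_div_cancel₀ _ han
    rw [hsum, hS2, hS1, hP2, hP1, hz']
    push_cast
    linear_combination (z^(m+4) : ℂ) * hdiv
  -- telescoping sums
  obtain ⟨hSM, hge, hST⟩ := telescope_lemma m k (fun j => Complex.abs (a j)) t1 t2 ht1p ht2 hkm
    hb0 hbm1 hbm2 hc1 (by
      intro r h1 h2
      exact hc2 r h1 (by omega))
  -- notation shortcuts (real quantities)
  set bn : ℝ := Complex.abs (a ((m:ℤ)+3)) with hbndef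
  set bn1 : ℝ := Complex.abs (a ((m:ℤ)+2)) with hbn1def
  set fk : ℝ := (t2*Complex.abs (a ((k:ℤ)+1)) + Complex.abs (a (k:ℤ)))*t1^(k+2) with hfkdef
  set fm : ℝ := (t2*bn + bn1)*t1^(m+4) with hfmdef
  set Sig : ℝ := ∑ ν ∈ range (m+2), Complex.abs (a (ν:ℤ)) * t1^(ν+2) with hSigdef
  -- exponent bookkeeping
  set d1 : ℕ := m+2-k with hd1def
  have hd1 : m+4 = (k+2)+d1 := by omega
  have hpowsplit : t1^(m+4) = t1^(k+2) * t1^d1 := by rw [hd1, pow_add]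
  have habsdiv : Complex.abs (a ((m:ℤ)+2) / a ((m:ℤ)+3)) = bn1 / bn := by
    rw [map_div₀]
  have hsumdiv : ∑ ν ∈ range (m+2), Complex.abs (a (ν:ℤ)) / t1^(m+3-ν-1) = Sig / t1^(m+4) := by
    rw [hSigdef, Finset.sum_div]
    refine Finset.sum_congr rfl ?_
    intro ν hν
    simp only [Finset.mem_range] at hν
    rw [div_eq_div_iff (pow_pos ht1p _).ne' (pow_pos ht1p _).ne', mul_assoc, ← pow_add,
      show (ν+2) + (m+3-ν-1) = m+4 from by omega]
  -- derived inequalities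
  have hbn1ge : (t1-t2)*bn ≤ bn1 := by
    have h := hc2 ((m:ℤ)+4) (by omega) (by omega)
    rw [show ((m:ℤ)+4-1) = (m:ℤ)+3 from by ring, show ((m:ℤ)+4-2) = (m:ℤ)+2 from by ring,
      hbm4] at h
    rw [hbndef, hbn1def]
    linarith
  have hfk_ge : fm ≤ fk := hge
  have hXv : t2*bn + bn1 ≤ (t2*Complex.abs (a ((k:ℤ)+1)) + Complex.abs (a (k:ℤ)))/t1^d1 := by
    rw [le_div_iff₀ (pow_pos ht1p d1)]
    have h1 : ((t2*bn + bn1)*t1^d1) * t1^(k+2) ≤ (t2*Complex.abs (a ((k:ℤ)+1)) + Complex.abs (a (k:ℤ))) * t1^(k+2) := by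
      have : fm = ((t2*bn + bn1)*t1^d1) * t1^(k+2) := by
        rw [hfmdef, hpowsplit]; ring
      rw [hfkdef] at hfk_ge
      linarith [hfk_ge, this.symm.le, this.le]
    exact le_of_mul_le_mul_right h1 (pow_pos ht1p (k+2))
  have hSv : (t2*Complex.abs (a ((k:ℤ)+1)) + Complex.abs (a (k:ℤ)))/t1^d1
      ≤ ∑ ν ∈ range (m+2), Complex.abs (a (ν:ℤ)) / t1^(m+3-ν-1) := by
    set d2 : ℕ := m+1-k with hd2def
    have hd12 : t1^d1 = t1^d2 * t1 := by
      rw [show d1 = d2+1 from by omega, pow_succ]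
    have hsub : ({k, k+1} : Finset ℕ) ⊆ range (m+2) := by
      intro i hi
      simp only [Finset.mem_insert, Finset.mem_singleton] at hi
      simp only [Finset.mem_range]
      omega
    have hsumge : Complex.abs (a (k:ℤ)) / t1^(m+3-k-1) + Complex.abs (a ((k:ℤ)+1)) / t1^(m+3-(k+1)-1)
        ≤ ∑ ν ∈ range (m+2), Complex.abs (a (ν:ℤ)) / t1^(m+3-ν-1) := by
      have := Finset.sum_le_sum_of_subset_of_nonneg
        (f := fun (ν : ℕ) => Complex.abs (a (ν:ℤ)) / t1^(m+3-ν-1)) hsub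
        (fun i _ _ => div_nonneg (hb0 (i:ℤ)) (pow_nonneg ht1p.le _))
      rw [Finset.sum_insert (by simp), Finset.sum_singleton] at this
      refine le_trans (le_of_eq ?_) this
      push_cast
      ring
    refine le_trans ?_ hsumge
    rw [show m+3-k-1 = d1 from by omega, show m+3-(k+1)-1 = d2 from by omega]
    have hb1 : 0 ≤ Complex.abs (a ((k:ℤ)+1)) := hb0 _
    have hpd2 : (0:ℝ) < t1^d2 := pow_pos ht1p d2
    have h2 : t2 * Complex.abs (a ((k:ℤ)+1)) / t1^d1 ≤ Complex.abs (a ((k:ℤ)+1)) / t1^d2 := by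
      rw [hd12, div_le_div_iff₀ (by positivity) (by positivity)]
      nlinarith [mul_le_mul_of_nonneg_right (mul_le_mul_of_nonneg_left ht12 hb1) hpd2.le]
    calc (t2*Complex.abs (a ((k:ℤ)+1)) + Complex.abs (a (k:ℤ)))/t1^d1
        = t2*Complex.abs (a ((k:ℤ)+1))/t1^d1 + Complex.abs (a (k:ℤ))/t1^d1 := by rw [add_div]
      _ ≤ Complex.abs (a (k:ℤ))/t1^d1 + Complex.abs (a ((k:ℤ)+1))/t1^d2 := by linarith
  -- now the case split
  rcases le_or_gt t1 (Complex.abs z) with hzt | hzt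
  · -- case |z| ≥ t1
    have hz0 : (0:ℝ) < Complex.abs z := lt_of_lt_of_le ht1p hzt
    set L : ℝ := Complex.abs (z + a ((m:ℤ)+2) / a ((m:ℤ)+3) - ((t1 - t2 : ℝ) : ℂ)) with hLdef
    have step1 : bn * Complex.abs z^(m+4) * L = Complex.abs (∑ r ∈ range (m+4), c r * z^r) := by
      have hneg : ∑ r ∈ range (m+4), c r * z^r
          = -(a ((m:ℤ)+3) * z^(m+4) * (z + a ((m:ℤ)+2) / a ((m:ℤ)+3) - ((t1 - t2 : ℝ) : ℂ))) := by
        linear_combination hKEY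
      rw [hneg, AbsoluteValue.map_neg, map_mul, map_mul, map_pow]
    have step2 : Complex.abs (∑ r ∈ range (m+4), c r * z^r)
        ≤ ∑ r ∈ range (m+4), Complex.abs (c r) * Complex.abs z^r := by
      refine le_trans (Complex.abs.sum_le _ _) ?_
      refine le_of_eq (Finset.sum_congr rfl ?_)
      intro r hr
      rw [map_mul, map_pow]
    have step3 : (∑ r ∈ range (m+4), Complex.abs (c r) * Complex.abs z^r) * t1^(m+4)
        ≤ (∑ r ∈ range (m+4), Complex.abs (c r) * t1^r) * Complex.abs z^(m+4) := by
      rw [Finset.sum_mul, Finset.sum_mul]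
      refine Finset.sum_le_sum ?_
      intro r hr
      simp only [Finset.mem_range] at hr
      obtain ⟨d, hd⟩ : ∃ d, m+4 = r + d := ⟨m+4-r, by omega⟩
      rw [hd, pow_add, pow_add]
      have hzd : t1^d ≤ Complex.abs z^d := pow_le_pow_left₀ ht1p.le hzt d
      have h1 : 0 ≤ Complex.abs (c r) := Complex.abs.nonneg _
      have h2 : 0 ≤ Complex.abs z^r := pow_nonneg (Complex.abs.nonneg z) r
      have h3 : 0 ≤ t1^r := pow_nonneg ht1p.le r
      nlinarith [mul_nonneg (mul_nonneg h1 h2) h3, hzd]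
    have step4 : ∑ r ∈ range (m+4), Complex.abs (c r) * t1^r
        ≤ Real.cos α * (2*fk - fm) + Real.sin α * (2*Sig + fm) := by
      have hb : ∑ r ∈ range (m+4), Complex.abs (c r) * t1^r
          ≤ ∑ r ∈ range (m+4),
            (|t1*t2*Complex.abs (a (r:ℤ)) + (t1-t2)*Complex.abs (a ((r:ℤ)-1)) - Complex.abs (a ((r:ℤ)-2))| * Real.cos α
            + (Complex.abs (a ((r:ℤ)-2)) + ((t1-t2)*Complex.abs (a ((r:ℤ)-1)) + t1*t2*Complex.abs (a (r:ℤ)))) * Real.sin α) * t1^r := by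
        refine Finset.sum_le_sum ?_
        intro r hr
        simp only [Finset.mem_range] at hr
        exact mul_le_mul_of_nonneg_right (hcbound r (by omega)) (pow_nonneg ht1p.le r)
      refine le_trans hb ?_
      have hsplit2 : ∑ r ∈ range (m+4),
            (|t1*t2*Complex.abs (a (r:ℤ)) + (t1-t2)*Complex.abs (a ((r:ℤ)-1)) - Complex.abs (a ((r:ℤ)-2))| * Real.cos α
            + (Complex.abs (a ((r:ℤ)-2)) + ((t1-t2)*Complex.abs (a ((r:ℤ)-1)) + t1*t2*Complex.abs (a (r:ℤ)))) * Real.sin α) * t1^r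
          = Real.cos α * ∑ r ∈ range (m+4),
              |t1*t2*Complex.abs (a (r:ℤ)) + (t1-t2)*Complex.abs (a ((r:ℤ)-1)) - Complex.abs (a ((r:ℤ)-2))| * t1^r
            + Real.sin α * ∑ r ∈ range (m+4),
              (Complex.abs (a ((r:ℤ)-2)) + ((t1-t2)*Complex.abs (a ((r:ℤ)-1)) + t1*t2*Complex.abs (a (r:ℤ)))) * t1^r := by
        rw [Finset.mul_sum, Finset.mul_sum, ← Finset.sum_add_distrib]
        refine Finset.sum_congr rfl ?_
        intro r hr
        ring
      rw [hsplit2, hSM, hST]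
    -- combine
    have hQ : bn * L * t1^(m+4) ≤ Real.cos α * (2*fk - fm) + Real.sin α * (2*Sig + fm) := by
      have hchain : (bn * L * t1^(m+4)) * Complex.abs z^(m+4)
          ≤ (Real.cos α * (2*fk - fm) + Real.sin α * (2*Sig + fm)) * Complex.abs z^(m+4) := by
        calc (bn * L * t1^(m+4)) * Complex.abs z^(m+4)
            = (bn * Complex.abs z^(m+4) * L) * t1^(m+4) := by ring
          _ = Complex.abs (∑ r ∈ range (m+4), c r * z^r) * t1^(m+4) := by rw [step1]
          _ ≤ (∑ r ∈ range (m+4), Complex.abs (c r) * Complex.abs z^r) * t1^(m+4) := by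
              exact mul_le_mul_of_nonneg_right step2 (pow_nonneg ht1p.le _)
          _ ≤ (∑ r ∈ range (m+4), Complex.abs (c r) * t1^r) * Complex.abs z^(m+4) := step3
          _ ≤ (Real.cos α * (2*fk - fm) + Real.sin α * (2*Sig + fm)) * Complex.abs z^(m+4) := by
              exact mul_le_mul_of_nonneg_right step4 (pow_nonneg (Complex.abs.nonneg z) _)
      exact le_of_mul_le_mul_right hchain (pow_pos hz0 (m+4))
    -- compare with the RHS
    have hVeq : bn * t1^(m+4) *
        ((2 * t2 * Complex.abs (a ((k:ℤ) + 1)) + 2 * Complex.abs (a (k:ℤ))) / (bn * t1 ^ d1) * Real.cos α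
        + (2 * Real.sin α / bn) * (Sig / t1^(m+4))
        + (t2 + bn1/bn) * (Real.sin α - Real.cos α))
        = Real.cos α * (2*fk - fm) + Real.sin α * (2*Sig + fm) := by
      rw [hfkdef, hfmdef, hpowsplit]
      field_simp
      ring
    rw [hsumdiv, habsdiv]
    have hpos : (0:ℝ) < bn * t1^(m+4) := mul_pos hbn (pow_pos ht1p _)
    have hfin : (bn * t1^(m+4)) * L ≤ (bn * t1^(m+4)) *
        ((2 * t2 * Complex.abs (a ((k:ℤ) + 1)) + 2 * Complex.abs (a (k:ℤ))) / (bn * t1 ^ d1) * Real.cos α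
        + (2 * Real.sin α / bn) * (Sig / t1^(m+4))
        + (t2 + bn1/bn) * (Real.sin α - Real.cos α)) := by
      rw [hVeq]
      calc (bn * t1^(m+4)) * L = bn * L * t1^(m+4) := by ring
        _ ≤ _ := hQ
    exact le_of_mul_le_mul_left hfin hpos
  · -- case |z| < t1
    have hzle : Complex.abs z ≤ t1 := hzt.le
    have heq : a ((m:ℤ)+2)/a ((m:ℤ)+3) - ((t1-t2:ℝ):ℂ)
        = (a ((m:ℤ)+2) - ((t1-t2:ℝ):ℂ)*a ((m:ℤ)+3))/a ((m:ℤ)+3) := by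
      field_simp
    have hvabs : Complex.abs (((t1-t2:ℝ):ℂ) * a ((m:ℤ)+3)) = (t1-t2)*bn := by
      rw [map_mul, Complex.abs_ofReal, abs_of_nonneg (by linarith : (0:ℝ) ≤ t1-t2), hbndef]
    have hvre : (t1-t2)*bn * Real.cos α ≤ (E * (((t1-t2:ℝ):ℂ) * a ((m:ℤ)+3))).re := by
      rw [show E * (((t1-t2:ℝ):ℂ) * a ((m:ℤ)+3)) = ((t1-t2:ℝ):ℂ) * (E * a ((m:ℤ)+3)) from by ring,
        Complex.re_ofReal_mul]
      have h1 := hcone ((m:ℤ)+3) (by omega) le_rfl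
      rw [← hbndef] at h1
      nlinarith [mul_le_mul_of_nonneg_left h1 (show (0:ℝ) ≤ t1-t2 by linarith)]
    have hA'b := sector_diff_bound α β hsin hcos (a ((m:ℤ)+2)) (((t1-t2:ℝ):ℂ) * a ((m:ℤ)+3))
      ((t1-t2)*bn) (mul_nonneg (by linarith) hbn.le)
      (hcone ((m:ℤ)+2) (by omega) (by omega)) hvabs.le hvre
    rw [← hbn1def, abs_of_nonneg (by linarith : (0:ℝ) ≤ bn1 - (t1-t2)*bn)] at hA'b
    -- main triangle bound
    have htri : Complex.abs (z + a ((m:ℤ)+2) / a ((m:ℤ)+3) - ((t1 - t2 : ℝ) : ℂ))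
        ≤ t1 + ((bn1 - (t1-t2)*bn) * Real.cos α + (bn1 + (t1-t2)*bn) * Real.sin α)/bn := by
      have h1 : z + a ((m:ℤ)+2) / a ((m:ℤ)+3) - ((t1 - t2 : ℝ) : ℂ)
          = z + (a ((m:ℤ)+2) / a ((m:ℤ)+3) - ((t1 - t2 : ℝ) : ℂ)) := by ring
      rw [h1]
      refine le_trans (Complex.abs.add_le _ _) ?_
      refine add_le_add hzle ?_
      rw [heq, map_div₀, ← hbndef]
      gcongr
    refine le_trans htri ?_
    rw [hsumdiv, habsdiv]
    set Xv : ℝ := (t2*Complex.abs (a ((k:ℤ)+1)) + Complex.abs (a (k:ℤ)))/t1^d1 with hXvdef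
    have hcs : 1 ≤ Real.cos α + Real.sin α := by
      nlinarith [Real.sin_sq_add_cos_sq α, Real.sin_le_one α, Real.cos_le_one α]
    have hRB : ((2 * t2 * Complex.abs (a ((k:ℤ) + 1)) + 2 * Complex.abs (a (k:ℤ))) / (bn * t1 ^ d1) * Real.cos α
        + (2 * Real.sin α / bn) * (Sig / t1^(m+4))
        + (t2 + bn1/bn) * (Real.sin α - Real.cos α)) * bn
        = 2*Xv*Real.cos α + 2*Real.sin α*(Sig / t1^(m+4)) + (t2*bn+bn1)*(Real.sin α - Real.cos α) := by
      rw [hXvdef]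
      field_simp
    have hLB : (t1 + ((bn1 - (t1-t2)*bn) * Real.cos α + (bn1 + (t1-t2)*bn) * Real.sin α)/bn)*bn
        = t1*bn + (bn1 - (t1-t2)*bn) * Real.cos α + (bn1 + (t1-t2)*bn) * Real.sin α := by
      field_simp
      ring
    have hSig' : Xv ≤ Sig / t1^(m+4) := by
      rw [← hsumdiv]
      exact hSv
    have hCc : t1*bn ≤ 2*Xv - 2*bn1 - t2*bn + (t1-t2)*bn := by linarith
    have hCs : t1*bn ≤ 2*(Sig / t1^(m+4)) + t2*bn - (t1-t2)*bn := by
      nlinarith [mul_nonneg ht2 hbn.le]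
    have hfinB : (t1 + ((bn1 - (t1-t2)*bn) * Real.cos α + (bn1 + (t1-t2)*bn) * Real.sin α)/bn)*bn
        ≤ ((2 * t2 * Complex.abs (a ((k:ℤ) + 1)) + 2 * Complex.abs (a (k:ℤ))) / (bn * t1 ^ d1) * Real.cos α
        + (2 * Real.sin α / bn) * (Sig / t1^(m+4))
        + (t2 + bn1/bn) * (Real.sin α - Real.cos α)) * bn := by
      rw [hRB, hLB]
      have h1 : Real.cos α * (t1*bn) ≤ Real.cos α * (2*Xv - 2*bn1 - t2*bn + (t1-t2)*bn) :=
        mul_le_mul_of_nonneg_left hCc hcos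
      have h2 : Real.sin α * (t1*bn) ≤ Real.sin α * (2*(Sig / t1^(m+4)) + t2*bn - (t1-t2)*bn) :=
        mul_le_mul_of_nonneg_left hCs hsin
      have h3 : t1*bn ≤ (Real.cos α + Real.sin α) * (t1*bn) := by
        nlinarith [mul_nonneg ht1p.le hbn.le]
      nlinarith [h1, h2, h3]
    exact le_of_mul_le_mul_right hfinB hbn
end

section
/- Let P(z) = Σ_{j=0}^n a_j z^j be a polynomial of degree n ≥ 3 with complex coefficients such that |arg a_j − β| ≤ α ≤ π/2 for all j, for some real β. Suppose t > 0 satisfies t^n|a_n| ≤ t^{n-1}|a_{n-1}| ≤ ... ≤ t^{k+1}|a_{k+1}| ≤ t^k|a_k| and t^k|a_k| ≥ t^{k-1}|a_{k-1}| ≥ ... ≥ t|a_1| ≥ |a_0| > 0, where 0 ≤ k ≤ n−3. Then every zero z of P satisfies |z + a_{n-1}/a_n − t| ≤ |a_{n-1}/a_n|(sin α − cos α) + (2|a_k| cos α)/(|a_n| t^{n-k-1}) + (2 sin α/|a_n|) Σ_{ν=0}^{n-2} |a_ν|/t^{n-ν-1}. -/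
open Real Finset

lemma sincos_ge_one {α : ℝ} (h0 : 0 ≤ α) (h2 : α ≤ Real.pi/2) :
    1 ≤ Real.sin α + Real.cos α := by
  have hs : 0 ≤ Real.sin α := Real.sin_nonneg_of_nonneg_of_le_pi h0 (by linarith [Real.pi_pos])
  have hc : 0 ≤ Real.cos α := Real.cos_nonneg_of_mem_Icc ⟨by linarith [Real.pi_pos], h2⟩
  nlinarith [Real.sin_sq_add_cos_sq α]

set_option maxHeartbeats 1000000 in
lemma sector_base {α β : ℝ} (h0 : 0 ≤ α) (h2 : α ≤ Real.pi/2) (x y : ℂ)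
    (hxy : ‖y‖ ≤ ‖x‖)
    (hx : |Complex.arg x - β| ≤ α) (hy : |Complex.arg y - β| ≤ α) :
    ‖x - y‖ ≤ (‖x‖ - ‖y‖) * Real.cos α
      + (‖x‖ + ‖y‖) * Real.sin α := by
  have hs : 0 ≤ Real.sin α := Real.sin_nonneg_of_nonneg_of_le_pi h0 (by linarith [Real.pi_pos])
  have hc : 0 ≤ Real.cos α := Real.cos_nonneg_of_mem_Icc ⟨by linarith [Real.pi_pos], h2⟩
  set A := ‖x‖ with hA
  set B := ‖y‖ with hB
  have hB0 : 0 ≤ B := norm_nonneg y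
  have hA0 : 0 ≤ A := norm_nonneg x
  by_cases hy0 : y = 0
  · subst hy0
    simp only [norm_zero, sub_zero, add_zero] at *
    nlinarith [sincos_ge_one h0 h2]
  by_cases hx0 : x = 0
  · exfalso
    have hA' : A = 0 := by simp [hA, hx0]
    have hB' : B = 0 := le_antisymm (hA' ▸ hxy) hB0
    exact hy0 (norm_eq_zero.mp (hB ▸ hB'))
  set θ := Complex.arg x
  set φ := Complex.arg y
  have hAne : A ≠ 0 := fun h => hx0 (norm_eq_zero.mp (hA ▸ h))
  have hBne : B ≠ 0 := fun h => hy0 (norm_eq_zero.mp (hB ▸ h))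
  have hxre : x.re = A * Real.cos θ := by rw [Complex.cos_arg hx0]; field_simp; rfl
  have hxim : x.im = A * Real.sin θ := by rw [Complex.sin_arg]; field_simp; rfl
  have hyre : y.re = B * Real.cos φ := by rw [Complex.cos_arg hy0]; field_simp; rfl
  have hyim : y.im = B * Real.sin φ := by rw [Complex.sin_arg]; field_simp; rfl
  have h1 : ‖x - y‖ ^ 2 = A^2 + B^2 - 2*A*B*Real.cos (θ - φ) := by
    rw [Complex.sq_norm, Complex.normSq_apply, Complex.sub_re, Complex.sub_im,
      hxre, hxim, hyre, hyim, Real.cos_sub]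
    nlinarith [Real.sin_sq_add_cos_sq θ, Real.sin_sq_add_cos_sq φ]
  have hθφ : |θ - φ| ≤ 2*α := by
    have h3 : θ - φ = (θ - β) + (β - φ) := by ring
    calc |θ - φ| ≤ |θ - β| + |β - φ| := by rw [h3]; exact abs_add_le _ _
    _ ≤ α + α := by rw [abs_sub_comm β φ]; exact add_le_add hx hy
    _ = 2*α := by ring
  have hc2 : Real.cos (2*α) ≤ Real.cos (θ - φ) := by
    rw [← Real.cos_abs (θ - φ)]
    exact Real.cos_le_cos_of_nonneg_of_le_pi (abs_nonneg _) (by linarith) hθφ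
  have h4 : Real.cos (2*α) = 1 - 2*Real.sin α^2 := by
    rw [Real.cos_two_mul]; linarith [Real.sin_sq_add_cos_sq α]
  have hprod2 : 2*A*B*(1 - 2*Real.sin α^2) ≤ 2*A*B*Real.cos (θ - φ) := by
    rw [← h4]; exact mul_le_mul_of_nonneg_left hc2 (by positivity)
  have step : A^2+B^2-2*A*B*Real.cos (θ-φ) ≤ (A-B)^2 + 4*A*B*Real.sin α^2 := by
    nlinarith [hprod2]
  have h5 : 0 ≤ (A - B) * (A + B) * (Real.sin α * Real.cos α) :=
    mul_nonneg (mul_nonneg (sub_nonneg.mpr hxy) (add_nonneg hA0 hB0)) (mul_nonneg hs hc)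
  have expand : ((A - B) * Real.cos α + (A + B) * Real.sin α)^2
      = (A-B)^2 + 4*A*B*Real.sin α^2 + 2*((A-B)*(A+B)*(Real.sin α * Real.cos α)) := by
    linear_combination (A - B)^2 * Real.sin_sq_add_cos_sq α
  have key2 : ‖x - y‖ ^ 2 ≤ ((A - B) * Real.cos α + (A + B) * Real.sin α)^2 := by
    rw [h1, expand]; linarith
  have hR : 0 ≤ (A - B) * Real.cos α + (A + B) * Real.sin α := by
    have h6 := sub_nonneg.mpr hxy
    positivity
  nlinarith [norm_nonneg (x - y), key2, hR]

lemma sector_diff {α β : ℝ} (h0 : 0 ≤ α) (h2 : α ≤ Real.pi/2) (x y : ℂ)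
    (hx : |Complex.arg x - β| ≤ α) (hy : |Complex.arg y - β| ≤ α) :
    ‖x - y‖ ≤ |‖x‖ - ‖y‖| * Real.cos α
      + (‖x‖ + ‖y‖) * Real.sin α := by
  rcases le_total (‖y‖) (‖x‖) with h | h
  · rw [abs_of_nonneg (sub_nonneg.mpr h)]
    exact sector_base h0 h2 x y h hx hy
  · rw [abs_of_nonpos (sub_nonpos.mpr h), norm_sub_rev]
    have h7 := sector_base h0 h2 y x h hy hx
    linarith

lemma telescope (g : ℕ → ℝ) (k M : ℕ) (hkM : k ≤ M) (hg0 : 0 ≤ g 0)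
    (hup : ∀ j < k, g j ≤ g (j+1)) (hdown : ∀ j, k ≤ j → j < M → g (j+1) ≤ g j) :
    ∑ j ∈ range (M+1), |g j - (if j = 0 then 0 else g (j-1))| = 2 * g k - g M := by
  rw [Finset.sum_range_succ']
  simp only [Nat.add_sub_cancel, if_neg (Nat.succ_ne_zero _), if_pos rfl, sub_zero, ite_true,
    ite_false, reduceIte]
  rw [abs_of_nonneg hg0]
  have hsplit : ∑ i ∈ range M, |g (i+1) - g i|
      = (∑ i ∈ range k, (g (i+1) - g i)) + ∑ i ∈ range (M - k), (g (k+i) - g (k+(i+1))) := by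
    rw [Finset.range_eq_Ico, ← Finset.sum_Ico_consecutive _ (Nat.zero_le k) hkM,
      ← Finset.range_eq_Ico, Finset.sum_Ico_eq_sum_range]
    congr 1
    · exact Finset.sum_congr rfl fun i hi =>
        abs_of_nonneg (sub_nonneg.mpr (hup i (Finset.mem_range.mp hi)))
    · refine Finset.sum_congr rfl fun i hi => ?_
      have hi' : i < M - k := Finset.mem_range.mp hi
      rw [abs_of_nonpos (sub_nonpos.mpr (hdown (k+i) (Nat.le_add_right _ _) (by omega))),
        ← Nat.add_assoc]
      ring
  rw [hsplit, Finset.sum_range_sub g k, Finset.sum_range_sub' (fun i => g (k+i)) (M-k)]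
  have : k + (M - k) = M := by omega
  rw [this]
  ring

lemma cancel_pow {t x y : ℝ} (ht : 0 < t) (i : ℕ) (h : t^i * x ≤ t^i * y) : x ≤ y :=
  le_of_mul_le_mul_left h (pow_pos ht i)

set_option maxHeartbeats 2000000 in
/-- Corollary 1.9 (case t₂ = 0 of Theorem 1.7). -/
theorem cor19 (n k : ℕ) (a : ℕ → ℂ) (hn : 3 ≤ n) (hk : k + 3 ≤ n)
    (han : a n ≠ 0)
    (α β : ℝ) (hα : α ≤ Real.pi / 2)
    (harg : ∀ j ≤ n, |Complex.arg (a j) - β| ≤ α)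
    (t : ℝ) (ht : 0 < t)
    (hup : ∀ j, j < k → t ^ j * ‖a j‖ ≤ t ^ (j + 1) * ‖a (j + 1)‖)
    (hdown : ∀ j, k ≤ j → j < n →
      t ^ (j + 1) * ‖a (j + 1)‖ ≤ t ^ j * ‖a j‖)
    (h0 : 0 < ‖a 0‖)
    (z : ℂ) (hz : ∑ j ∈ Finset.range (n + 1), a j * z ^ j = 0) :
    ‖z + a (n - 1) / a n - (t : ℂ)‖ ≤
      ‖a (n - 1) / a n‖ * (Real.sin α - Real.cos α)
      + 2 * ‖a k‖ * Real.cos α / (‖a n‖ * t ^ (n - k - 1))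
      + (2 * Real.sin α / ‖a n‖) *
          ∑ ν ∈ Finset.range (n - 1), ‖a ν‖ / t ^ (n - ν - 1) := by
  obtain ⟨m, rfl⟩ : ∃ m, n = m + 3 := ⟨n - 3, by omega⟩
  have hkm : k ≤ m := by omega
  simp only [show m + 3 - 1 = m + 2 by omega]
  have hα0 : 0 ≤ α := le_trans (abs_nonneg _) (harg 0 (by omega))
  have hsin : 0 ≤ Real.sin α := Real.sin_nonneg_of_nonneg_of_le_pi hα0 (by linarith [Real.pi_pos])
  have hcos : 0 ≤ Real.cos α := Real.cos_nonneg_of_mem_Icc ⟨by linarith [Real.pi_pos], hα⟩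
  have hsc := sincos_ge_one hα0 hα
  set N := ‖a (m+3)‖ with hN
  set C := ‖a (m+2)‖ with hC
  set K := ‖a k‖ with hK
  have hN0 : 0 < N := norm_pos_iff.mpr han
  set c : ℂ := a (m+2) / a (m+3) with hc
  set S := ∑ ν ∈ range (m+2), ‖a ν‖ / t^(m+3-ν-1) with hS
  have habsc : ‖c‖ = C / N := by rw [hc, norm_div]
  -- the decreasing chain
  have hchain : ∀ i j : ℕ, k ≤ i → i ≤ j → j ≤ m+3 →
      t^j * ‖a j‖ ≤ t^i * ‖a i‖ := by
    intro i j hki hij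
    induction j, hij using Nat.le_induction with
    | base => intro _; exact le_rfl
    | succ j hij ih =>
      intro hjn
      exact le_trans (hdown j (le_trans hki hij) (by omega)) (ih (by omega))
  -- basic comparisons
  have htN : t * N ≤ C := by
    have h := hchain (m+2) (m+3) (by omega) (by omega) (by omega)
    refine cancel_pow ht (m+2) ?_
    calc t^(m+2) * (t*N) = t^(m+3) * N := by ring
    _ ≤ t^(m+2) * C := h
  have hCK : C * t^(m+3-k-1) ≤ K := by
    have h := hchain k (m+2) le_rfl (by omega) (by omega)
    refine cancel_pow ht k ?_
    calc t^k * (C * t^(m+3-k-1)) = t^(k + (m+3-k-1)) * C := by rw [pow_add]; ring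
    _ = t^(m+2) * C := by congr 2; omega
    _ ≤ t^k * K := h
  have hCa : C * t ≤ ‖a (m+1)‖ := by
    have h := hchain (m+1) (m+2) (by omega) (by omega) (by omega)
    refine cancel_pow ht (m+1) ?_
    calc t^(m+1) * (C * t) = t^(m+2) * C := by ring
    _ ≤ t^(m+1) * ‖a (m+1)‖ := h
  have hNa : t*N*t^2 ≤ ‖a m‖ := by
    have h := hchain m (m+3) (by omega) (by omega) (by omega)
    refine cancel_pow ht m ?_
    calc t^m * (t*N*t^2) = t^(m+3) * N := by ring
    _ ≤ t^m * ‖a m‖ := h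
  rcases le_total (‖z‖) t with hzt | hzt
  · -- |z| ≤ t : triangle inequality argument
    have l2 : ‖c - t‖ ≤ (C/N - t)*Real.cos α + (C/N + t)*Real.sin α := by
      have hx := harg (m+2) (by omega)
      have hy' : |Complex.arg ((t:ℂ) * a (m+3)) - β| ≤ α := by
        rw [show ((t:ℂ)) = ((t:ℝ):ℂ) from rfl, Complex.arg_real_mul _ ht]
        exact harg (m+3) (by omega)
      have habsy : ‖(t:ℂ) * a (m+3)‖ = t * N := by
        rw [norm_mul, Complex.norm_real, Real.norm_eq_abs, abs_of_pos ht]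
      have hb := sector_base hα0 hα (a (m+2)) ((t:ℂ) * a (m+3)) (by rw [habsy]; exact htN) hx hy'
      rw [habsy] at hb
      have hct : c - (t:ℂ) = (a (m+2) - (t:ℂ) * a (m+3)) / a (m+3) := by
        rw [hc]; field_simp
      rw [hct, norm_div, ← hN]
      rw [div_le_iff₀ hN0]
      calc ‖a (m+2) - (t:ℂ)*a (m+3)‖ ≤ (C - t*N)*Real.cos α + (C + t*N)*Real.sin α := hb
      _ = ((C/N - t)*Real.cos α + (C/N + t)*Real.sin α) * N := by
          have hNN : (C/N) * N = C := div_mul_cancel₀ C hN0.ne'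
          linear_combination (-(Real.cos α) - Real.sin α) * hNN
    have l1 : ‖z + c - t‖ ≤ t + ((C/N - t)*Real.cos α + (C/N + t)*Real.sin α) := by
      calc ‖z + c - t‖ = ‖z + (c - t)‖ := by ring_nf
      _ ≤ ‖z‖ + ‖c - t‖ := norm_add_le _ _
      _ ≤ t + ((C/N - t)*Real.cos α + (C/N + t)*Real.sin α) := add_le_add hzt l2
    have r2 : 2 * C * Real.cos α / N ≤ 2 * K * Real.cos α / (N * t^(m+3-k-1)) := by
      rw [div_le_div_iff₀ hN0 (by positivity)]
      have h1 : 0 ≤ 2 * Real.cos α * N := by positivity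
      nlinarith [mul_le_mul_of_nonneg_left hCK h1]
    have hSge : C + t*N ≤ S := by
      have hsub : ({m+1, m} : Finset ℕ) ⊆ range (m+2) := by
        intro x hx
        simp only [Finset.mem_insert, Finset.mem_singleton] at hx
        rcases hx with rfl | rfl <;> simp only [Finset.mem_range] <;> omega
      have hpair : (∑ ν ∈ ({m+1, m} : Finset ℕ), ‖a ν‖ / t^(m+3-ν-1)) ≤ S := by
        rw [hS]
        exact Finset.sum_le_sum_of_subset_of_nonneg hsub (fun i _ _ => by positivity)
      rw [Finset.sum_pair (show m+1 ≠ m by omega)] at hpair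
      rw [show m+3-(m+1)-1 = 1 by omega, show m+3-m-1 = 2 by omega, pow_one] at hpair
      have h1 : C ≤ ‖a (m+1)‖ / t := (le_div_iff₀ ht).mpr hCa
      have h2 : t*N ≤ ‖a m‖ / t^2 := (le_div_iff₀ (by positivity)).mpr hNa
      linarith
    have r3 : 2 * Real.sin α * (C/N + t) ≤ (2 * Real.sin α / N) * S := by
      calc 2 * Real.sin α * (C/N + t) = (2 * Real.sin α / N) * (C + t*N) := by field_simp
      _ ≤ (2 * Real.sin α / N) * S := mul_le_mul_of_nonneg_left hSge (by positivity)
    have hCN0 : 0 ≤ C/N := by positivity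
    calc ‖z + c - t‖ ≤ t + ((C/N - t)*Real.cos α + (C/N + t)*Real.sin α) := l1
    _ ≤ (C/N) * (Real.sin α - Real.cos α) + 2*C*Real.cos α/N + 2*Real.sin α*(C/N + t) := by
        have hdiv : 2*C*Real.cos α/N = 2*(C/N)*Real.cos α := by ring
        nlinarith [hdiv, mul_nonneg hsin hCN0,
          mul_nonneg ht.le (by linarith : (0:ℝ) ≤ Real.sin α + Real.cos α - 1)]
    _ ≤ ‖c‖ * (Real.sin α - Real.cos α) + 2*K*Real.cos α/(N * t^(m+3-k-1))
        + (2*Real.sin α/N) * S := by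
        rw [habsc]; exact add_le_add (add_le_add le_rfl r2) r3
  · -- t ≤ |z|
    set d : ℕ → ℂ := fun j => (t:ℂ) * a j - (if j = 0 then 0 else a (j-1)) with hd
    set g : ℕ → ℝ := fun j => t^(j+1) * ‖a j‖ with hg
    have hz0 : (0:ℝ) < ‖z‖ := lt_of_lt_of_le ht hzt
    rw [show m+3+1 = (m+2)+1+1 by omega] at hz
    rw [Finset.sum_range_succ, Finset.sum_range_succ] at hz
    rw [show m+2+1 = m+3 by omega] at hz
    have e2a : ∑ j ∈ range ((m+2)+1), (if j = 0 then (0:ℂ) else a (j-1)) * z^j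
        = z * ∑ j ∈ range (m+2), a j * z^j := by
      rw [Finset.sum_range_succ']
      simp only [Nat.add_sub_cancel, Nat.succ_ne_zero, if_false, reduceIte, zero_mul, add_zero]
      rw [Finset.mul_sum]
      exact Finset.sum_congr rfl fun j _ => by ring
    have key : z^(m+3) * (a (m+3) * z + a (m+2) - (t:ℂ) * a (m+3))
        = ∑ j ∈ range (m+3), d j * z^j := by
      have e2 : ∑ j ∈ range (m+3), d j * z^j
          = (t:ℂ) * ((∑ j ∈ range (m+2), a j * z^j) + a (m+2) * z^(m+2))
            - z * ∑ j ∈ range (m+2), a j * z^j := by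
        simp only [hd, sub_mul, mul_assoc]
        rw [Finset.sum_sub_distrib]
        rw [show m+3 = (m+2)+1 by omega]
        rw [e2a, Finset.sum_range_succ, ← Finset.mul_sum]
        ring
      rw [e2]
      linear_combination (z - (t:ℂ)) * hz
    have hfac : a (m+3) * (z + c - (t:ℂ)) = a (m+3) * z + a (m+2) - (t:ℂ) * a (m+3) := by
      rw [hc]; field_simp
    have habs1 : N * ‖z + c - t‖ * (‖z‖)^(m+3)
        ≤ ∑ j ∈ range (m+3), ‖d j‖ * (‖z‖)^j := by
      calc N * ‖z + c - t‖ * (‖z‖)^(m+3)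
          = ‖z^(m+3) * (a (m+3) * z + a (m+2) - (t:ℂ) * a (m+3))‖ := by
            rw [norm_mul, norm_pow, ← hfac, norm_mul, ← hN]; ring
      _ = ‖∑ j ∈ range (m+3), d j * z^j‖ := by rw [key]
      _ ≤ ∑ j ∈ range (m+3), ‖d j * z^j‖ := norm_sum_le _ _
      _ = ∑ j ∈ range (m+3), ‖d j‖ * (‖z‖)^j :=
            Finset.sum_congr rfl fun j _ => by rw [norm_mul, norm_pow]
    have habs2 : ∀ j ∈ range (m+3), ‖d j‖ * t^j
        ≤ Real.cos α * |g j - (if j = 0 then 0 else g (j-1))|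
          + Real.sin α * (g j + (if j = 0 then 0 else g (j-1))) := by
      intro j hj
      have hjm : j ≤ m+2 := by have := Finset.mem_range.mp hj; omega
      match j with
      | 0 =>
        simp only [hd, hg, reduceIte]
        rw [sub_zero, norm_mul, Complex.norm_real, Real.norm_eq_abs, abs_of_pos ht, pow_zero, mul_one, sub_zero,
          add_zero, pow_one, abs_of_nonneg (by positivity)]
        have hx0 : 0 ≤ t * ‖a 0‖ := mul_nonneg ht.le (norm_nonneg _)
        nlinarith [mul_le_mul_of_nonneg_right hsc hx0]
      | (i+1) =>
        simp only [hd, hg, if_neg (Nat.succ_ne_zero i), Nat.add_sub_cancel]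
        have hx : |Complex.arg (((t^(i+1+1):ℝ):ℂ) * a (i+1)) - β| ≤ α := by
          rw [Complex.arg_real_mul _ (by positivity : (0:ℝ) < t^(i+1+1))]
          exact harg (i+1) (by omega)
        have hy : |Complex.arg (((t^(i+1):ℝ):ℂ) * a i) - β| ≤ α := by
          rw [Complex.arg_real_mul _ (by positivity : (0:ℝ) < t^(i+1))]
          exact harg i (by omega)
        have hb := sector_diff hα0 hα _ _ hx hy
        have e1 : ‖((t^(i+1+1):ℝ):ℂ) * a (i+1)‖ = t^(i+1+1) * ‖a (i+1)‖ := by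
          rw [norm_mul, Complex.norm_real, Real.norm_eq_abs, abs_of_pos (by positivity)]
        have e0 : ‖((t^(i+1):ℝ):ℂ) * a i‖ = t^(i+1) * ‖a i‖ := by
          rw [norm_mul, Complex.norm_real, Real.norm_eq_abs, abs_of_pos (by positivity)]
        rw [e1, e0] at hb
        have e3 : ‖(t:ℂ) * a (i+1) - a i‖ * t^(i+1)
            = ‖((t^(i+1+1):ℝ):ℂ) * a (i+1) - ((t^(i+1):ℝ):ℂ) * a i‖ := by
          rw [show ((t^(i+1+1):ℝ):ℂ) * a (i+1) - ((t^(i+1):ℝ):ℂ) * a i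
              = ((t^(i+1):ℝ):ℂ) * ((t:ℂ) * a (i+1) - a i) by push_cast; ring,
            norm_mul, Complex.norm_real, Real.norm_eq_abs, abs_of_pos (by positivity)]
          ring
        rw [e3]
        linarith [hb]
    have hgup : ∀ j < k, g j ≤ g (j+1) := fun j hj => by
      simp only [hg]
      calc t^(j+1) * ‖a j‖ = t * (t^j * ‖a j‖) := by ring
      _ ≤ t * (t^(j+1) * ‖a (j+1)‖) := mul_le_mul_of_nonneg_left (hup j hj) ht.le
      _ = t^(j+1+1) * ‖a (j+1)‖ := by ring
    have hgdown : ∀ j, k ≤ j → j < m+2 → g (j+1) ≤ g j := fun j h1 h2 => by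
      simp only [hg]
      calc t^(j+1+1) * ‖a (j+1)‖ = t * (t^(j+1) * ‖a (j+1)‖) := by ring
      _ ≤ t * (t^j * ‖a j‖) := mul_le_mul_of_nonneg_left (hdown j h1 (by omega)) ht.le
      _ = t^(j+1) * ‖a j‖ := by ring
    have htel := telescope g k (m+2) (by omega) (by simp only [hg]; positivity) hgup hgdown
    have hFsum : ∑ j ∈ range ((m+2)+1), (if j = 0 then (0:ℝ) else g (j-1))
        = ∑ j ∈ range (m+2), g j := by
      rw [Finset.sum_range_succ']
      simp only [Nat.add_sub_cancel, Nat.succ_ne_zero, if_false, reduceIte, add_zero]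
    have hsum2 : ∑ j ∈ range (m+3), ‖d j‖ * t^j
        ≤ Real.cos α * (2 * g k - g (m+2))
          + Real.sin α * (g (m+2) + 2 * ∑ j ∈ range (m+2), g j) := by
      calc ∑ j ∈ range (m+3), ‖d j‖ * t^j
          ≤ ∑ j ∈ range (m+3), (Real.cos α * |g j - (if j = 0 then 0 else g (j-1))|
            + Real.sin α * (g j + (if j = 0 then 0 else g (j-1)))) := Finset.sum_le_sum habs2
      _ = Real.cos α * (∑ j ∈ range (m+3), |g j - (if j = 0 then 0 else g (j-1))|)
          + Real.sin α * ((∑ j ∈ range (m+3), g j)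
            + ∑ j ∈ range (m+3), (if j = 0 then 0 else g (j-1))) := by
            simp only [mul_add, Finset.mul_sum, Finset.sum_add_distrib]
      _ = Real.cos α * (2 * g k - g (m+2))
          + Real.sin α * (g (m+2) + 2 * ∑ j ∈ range (m+2), g j) := by
            rw [show m+3 = (m+2)+1 by omega, htel, hFsum, Finset.sum_range_succ]
            ring
    have hsum3 : (∑ j ∈ range (m+3), ‖d j‖ * (‖z‖)^j) * t^(m+3)
        ≤ (∑ j ∈ range (m+3), ‖d j‖ * t^j) * (‖z‖)^(m+3) := by
      rw [Finset.sum_mul, Finset.sum_mul]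
      refine Finset.sum_le_sum fun j hj => ?_
      have hjm : j ≤ m+3 := le_of_lt (Finset.mem_range.mp hj)
      have hp : t^(m+3-j) ≤ (‖z‖)^(m+3-j) := pow_le_pow_left₀ ht.le hzt _
      have e4 : t^j * t^(m+3-j) = t^(m+3) := by rw [← pow_add]; congr 1; omega
      have e5 : (‖z‖)^j * (‖z‖)^(m+3-j) = (‖z‖)^(m+3) := by
        rw [← pow_add]; congr 1; omega
      calc ‖d j‖ * (‖z‖)^j * t^(m+3)
          = (‖d j‖ * (‖z‖)^j * t^j) * t^(m+3-j) := by rw [← e4]; ring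
      _ ≤ (‖d j‖ * (‖z‖)^j * t^j) * (‖z‖)^(m+3-j) :=
            mul_le_mul_of_nonneg_left hp (by positivity)
      _ = ‖d j‖ * t^j * (‖z‖)^(m+3) := by rw [← e5]; ring
    have hfinal : N * ‖z + c - t‖ * t^(m+3) * (‖z‖)^(m+3)
        ≤ (Real.cos α * (2 * g k - g (m+2))
            + Real.sin α * (g (m+2) + 2 * ∑ j ∈ range (m+2), g j)) * (‖z‖)^(m+3) := by
      calc N * ‖z + c - t‖ * t^(m+3) * (‖z‖)^(m+3)
          = (N * ‖z + c - t‖ * (‖z‖)^(m+3)) * t^(m+3) := by ring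
      _ ≤ (∑ j ∈ range (m+3), ‖d j‖ * (‖z‖)^j) * t^(m+3) :=
            mul_le_mul_of_nonneg_right habs1 (by positivity)
      _ ≤ (∑ j ∈ range (m+3), ‖d j‖ * t^j) * (‖z‖)^(m+3) := hsum3
      _ ≤ _ := mul_le_mul_of_nonneg_right hsum2 (by positivity)
    have hfinal2 : N * ‖z + c - t‖ * t^(m+3)
        ≤ Real.cos α * (2 * g k - g (m+2))
          + Real.sin α * (g (m+2) + 2 * ∑ j ∈ range (m+2), g j) :=
      le_of_mul_le_mul_right hfinal (pow_pos hz0 (m+3))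
    have hSg : t^(m+3) * S = ∑ j ∈ range (m+2), g j := by
      rw [hS, Finset.mul_sum]
      refine Finset.sum_congr rfl fun ν hν => ?_
      have hν' : ν < m+2 := Finset.mem_range.mp hν
      have e6 : t^(m+3-ν-1) * t^(ν+1) = t^(m+3) := by rw [← pow_add]; congr 1; omega
      simp only [hg]
      rw [← mul_div_assoc, div_eq_iff (by positivity : t^(m+3-ν-1) ≠ 0)]
      linear_combination -(‖a ν‖) * e6
    have hterm1 : ‖c‖ * (Real.sin α - Real.cos α) * (N * t^(m+3))
        = (Real.sin α - Real.cos α) * g (m+2) := by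
      rw [habsc]
      simp only [hg]
      field_simp
      ring
    have hterm2 : (2*K*Real.cos α/(N*t^(m+3-k-1))) * (N*t^(m+3)) = 2 * Real.cos α * g k := by
      have e7 : t^(m+3-k-1) * t^(k+1) = t^(m+3) := by rw [← pow_add]; congr 1; omega
      simp only [hg]
      rw [← e7]
      field_simp
      ring
    have hterm3 : ((2*Real.sin α/N)*S) * (N*t^(m+3)) = 2*Real.sin α * ∑ j ∈ range (m+2), g j := by
      rw [← hSg]
      field_simp
    have hgoalmul : (‖c‖ * (Real.sin α - Real.cos α)
          + 2*K*Real.cos α/(N*t^(m+3-k-1)) + (2*Real.sin α/N)*S) * (N * t^(m+3))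
        = Real.cos α * (2 * g k - g (m+2))
          + Real.sin α * (g (m+2) + 2 * ∑ j ∈ range (m+2), g j) := by
      rw [add_mul, add_mul, hterm1, hterm2, hterm3]
      ring
    have hpos : (0:ℝ) < N * t^(m+3) := by positivity
    have hthis : ‖z + c - t‖ * (N * t^(m+3))
        ≤ (‖c‖ * (Real.sin α - Real.cos α)
          + 2*K*Real.cos α/(N*t^(m+3-k-1)) + (2*Real.sin α/N)*S) * (N * t^(m+3)) := by
      rw [hgoalmul]
      linarith [hfinal2]
    exact le_of_mul_le_mul_right hthis hpos
end

section
/- Let P(z) = Σ_{j=0}^n a_j z^j be a polynomial of degree n ≥ 1 with real positive coefficients. Suppose t_1 ≠ 0, t_1 ≥ t_2 ≥ 0 satisfy t_1 t_2 a_r + (t_1 − t_2) a_{r-1} − a_{r-2} ≥ 0 for r = 1, ..., k+1 and ≤ 0 for r = k+2, ..., n+1, where 0 ≤ k ≤ n−1 and a_{-2} = a_{-1} = a_{n+1} = 0. Then every zero z of P satisfies |z + a_{n-1}/a_n − (t_1 − t_2)| ≤ t_2 + a_{n-1}/a_n + (2 t_2 a_{k+1} + 2 a_k)/(a_n t_1^{n-k-1}).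 -/
open Finset

/-- Expansion of `(z^2 + (t2 - t1) z - t1 t2) * P(z)`. -/
lemma cor112_expand (a : ℤ → ℝ) (hm2 : a (-2) = 0) (hm1 : a (-1) = 0)
    (t1 t2 : ℝ) (z : ℂ) : ∀ n : ℕ,
    (z ^ 2 + ((t2 : ℂ) - t1) * z - (t1 : ℂ) * t2) * ∑ j ∈ range (n + 1), (a j : ℂ) * z ^ j
      = (a n : ℂ) * z ^ (n + 2) + ((a ((n : ℤ) - 1) : ℂ) - ((t1 : ℂ) - t2) * (a n : ℂ)) * z ^ (n + 1)
        - ∑ r ∈ range (n + 1),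
            ((t1 * t2 * a r + (t1 - t2) * a ((r : ℤ) - 1) - a ((r : ℤ) - 2) : ℝ) : ℂ) * z ^ r := by
  intro n
  induction n with
  | zero =>
    simp only [range_one, sum_singleton, pow_zero, Nat.cast_zero, Nat.cast_ofNat]
    norm_num [hm1, hm2]
    ring
  | succ n ih =>
    rw [sum_range_succ _ (n + 1), sum_range_succ
      (fun r => ((t1 * t2 * a r + (t1 - t2) * a ((r : ℤ) - 1) - a ((r : ℤ) - 2) : ℝ) : ℂ) * z ^ r)
      (n + 1), mul_add, ih]
    have e1 : ((n + 1 : ℕ) : ℤ) - 1 = (n : ℤ) := by push_cast; ring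
    have e2 : ((n + 1 : ℕ) : ℤ) - 2 = (n : ℤ) - 1 := by push_cast; ring
    have e3 : ((n + 1 : ℕ) : ℤ) = (n : ℤ) + 1 := by push_cast; ring
    rw [e1, e2, e3]
    push_cast
    ring

/-- Corollary 1.12. -/
theorem cor112 (n k : ℕ) (a : ℤ → ℝ) (hn : 1 ≤ n) (hk : k + 1 ≤ n)
    (hpos : ∀ j : ℤ, 0 ≤ j → j ≤ n → 0 < a j)
    (hm2 : a (-2) = 0) (hm1 : a (-1) = 0) (htop : a (n + 1) = 0)
    (t1 t2 : ℝ) (ht1 : t1 ≠ 0) (ht12 : t2 ≤ t1) (ht2 : 0 ≤ t2)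
    (hc1 : ∀ r : ℤ, 1 ≤ r → r ≤ k + 1 →
      0 ≤ t1 * t2 * a r + (t1 - t2) * a (r - 1) - a (r - 2))
    (hc2 : ∀ r : ℤ, k + 2 ≤ r → r ≤ n + 1 →
      t1 * t2 * a r + (t1 - t2) * a (r - 1) - a (r - 2) ≤ 0)
    (z : ℂ) (hz : ∑ j ∈ Finset.range (n + 1), (a j : ℂ) * z ^ j = 0) :
    ‖z + ((a (n - 1) / a n : ℝ) : ℂ) - ((t1 - t2 : ℝ) : ℂ)‖ ≤
      t2 + a (n - 1) / a n + (2 * t2 * a (k + 1) + 2 * a k) / (a n * t1 ^ (n - k - 1)) := by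
  have ht1pos : 0 < t1 := lt_of_le_of_ne (le_trans ht2 ht12) (Ne.symm ht1)
  have han : 0 < a n := hpos n (by positivity) le_rfl
  have han1 : 0 < a ((n : ℤ) - 1) := hpos _ (by omega) (by omega)
  have hak : 0 < a k := hpos k (by positivity) (by omega)
  have hak1 : 0 < a ((k : ℤ) + 1) := hpos _ (by positivity) (by omega)
  set α : ℝ := a ((n : ℤ) - 1) / a n with hα_def
  have hα : 0 < α := div_pos han1 han
  have hEnn : 0 ≤ (2 * t2 * a ((k : ℤ) + 1) + 2 * a k) / (a n * t1 ^ (n - k - 1)) := by positivity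
  -- From hc2 at r = n+1 : t1 - t2 ≤ α
  have hta : t1 - t2 ≤ α := by
    have h := hc2 ((n : ℤ) + 1) (by exact_mod_cast by omega) le_rfl
    have e1 : (n : ℤ) + 1 - 1 = (n : ℤ) := by ring
    have e2 : (n : ℤ) + 1 - 2 = (n : ℤ) - 1 := by ring
    rw [htop, e1, e2, mul_zero] at h
    rw [hα_def, le_div_iff₀ han]
    linarith
  -- nonnegativity of a on [-2, n]
  have hnn : ∀ j : ℤ, -2 ≤ j → j ≤ n → 0 ≤ a j := by
    intro j h1 h2
    rcases lt_or_ge j 0 with h | h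
    · interval_cases j <;> simp [hm1, hm2]
    · exact (hpos j h h2).le
  set R : ℝ := ‖z‖ with hR_def
  have hRnn : 0 ≤ R := norm_nonneg z
  rcases le_or_gt R t1 with hR | hR
  · -- easy case : |z| ≤ t1
    have h1 : ‖z + ((α : ℝ) : ℂ) - ((t1 - t2 : ℝ) : ℂ)‖ ≤ R + (α - (t1 - t2)) := by
      have : z + ((α : ℝ) : ℂ) - ((t1 - t2 : ℝ) : ℂ) = z + ((α - (t1 - t2) : ℝ) : ℂ) := by
        push_cast; ring
      rw [this]
      refine le_trans (norm_add_le _ _) ?_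
      rw [Complex.norm_real, Real.norm_eq_abs, abs_of_nonneg (by linarith)]
    refine le_trans h1 ?_
    linarith
  · -- main case : |z| > t1
    have hRpos : 0 < R := lt_trans ht1pos hR
    have hzne : z ≠ 0 := by
      intro h; rw [h, norm_zero] at hR_def; linarith [hR_def ▸ hR]
    -- the key identity
    set D : ℕ → ℝ := fun r => t1 * t2 * a r + (t1 - t2) * a ((r : ℤ) - 1) - a ((r : ℤ) - 2) with hD_def
    have key : (a n : ℂ) * z ^ (n + 2) + ((a ((n : ℤ) - 1) : ℂ) - ((t1 : ℂ) - t2) * (a n : ℂ)) * z ^ (n + 1)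
        = ∑ r ∈ range (n + 1), ((D r : ℝ) : ℂ) * z ^ r := by
      have h0 := cor112_expand a hm2 hm1 t1 t2 z n
      rw [hz, mul_zero] at h0
      exact sub_eq_zero.1 h0.symm
    have hfac : (a n : ℂ) * z ^ (n + 1) * (z + ((α : ℝ) : ℂ) - ((t1 - t2 : ℝ) : ℂ))
        = (a n : ℂ) * z ^ (n + 2) + ((a ((n : ℤ) - 1) : ℂ) - ((t1 : ℂ) - t2) * (a n : ℂ)) * z ^ (n + 1) := by
      have hanne : (a n : ℂ) ≠ 0 := by exact_mod_cast han.ne'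
      rw [hα_def]
      push_cast
      field_simp
      ring
    -- absolute values
    have habs : a n * R ^ (n + 1) * ‖z + ((α : ℝ) : ℂ) - ((t1 - t2 : ℝ) : ℂ)‖
        ≤ ∑ r ∈ range (n + 1), |D r| * R ^ r := by
      have h1 : ‖(a n : ℂ) * z ^ (n + 1) * (z + ((α : ℝ) : ℂ) - ((t1 - t2 : ℝ) : ℂ))‖
          = a n * R ^ (n + 1) * ‖z + ((α : ℝ) : ℂ) - ((t1 - t2 : ℝ) : ℂ)‖ := by
        rw [norm_mul, norm_mul, norm_pow, Complex.norm_real, Real.norm_eq_abs, abs_of_pos han, hR_def]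
      rw [← h1, hfac, key]
      refine le_trans (norm_sum_le _ _) ?_
      refine le_of_eq (Finset.sum_congr rfl ?_)
      intro r _
      rw [norm_mul, norm_pow, Complex.norm_real, Real.norm_eq_abs, hR_def]
    -- telescoping bounds
    set Q : ℝ := t2 * a ((k : ℤ) + 1) + a k with hQ_def
    have hQpos : 0 < Q := by positivity
    -- sum over range (k+2)
    have sum1 : ∑ r ∈ range (k + 2), |D r| * R ^ r ≤ Q * R ^ (k + 2) := by
      set g : ℕ → ℝ := fun r => (t2 * a ((r : ℤ) - 1) + a ((r : ℤ) - 2)) * R ^ r with hg_def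
      have hterm : ∀ r ∈ range (k + 2), |D r| * R ^ r ≤ g (r + 1) - g r := by
        intro r hr
        have hrk : r ≤ k + 1 := by simpa using Nat.lt_succ_iff.1 (mem_range.1 hr)
        have hDnn : 0 ≤ D r := by
          rcases Nat.eq_zero_or_pos r with h0 | h0
          · subst h0
            have ha0 : 0 < a 0 := hpos 0 le_rfl (by omega)
            simp only [hD_def, Nat.cast_zero, zero_sub, hm1, hm2, mul_zero, sub_zero, add_zero]
            exact mul_nonneg (mul_nonneg ht1pos.le ht2) ha0.le
          · exact hc1 r (by omega) (by omega)
        rw [abs_of_nonneg hDnn]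
        have e1 : ((r + 1 : ℕ) : ℤ) - 1 = (r : ℤ) := by push_cast; ring
        have e2 : ((r + 1 : ℕ) : ℤ) - 2 = (r : ℤ) - 1 := by push_cast; ring
        have har : 0 ≤ a r := hnn r (by omega) (by omega)
        have har1 : 0 ≤ a ((r : ℤ) - 1) := hnn _ (by omega) (by omega)
        simp only [hg_def, hD_def, e1, e2]
        have ekey : (t2 * a r + a ((r : ℤ) - 1)) * R ^ (r + 1)
            - (t2 * a ((r : ℤ) - 1) + a ((r : ℤ) - 2)) * R ^ r
            - (t1 * t2 * a r + (t1 - t2) * a ((r : ℤ) - 1) - a ((r : ℤ) - 2)) * R ^ r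
            = (t2 * a r + a ((r : ℤ) - 1)) * R ^ r * (R - t1) := by
          rw [pow_succ]; ring
        nlinarith [mul_nonneg (mul_nonneg (add_nonneg (mul_nonneg ht2 har) har1)
          (pow_nonneg hRnn r)) (sub_nonneg.2 hR.le)]
      refine le_trans (Finset.sum_le_sum hterm) ?_
      rw [Finset.sum_range_sub g (k + 2)]
      have hg0 : g 0 = 0 := by simp [hg_def, hm1, hm2]
      have hgk : g (k + 2) = Q * R ^ (k + 2) := by
        have e1 : ((k + 2 : ℕ) : ℤ) - 1 = (k : ℤ) + 1 := by push_cast; ring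
        have e2 : ((k + 2 : ℕ) : ℤ) - 2 = (k : ℤ) := by push_cast; ring
        simp only [hg_def, e1, e2, hQ_def]
      rw [hg0, hgk]; ring_nf; rfl
    -- sum over Ico (k+2) (n+1)
    have sum2 : ∑ r ∈ Ico (k + 2) (n + 1), |D r| * R ^ r
        ≤ (R / t1) ^ n * (Q * t1 ^ (k + 2)) := by
      set h : ℕ → ℝ := fun r => (t2 * a ((r : ℤ) - 1) + a ((r : ℤ) - 2)) * t1 ^ r with hh_def
      have hterm : ∀ r ∈ Ico (k + 2) (n + 1),
          |D r| * R ^ r ≤ (R / t1) ^ n * (h r - h (r + 1)) := by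
        intro r hr
        obtain ⟨hr1, hr2⟩ := mem_Ico.1 hr
        have hDle : D r ≤ 0 := hc2 r (by omega) (by omega)
        rw [abs_of_nonpos hDle]
        have e1 : ((r + 1 : ℕ) : ℤ) - 1 = (r : ℤ) := by push_cast; ring
        have e2 : ((r + 1 : ℕ) : ℤ) - 2 = (r : ℤ) - 1 := by push_cast; ring
        have hhd : h r - h (r + 1) = (-D r) * t1 ^ r := by
          simp only [hh_def, hD_def, e1, e2]
          rw [pow_succ]; ring
        rw [hhd]
        have hRr : R ^ r ≤ t1 ^ r * (R / t1) ^ n := by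
          have h1 : R ^ r = t1 ^ r * (R / t1) ^ r := by
            rw [← mul_pow, mul_div_cancel₀ _ ht1]
          rw [h1]
          refine mul_le_mul_of_nonneg_left ?_ (by positivity)
          exact pow_le_pow_right₀ (by rw [le_div_iff₀ ht1pos]; linarith) (by omega)
        calc -D r * R ^ r ≤ -D r * (t1 ^ r * (R / t1) ^ n) :=
              mul_le_mul_of_nonneg_left hRr (by linarith)
          _ = (R / t1) ^ n * (-D r * t1 ^ r) := by ring
      refine le_trans (Finset.sum_le_sum hterm) ?_
      rw [← Finset.mul_sum]
      refine mul_le_mul_of_nonneg_left ?_ (by positivity)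
      -- telescoping over Ico
      have htel : ∑ r ∈ Ico (k + 2) (n + 1), (h r - h (r + 1)) = h (k + 2) - h (n + 1) := by
        rw [Finset.sum_Ico_eq_sum_range]
        have : ∀ i ∈ range (n + 1 - (k + 2)),
            h (k + 2 + i) - h (k + 2 + i + 1)
            = (fun j => -h (k + 2 + j)) (i + 1) - (fun j => -h (k + 2 + j)) i := by
          intro i _
          simp only []
          have : k + 2 + (i + 1) = k + 2 + i + 1 := by omega
          rw [this]; ring
        rw [Finset.sum_congr rfl this, Finset.sum_range_sub (fun j => -h (k + 2 + j))]
        have : k + 2 + (n + 1 - (k + 2)) = n + 1 := by omega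
        rw [this]; ring
      rw [htel]
      have hhk : h (k + 2) = Q * t1 ^ (k + 2) := by
        have e1 : ((k + 2 : ℕ) : ℤ) - 1 = (k : ℤ) + 1 := by push_cast; ring
        have e2 : ((k + 2 : ℕ) : ℤ) - 2 = (k : ℤ) := by push_cast; ring
        simp only [hh_def, e1, e2, hQ_def]
      have hhn : 0 ≤ h (n + 1) := by
        have e1 : ((n + 1 : ℕ) : ℤ) - 1 = (n : ℤ) := by push_cast; ring
        have e2 : ((n + 1 : ℕ) : ℤ) - 2 = (n : ℤ) - 1 := by push_cast; ring
        simp only [hh_def, e1, e2]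
        positivity
      rw [hhk]; linarith
    -- combine
    have hsplit : ∑ r ∈ range (n + 1), |D r| * R ^ r
        = ∑ r ∈ range (k + 2), |D r| * R ^ r + ∑ r ∈ Ico (k + 2) (n + 1), |D r| * R ^ r := by
      rw [Finset.sum_range_add_sum_Ico _ (by omega : k + 2 ≤ n + 1)]
    have htotal : a n * R ^ (n + 1) * ‖z + ((α : ℝ) : ℂ) - ((t1 - t2 : ℝ) : ℂ)‖
        ≤ Q * R ^ (k + 2) + (R / t1) ^ n * (Q * t1 ^ (k + 2)) := by
      rw [hsplit] at habs
      exact le_trans habs (add_le_add sum1 sum2)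
    -- numeric finish
    have hA : R ^ (k + 2) ≤ R ^ (n + 1) / t1 ^ (n - k - 1) := by
      rw [le_div_iff₀ (by positivity)]
      have e : R ^ (n + 1) = R ^ (k + 2) * R ^ (n - k - 1) := by
        rw [← pow_add]; congr 1; omega
      rw [e]
      exact mul_le_mul_of_nonneg_left (pow_le_pow_left₀ ht1pos.le hR.le _) (by positivity)
    have hB : (R / t1) ^ n * t1 ^ (k + 2) ≤ R ^ (n + 1) / t1 ^ (n - k - 1) := by
      rw [div_pow, div_mul_eq_mul_div, div_le_div_iff₀ (by positivity) (by positivity)]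
      have e1 : t1 ^ (k + 2) * t1 ^ (n - k - 1) = t1 ^ (n + 1) := by
        rw [← pow_add]; congr 1; omega
      calc R ^ n * t1 ^ (k + 2) * t1 ^ (n - k - 1) = R ^ n * t1 ^ (n + 1) := by
            rw [mul_assoc, e1]
        _ = R ^ n * t1 ^ n * t1 := by rw [pow_succ]; ring
        _ ≤ R ^ n * t1 ^ n * R := by
            refine mul_le_mul_of_nonneg_left hR.le (by positivity)
        _ = R ^ (n + 1) * t1 ^ n := by rw [pow_succ]; ring
    have hfinal : Q * R ^ (k + 2) + (R / t1) ^ n * (Q * t1 ^ (k + 2))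
        ≤ a n * R ^ (n + 1) * ((2 * t2 * a ((k : ℤ) + 1) + 2 * a k) / (a n * t1 ^ (n - k - 1))) := by
      have h1 : Q * R ^ (k + 2) ≤ Q * (R ^ (n + 1) / t1 ^ (n - k - 1)) :=
        mul_le_mul_of_nonneg_left hA hQpos.le
      have h2 : (R / t1) ^ n * (Q * t1 ^ (k + 2)) ≤ Q * (R ^ (n + 1) / t1 ^ (n - k - 1)) := by
        have := mul_le_mul_of_nonneg_left hB hQpos.le
        calc (R / t1) ^ n * (Q * t1 ^ (k + 2)) = Q * ((R / t1) ^ n * t1 ^ (k + 2)) := by ring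
          _ ≤ Q * (R ^ (n + 1) / t1 ^ (n - k - 1)) := this
      have he : a n * R ^ (n + 1) * ((2 * t2 * a ((k : ℤ) + 1) + 2 * a k) / (a n * t1 ^ (n - k - 1)))
          = 2 * (Q * (R ^ (n + 1) / t1 ^ (n - k - 1))) := by
        rw [hQ_def]
        field_simp
      rw [he]; linarith
    have hX : ‖z + ((α : ℝ) : ℂ) - ((t1 - t2 : ℝ) : ℂ)‖
        ≤ (2 * t2 * a ((k : ℤ) + 1) + 2 * a k) / (a n * t1 ^ (n - k - 1)) := by
      have hpos' : 0 < a n * R ^ (n + 1) := by positivity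
      have := le_trans htotal hfinal
      calc ‖z + ((α : ℝ) : ℂ) - ((t1 - t2 : ℝ) : ℂ)‖
          = a n * R ^ (n + 1) * ‖z + ((α : ℝ) : ℂ) - ((t1 - t2 : ℝ) : ℂ)‖
            / (a n * R ^ (n + 1)) := by field_simp
        _ ≤ _ := by
            rw [div_le_iff₀ hpos']
            calc a n * R ^ (n + 1) * ‖z + ((α : ℝ) : ℂ) - ((t1 - t2 : ℝ) : ℂ)‖
                ≤ a n * R ^ (n + 1) * ((2 * t2 * a ((k : ℤ) + 1) + 2 * a k) / (a n * t1 ^ (n - k - 1))) := this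
              _ = (2 * t2 * a ((k : ℤ) + 1) + 2 * a k) / (a n * t1 ^ (n - k - 1)) * (a n * R ^ (n + 1)) := by ring
    refine le_trans hX ?_
    linarith
end

section
/- Under the hypotheses of Theorem 1.7 (degree n ≥ 3, coefficients in a sector of half-angle α ≤ π/2, turning index 0 ≤ k ≤ n−3, t_1 ≥ t_2 ≥ 0, t_1 ≠ 0), the disk D_1 = { z : |z + a_{n-1}/a_n − (t_1 − t_2)| ≤ (t_2 + |a_{n-1}/a_n|)(sin α − cos α) + (2 t_2|a_{k+1}| + 2|a_k|) cos α/(|a_n| t_1^{n-k-1}) + (2 sin α/|a_n|) Σ_{ν=0}^{n-2} |a_ν|/t_1^{n-ν-1} } is contained in the disk D_2 = { z : |z| ≤ t_1[ ((2|a_k| + 2 t_2|a_{k+1}|)/(t_1^{n-k}|a_n|) − 1) cos α + sin α ] + (2 sin α/|a_n|) Σ_{j=0}^{n-1} |a_j|/t_1^{n-j-1} }. -/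
open Real Complex

lemma key_abs (s α : ℝ) (q : ℂ) (hs : 0 ≤ s) (hρ : s ≤ ‖q‖)
    (hsin : 0 ≤ Real.sin α) (hcos : 0 ≤ Real.cos α)
    (hx : ‖q‖ * Real.cos (2*α) ≤ q.re) :
    ‖(s : ℂ) - q‖ ≤
      s * (Real.sin α - Real.cos α) + ‖q‖ * (Real.sin α + Real.cos α) := by
  have h1 : Real.sin α ^ 2 + Real.cos α ^ 2 = 1 := Real.sin_sq_add_cos_sq α
  have h2 : Real.cos (2*α) = Real.cos α ^ 2 - Real.sin α ^ 2 := by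
    rw [Real.cos_two_mul]; linarith
  have hA2 : (‖(s:ℂ) - q‖)^2 = (s - q.re)^2 + q.im^2 := by
    rw [Complex.sq_norm]
    simp [Complex.normSq_apply, Complex.sub_re, Complex.sub_im]
    ring
  have hρ2 : q.re^2 + q.im^2 = (‖q‖)^2 := by
    rw [Complex.sq_norm]; simp [Complex.normSq_apply]; ring
  have hB : 0 ≤ s * (Real.sin α - Real.cos α) + ‖q‖ * (Real.sin α + Real.cos α) := by
    nlinarith
  have hA : 0 ≤ ‖(s:ℂ) - q‖ := norm_nonneg _
  have hx' : ‖q‖ * (Real.cos α ^ 2 - Real.sin α ^ 2) ≤ q.re := by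
    rw [← h2]; exact hx
  have hsq : (‖(s:ℂ) - q‖)^2 ≤
      (s * (Real.sin α - Real.cos α) + ‖q‖ * (Real.sin α + Real.cos α))^2 := by
    rw [hA2]
    nlinarith [mul_nonneg (mul_nonneg hsin hcos)
        (sub_nonneg.2 (mul_self_le_mul_self hs hρ)),
      mul_nonneg hs (sub_nonneg.2 hx'), hρ2, h1]
  calc ‖(s:ℂ) - q‖ = Real.sqrt ((‖(s:ℂ) - q‖)^2) := (Real.sqrt_sq hA).symm
    _ ≤ Real.sqrt ((s * (Real.sin α - Real.cos α) + ‖q‖ * (Real.sin α + Real.cos α))^2) :=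
        Real.sqrt_le_sqrt hsq
    _ = _ := Real.sqrt_sq hB

lemma re_div_eq (w v : ℂ) (hw : w ≠ 0) (hv : v ≠ 0) :
    (w/v).re = (‖w‖ / ‖v‖) * Real.cos (Complex.arg w - Complex.arg v) := by
  have hvq : Complex.normSq v = (‖v‖)^2 := (Complex.sq_norm v).symm
  have haw : ‖w‖ ≠ 0 := by simpa using hw
  have hav : ‖v‖ ≠ 0 := by simpa using hv
  rw [Complex.div_re, Real.cos_sub, Complex.cos_arg hw, Complex.cos_arg hv,
    Complex.sin_arg, Complex.sin_arg, hvq]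
  field_simp

/-- Remark 1.8: the disk of Theorem 1.7 is contained in the disk of Theorem 1.5. -/
theorem remark18 (n k : ℕ) (a : ℤ → ℂ) (hn : 3 ≤ n) (hk : k + 3 ≤ n)
    (han : a n ≠ 0)
    (α β : ℝ) (hα : α ≤ Real.pi / 2)
    (harg : ∀ j : ℤ, 0 ≤ j → j ≤ n → |Complex.arg (a j) - β| ≤ α)
    (hm2 : a (-2) = 0) (hm1 : a (-1) = 0) (htop : a (n + 1) = 0)
    (t1 t2 : ℝ) (ht1 : t1 ≠ 0) (ht12 : t2 ≤ t1) (ht2 : 0 ≤ t2)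
    (hc1 : ∀ r : ℤ, 1 ≤ r → r ≤ k + 1 →
      0 ≤ t1 * t2 * ‖a r‖ + (t1 - t2) * ‖a (r - 1)‖ -
        ‖a (r - 2)‖)
    (hc2 : ∀ r : ℤ, k + 2 ≤ r → r ≤ n + 1 →
      t1 * t2 * ‖a r‖ + (t1 - t2) * ‖a (r - 1)‖ -
        ‖a (r - 2)‖ ≤ 0) :
    {z : ℂ | ‖z + a (n - 1) / a n - ((t1 - t2 : ℝ) : ℂ)‖ ≤
        (t2 + ‖a (n - 1) / a n‖) * (Real.sin α - Real.cos α)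
        + (2 * t2 * ‖a (k + 1)‖ + 2 * ‖a k‖) * Real.cos α /
            (‖a n‖ * t1 ^ (n - k - 1))
        + (2 * Real.sin α / ‖a n‖) *
            ∑ ν ∈ Finset.range (n - 1), ‖a ν‖ / t1 ^ (n - ν - 1)} ⊆
    {z : ℂ | ‖z‖ ≤
        t1 * (((2 * ‖a k‖ + 2 * t2 * ‖a (k + 1)‖) /
            (t1 ^ (n - k) * ‖a n‖) - 1) * Real.cos α + Real.sin α)
        + (2 * Real.sin α / ‖a n‖) *
            ∑ j ∈ Finset.range n, ‖a j‖ / t1 ^ (n - j - 1)} := by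
  intro z hz
  simp only [Set.mem_setOf_eq] at hz ⊢
  obtain ⟨m, rfl⟩ : ∃ m, n = m + 1 := ⟨n - 1, by omega⟩
  have hkm : k + 2 ≤ m := by omega
  have ht1p : 0 < t1 := lt_of_le_of_ne (ht2.trans ht12) (Ne.symm ht1)
  have hA : 0 < ‖a ((m+1 : ℕ) : ℤ)‖ := norm_pos_iff.mpr han
  have hα0 : 0 ≤ α := le_trans (abs_nonneg _)
    (harg 0 le_rfl (by exact_mod_cast Nat.zero_le (m+1)))
  have hsin : 0 ≤ Real.sin α :=
    Real.sin_nonneg_of_nonneg_of_le_pi hα0 (by linarith [Real.pi_pos])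
  have hcos : 0 ≤ Real.cos α := Real.cos_nonneg_of_mem_Icc ⟨by linarith [Real.pi_pos], hα⟩
  have hidx : ((m+1 : ℕ) : ℤ) - 1 = (m : ℤ) := by push_cast; ring
  rw [hidx] at hz
  -- |a_{n-1}| ≥ (t1 - t2) |a_n|
  have hqs : (t1 - t2) * ‖a ((m+1 : ℕ) : ℤ)‖ ≤ ‖a (m : ℤ)‖ := by
    have h := hc2 (((m+1 : ℕ) : ℤ) + 1) (by push_cast; omega) le_rfl
    rw [htop] at h
    have e1 : ((m+1 : ℕ) : ℤ) + 1 - 1 = ((m+1 : ℕ) : ℤ) := by ring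
    have e2 : ((m+1 : ℕ) : ℤ) + 1 - 2 = (m : ℤ) := by push_cast; ring
    rw [e1, e2] at h
    simp only [norm_zero, mul_zero, zero_add] at h
    linarith
  set q : ℂ := a (m : ℤ) / a ((m+1 : ℕ) : ℤ) with hq
  -- bound on Re q
  have hre : ‖q‖ * Real.cos (2*α) ≤ q.re := by
    by_cases hw : a (m : ℤ) = 0
    · simp [hq, hw]
    · rw [hq, re_div_eq _ _ hw han, norm_div]
      have hd : |Complex.arg (a (m : ℤ)) - Complex.arg (a ((m+1 : ℕ) : ℤ))| ≤ 2 * α := by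
        have h1 := harg (m : ℤ) (by positivity) (by exact_mod_cast Nat.le_succ m)
        have h2 := harg ((m+1 : ℕ) : ℤ) (by positivity) le_rfl
        calc |Complex.arg (a (m : ℤ)) - Complex.arg (a ((m+1 : ℕ) : ℤ))|
            = |(Complex.arg (a (m : ℤ)) - β) - (Complex.arg (a ((m+1 : ℕ) : ℤ)) - β)| := by
              ring_nf
          _ ≤ _ := abs_sub _ _
          _ ≤ 2 * α := by linarith
      have hcc : Real.cos (2*α) ≤
          Real.cos (Complex.arg (a (m : ℤ)) - Complex.arg (a ((m+1 : ℕ) : ℤ))) := by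
        rw [← Real.cos_abs (Complex.arg (a (m : ℤ)) - _)]
        apply Real.cos_le_cos_of_nonneg_of_le_pi (abs_nonneg _) (by linarith [Real.pi_pos])
        exact hd
      have : 0 ≤ ‖a (m : ℤ)‖ / ‖a ((m+1 : ℕ) : ℤ)‖ := by positivity
      exact mul_le_mul_of_nonneg_left hcc this
  have hρ : (t1 - t2) ≤ ‖q‖ := by
    rw [hq, norm_div, le_div_iff₀ hA]
    exact hqs
  have hkey := key_abs (t1 - t2) α q (by linarith) hρ hsin hcos hre
  -- triangle inequality
  have htri : ‖z‖ ≤ ‖z + q - ((t1 - t2 : ℝ) : ℂ)‖ +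
      ‖((t1 - t2 : ℝ) : ℂ) - q‖ := by
    calc ‖z‖ = ‖(z + q - ((t1 - t2 : ℝ) : ℂ)) + (((t1 - t2 : ℝ) : ℂ) - q)‖ := by
          ring_nf
      _ ≤ _ := norm_add_le _ _
  -- sum split
  have hsum : (∑ j ∈ Finset.range (m+1), ‖a (j : ℤ)‖ / t1 ^ (m + 1 - j - 1)) =
      (∑ ν ∈ Finset.range m, ‖a (ν : ℤ)‖ / t1 ^ (m + 1 - ν - 1)) +
        ‖a (m : ℤ)‖ := by
    rw [Finset.sum_range_succ]
    simp
  have hpow : t1 ^ (m + 1 - k) = t1 ^ (m + 1 - k - 1) * t1 := by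
    rw [← pow_succ]
    congr 1
    omega
  have habsq : ‖q‖ = ‖a (m : ℤ)‖ / ‖a ((m+1 : ℕ) : ℤ)‖ :=
    norm_div _ _
  have hrange : m + 1 - 1 = m := by omega
  rw [hrange] at hz
  rw [hsum, hpow]
  rw [habsq] at hρ hkey hz
  have hAne : ‖a ((m+1 : ℕ) : ℤ)‖ ≠ 0 := ne_of_gt hA
  have hpne : t1 ^ (m + 1 - k - 1) ≠ 0 := pow_ne_zero _ ht1
  -- final arithmetic
  set S := ∑ ν ∈ Finset.range m, ‖a (ν : ℤ)‖ / t1 ^ (m + 1 - ν - 1) with hS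
  set W := ‖a (m : ℤ)‖ with hW
  set A2 := ‖a ((m+1 : ℕ) : ℤ)‖ with hA2
  set K1 := ‖a ((k : ℤ) + 1)‖ with hK1
  set K0 := ‖a (k : ℤ)‖ with hK0
  have hfin : (t2 + W / A2) * (Real.sin α - Real.cos α)
      + (2 * t2 * K1 + 2 * K0) * Real.cos α / (A2 * t1 ^ (m + 1 - k - 1))
      + (2 * Real.sin α / A2) * S
      + ((t1 - t2) * (Real.sin α - Real.cos α) + W / A2 * (Real.sin α + Real.cos α)) =
      t1 * (((2 * K0 + 2 * t2 * K1) / (t1 ^ (m + 1 - k - 1) * t1 * A2) - 1) * Real.cos α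
          + Real.sin α)
      + (2 * Real.sin α / A2) * (S + W) := by
    field_simp
    ring
  linarith [htri, hz, hkey]
end

section
/- Under the hypotheses of Theorem 1.10 (a_j = α_j + i β_j, α_n > 0, t_1 > 0, t_1 ≥ t_2 ≥ 0, turning indices k, m with 0 ≤ k, m ≤ n−1, and the stated sign conditions on real and imaginary parts), the disk { z : |z + (α_{n-1} − (t_1 − t_2)α_n)/a_n| ≤ 2(α_{k+1} t_2 + α_k) t_1^{k+1}/(|a_n| t_1^n) + 2(β_{m+1} t_2 + β_m) t_1^{m+1}/(|a_n| t_1^n) − (t_2 α_n + t_1 β_n + α_{n-1})/|a_n| } is contained in the disk { z : |z| ≤ (t_1/|a_n|)[ 2 t_1^{k-n}(α_k + t_2 α_{k+1}) + 2 t_1^{m-n}(β_m + t_2 β_{m+1}) − (α_n + β_n) ] }. -/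
/-- Remark 1.11: the disk of Theorem 1.10 is contained in the disk of Theorem 1.6. -/
theorem remark111 (n k m : ℕ) (a : ℤ → ℂ) (hn : 1 ≤ n) (hk : k + 1 ≤ n) (hm : m + 1 ≤ n)
    (han : a n ≠ 0)
    (hm2 : a (-2) = 0) (hm1 : a (-1) = 0) (htop : a (n + 1) = 0)
    (hαn : 0 < (a n).re)
    (t1 t2 : ℝ) (ht1 : 0 < t1) (ht12 : t2 ≤ t1) (ht2 : 0 ≤ t2)
    (hr1 : ∀ r : ℤ, 1 ≤ r → r ≤ k + 1 →
      0 ≤ t1 * t2 * (a r).re + (t1 - t2) * (a (r - 1)).re - (a (r - 2)).re)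
    (hr2 : ∀ r : ℤ, k + 2 ≤ r → r ≤ n + 1 →
      t1 * t2 * (a r).re + (t1 - t2) * (a (r - 1)).re - (a (r - 2)).re ≤ 0)
    (hi1 : ∀ r : ℤ, 1 ≤ r → r ≤ m + 1 →
      0 ≤ t1 * t2 * (a r).im + (t1 - t2) * (a (r - 1)).im - (a (r - 2)).im)
    (hi2 : ∀ r : ℤ, m + 2 ≤ r → r ≤ n + 1 →
      t1 * t2 * (a r).im + (t1 - t2) * (a (r - 1)).im - (a (r - 2)).im ≤ 0) :
    {z : ℂ | ‖z + (((a (n - 1)).re - (t1 - t2) * (a n).re : ℝ) : ℂ) / a n‖ ≤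
        2 * ((a (k + 1)).re * t2 + (a k).re) * t1 ^ (k + 1) / (‖a n‖ * t1 ^ n)
        + 2 * ((a (m + 1)).im * t2 + (a m).im) * t1 ^ (m + 1) / (‖a n‖ * t1 ^ n)
        - (t2 * (a n).re + t1 * (a n).im + (a (n - 1)).re) / ‖a n‖} ⊆
    {z : ℂ | ‖z‖ ≤
        (t1 / ‖a n‖) *
          (2 * t1 ^ ((k : ℤ) - n) * ((a k).re + t2 * (a (k + 1)).re)
           + 2 * t1 ^ ((m : ℤ) - n) * ((a m).im + t2 * (a (m + 1)).im)
           - ((a n).re + (a n).im))} := by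
  intro z hz
  simp only [Set.mem_setOf_eq] at hz ⊢
  set N : ℝ := (a (n - 1)).re - (t1 - t2) * (a n).re with hNdef
  have hN : 0 ≤ N := by
    have h := hr2 ((n : ℤ) + 1) (by exact_mod_cast by omega) le_rfl
    rw [htop] at h
    simp only [Complex.zero_re, mul_zero, zero_add, add_sub_cancel_right] at h
    have h2 : ((n : ℤ) + 1 - 2) = ((n : ℤ) - 1) := by ring
    rw [h2] at h
    linarith
  have hA : (0 : ℝ) < ‖a n‖ := by
    exact norm_pos_iff.mpr han
  have habsc : ‖(N : ℂ) / a n‖ = N / ‖a n‖ := by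
    rw [norm_div, Complex.norm_of_nonneg hN]
  have htri : ‖z‖ ≤ ‖z + (N : ℂ) / a n‖ + N / ‖a n‖ := by
    have h1 : z = (z + (N : ℂ) / a n) + (-((N : ℂ) / a n)) := by ring
    calc ‖z‖ = ‖(z + (N : ℂ) / a n) + (-((N : ℂ) / a n))‖ := by rw [← h1]
    _ ≤ ‖z + (N : ℂ) / a n‖ + ‖-((N : ℂ) / a n)‖ :=
        norm_add_le _ _
    _ = ‖z + (N : ℂ) / a n‖ + N / ‖a n‖ := by
        rw [norm_neg, habsc]
  have ht1' : t1 ≠ 0 := ne_of_gt ht1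
  have hzk : t1 ^ ((k : ℤ) - n) = t1 ^ k / t1 ^ n := by
    rw [zpow_sub₀ ht1', zpow_natCast, zpow_natCast]
  have hzm : t1 ^ ((m : ℤ) - n) = t1 ^ m / t1 ^ n := by
    rw [zpow_sub₀ ht1', zpow_natCast, zpow_natCast]
  have key : (t1 / ‖a n‖) *
          (2 * t1 ^ ((k : ℤ) - n) * ((a k).re + t2 * (a (k + 1)).re)
           + 2 * t1 ^ ((m : ℤ) - n) * ((a m).im + t2 * (a (m + 1)).im)
           - ((a n).re + (a n).im)) =
      (2 * ((a (k + 1)).re * t2 + (a k).re) * t1 ^ (k + 1) / (‖a n‖ * t1 ^ n)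
        + 2 * ((a (m + 1)).im * t2 + (a m).im) * t1 ^ (m + 1) / (‖a n‖ * t1 ^ n)
        - (t2 * (a n).re + t1 * (a n).im + (a (n - 1)).re) / ‖a n‖)
        + N / ‖a n‖ := by
    rw [hzk, hzm, hNdef]
    field_simp
    ring
  rw [key]
  linarith
end

section
/- Let a_0, ..., a_n be complex numbers (a_n ≠ 0) with |arg a_j − β| ≤ α ≤ π/2 for all j (β real), a_{-2} = a_{-1} = 0, and let t_1 > t_2 ≥ 0 and 0 ≤ k ≤ n be such that t_1 t_2|a_r| + (t_1 − t_2)|a_{r-1}| − |a_{r-2}| ≥ 0 for r = 1, ..., k+1 and ≤ 0 for r = k+2, ..., n. Then Σ_{ν=0}^{n} |a_ν t_1 t_2 + a_{ν-1}(t_1 − t_2) − a_{ν-2}| / t_1^{n−ν+1} ≤ (t_2|a_n| + |a_{n-1}|)(sin α − cos α) + (2 t_2|a_{k+1}| + 2|a_k|) cos α / t_1^{n-k-1} + 2 sin α Σ_{ν=0}^{n-2} |a_ν| / t_1^{n-ν-1}. -/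
lemma sector_re_aux (α β : ℝ) (hα2 : α ≤ Real.pi / 2) (z w : ℂ)
    (hz : z = 0 ∨ |z.arg - β| ≤ α) (hw : w = 0 ∨ |w.arg - β| ≤ α) :
    ‖z‖ * ‖w‖ * Real.cos (2 * α) ≤ (z * (starRingEnd ℂ) w).re := by
  rcases eq_or_ne z 0 with rfl | hz0
  · simp
  rcases eq_or_ne w 0 with rfl | hw0
  · simp
  have hz' := hz.resolve_left hz0
  have hw' := hw.resolve_left hw0
  have hre : (z * (starRingEnd ℂ) w).re
      = ‖z‖ * ‖w‖ * Real.cos (z.arg - w.arg) := by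
    have h1 : z.re = ‖z‖ * Real.cos z.arg := by
      rw [Complex.cos_arg hz0]; field_simp [norm_ne_zero_iff.mpr hz0]
    have h2 : z.im = ‖z‖ * Real.sin z.arg := by
      rw [Complex.sin_arg]; field_simp [norm_ne_zero_iff.mpr hz0]
    have h3 : w.re = ‖w‖ * Real.cos w.arg := by
      rw [Complex.cos_arg hw0]; field_simp [norm_ne_zero_iff.mpr hw0]
    have h4 : w.im = ‖w‖ * Real.sin w.arg := by
      rw [Complex.sin_arg]; field_simp [norm_ne_zero_iff.mpr hw0]
    simp only [Complex.mul_re, Complex.conj_re, Complex.conj_im, Real.cos_sub]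
    rw [h1, h2, h3, h4]; ring
  rw [hre]
  have hcc : Real.cos (2 * α) ≤ Real.cos (z.arg - w.arg) := by
    rw [← Real.cos_abs (z.arg - w.arg)]
    apply Real.cos_le_cos_of_nonneg_of_le_pi (abs_nonneg _) (by linarith)
    calc |z.arg - w.arg| ≤ |z.arg - β| + |β - w.arg| := abs_sub_le _ _ _
      _ = |z.arg - β| + |w.arg - β| := by rw [abs_sub_comm β]
      _ ≤ 2 * α := by linarith
  have hnn : (0:ℝ) ≤ ‖z‖ * ‖w‖ := by positivity
  exact mul_le_mul_of_nonneg_left hcc hnn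

lemma sector_key_aux (α β : ℝ) (hα2 : α ≤ Real.pi / 2) (hα0 : 0 ≤ α)
    (u v w : ℂ) (hu : u = 0 ∨ |u.arg - β| ≤ α) (hv : v = 0 ∨ |v.arg - β| ≤ α)
    (hw : w = 0 ∨ |w.arg - β| ≤ α) (c1 c2 : ℝ) (h1 : 0 ≤ c1) (h2 : 0 ≤ c2) :
    ‖u * (c1 : ℂ) + v * (c2 : ℂ) - w‖ ≤
      |c1 * ‖u‖ + c2 * ‖v‖ - ‖w‖| * Real.cos α
      + (c1 * ‖u‖ + c2 * ‖v‖ + ‖w‖) * Real.sin α := by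
  set X : ℝ := c1 * ‖u‖ + c2 * ‖v‖ with hX
  set Y : ℝ := ‖w‖ with hY
  have hXn : 0 ≤ X := by positivity
  have hYn : 0 ≤ Y := by positivity
  have hcos : 0 ≤ Real.cos α := Real.cos_nonneg_of_mem_Icc ⟨by linarith [Real.pi_pos], hα2⟩
  have hsin : 0 ≤ Real.sin α := Real.sin_nonneg_of_nonneg_of_le_pi hα0 (by linarith [Real.pi_pos])
  have hRn : 0 ≤ |X - Y| * Real.cos α + (X + Y) * Real.sin α := by positivity
  have hLn : 0 ≤ ‖u * (c1 : ℂ) + v * (c2 : ℂ) - w‖ := norm_nonneg _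
  have hsq : ‖u * (c1 : ℂ) + v * (c2 : ℂ) - w‖ ^ 2 ≤
      (|X - Y| * Real.cos α + (X + Y) * Real.sin α) ^ 2 := by
    rw [Complex.sq_norm, Complex.normSq_sub]
    have habsU : ‖u * (c1:ℂ) + v * (c2:ℂ)‖ ≤ X := by
      refine le_trans (norm_add_le _ _) (le_of_eq ?_)
      rw [norm_mul, norm_mul, Complex.norm_real, Complex.norm_real, Real.norm_eq_abs, Real.norm_eq_abs,
        abs_of_nonneg h1, abs_of_nonneg h2, hX]; ring
    have hnsU : Complex.normSq (u * (c1:ℂ) + v * (c2:ℂ)) ≤ X ^ 2 := by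
      rw [← Complex.sq_norm]
      exact pow_le_pow_left₀ (norm_nonneg _) habsU 2
    have hnsW : Complex.normSq w = Y ^ 2 := by rw [← Complex.sq_norm]
    have hreU : X * Y * Real.cos (2 * α)
        ≤ ((u * (c1:ℂ) + v * (c2:ℂ)) * (starRingEnd ℂ) w).re := by
      have e : (u * (c1:ℂ) + v * (c2:ℂ)) * (starRingEnd ℂ) w
          = (c1:ℂ) * (u * (starRingEnd ℂ) w) + (c2:ℂ) * (v * (starRingEnd ℂ) w) := by ring
      rw [e, Complex.add_re, Complex.re_ofReal_mul, Complex.re_ofReal_mul]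
      have m1 := mul_le_mul_of_nonneg_left (sector_re_aux α β hα2 u w hu hw) h1
      have m2 := mul_le_mul_of_nonneg_left (sector_re_aux α β hα2 v w hv hw) h2
      rw [hX]; nlinarith [m1, m2]
    have hc2a : Real.cos (2 * α) = Real.cos α ^ 2 - Real.sin α ^ 2 := by
      rw [Real.cos_two_mul]
      nlinarith [Real.sin_sq_add_cos_sq α]
    rw [hc2a] at hreU
    nlinarith [hnsU, hnsW, hreU, sq_abs (X - Y), Real.sin_sq_add_cos_sq α,
      mul_nonneg (mul_nonneg (abs_nonneg (X - Y)) (by linarith : (0:ℝ) ≤ X + Y))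
        (mul_nonneg hsin hcos)]
  nlinarith [hsq, hLn, hRn]

/-- The key summation estimate in the proof of Theorem 1.7. -/
theorem sum_estimate_thm17 (n k : ℕ) (a : ℤ → ℂ) (han : a n ≠ 0) (hk : k ≤ n)
    (α β : ℝ) (hα : α ≤ Real.pi / 2)
    (harg : ∀ j : ℤ, 0 ≤ j → j ≤ n → |Complex.arg (a j) - β| ≤ α)
    (hm2 : a (-2) = 0) (hm1 : a (-1) = 0)
    (t1 t2 : ℝ) (ht : t1 > t2) (ht2 : 0 ≤ t2)
    (hc1 : ∀ r : ℤ, 1 ≤ r → r ≤ k + 1 →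
      0 ≤ t1 * t2 * ‖a r‖ + (t1 - t2) * ‖a (r - 1)‖ -
        ‖a (r - 2)‖)
    (hc2 : ∀ r : ℤ, k + 2 ≤ r → r ≤ n →
      t1 * t2 * ‖a r‖ + (t1 - t2) * ‖a (r - 1)‖ -
        ‖a (r - 2)‖ ≤ 0) :
    ∑ ν ∈ Finset.range (n + 1),
      ‖a ν * ((t1 * t2 : ℝ) : ℂ) + a (ν - 1) * ((t1 - t2 : ℝ) : ℂ) - a (ν - 2)‖ /
        t1 ^ (n - ν + 1) ≤
      (t2 * ‖a n‖ + ‖a (n - 1)‖) * (Real.sin α - Real.cos α)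
      + (2 * t2 * ‖a (k + 1)‖ + 2 * ‖a k‖) * Real.cos α /
          t1 ^ ((n : ℤ) - k - 1)
      + 2 * Real.sin α * ∑ ν ∈ Finset.range (n - 1), ‖a ν‖ / t1 ^ (n - ν - 1) := by
  have ht1 : 0 < t1 := lt_of_le_of_lt ht2 ht
  have ht1' : t1 ≠ 0 := ne_of_gt ht1
  have hα0 : 0 ≤ α :=
    le_trans (abs_nonneg _) (harg 0 le_rfl (by exact_mod_cast Nat.zero_le n))
  have hcos : 0 ≤ Real.cos α := Real.cos_nonneg_of_mem_Icc ⟨by linarith [Real.pi_pos], hα⟩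
  have hsin : 0 ≤ Real.sin α :=
    Real.sin_nonneg_of_nonneg_of_le_pi hα0 (by linarith [Real.pi_pos])
  set F : ℕ → ℝ := fun ν =>
    (t2 * ‖a ((ν : ℤ) - 1)‖ + ‖a ((ν : ℤ) - 2)‖) * t1 ^ ν / t1 ^ (n + 1)
    with hF
  have hsec : ∀ j : ℤ, -2 ≤ j → j ≤ n → (a j = 0 ∨ |(a j).arg - β| ≤ α) := by
    intro j hj2 hj
    rcases le_or_gt 0 j with h | h
    · exact Or.inr (harg j h hj)
    · have : j = -1 ∨ j = -2 := by omega
      rcases this with rfl | rfl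
      · exact Or.inl hm1
      · exact Or.inl hm2
  have hFd : ∀ ν : ℕ, ν ≤ n → F (ν + 1) - F ν =
      (t1 * t2 * ‖a ν‖ + (t1 - t2) * ‖a ((ν : ℤ) - 1)‖ -
        ‖a ((ν : ℤ) - 2)‖) / t1 ^ (n - ν + 1) := by
    intro ν hν
    have hpow : t1 ^ (n - ν + 1) * t1 ^ ν = t1 ^ (n + 1) := by
      rw [← pow_add]; congr 1; omega
    have c1 : ((ν + 1 : ℕ) : ℤ) - 1 = (ν : ℤ) := by push_cast; ring
    have c2 : ((ν + 1 : ℕ) : ℤ) - 2 = (ν : ℤ) - 1 := by push_cast; ring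
    simp only [hF, c1, c2]
    rw [div_sub_div_same, div_eq_div_iff (pow_ne_zero _ ht1') (pow_ne_zero _ ht1'),
      ← hpow, pow_succ]
    ring
  have hterm : ∀ ν ∈ Finset.range (n + 1),
      ‖a ν * ((t1 * t2 : ℝ) : ℂ) + a ((ν : ℤ) - 1) * ((t1 - t2 : ℝ) : ℂ) -
        a ((ν : ℤ) - 2)‖ / t1 ^ (n - ν + 1) ≤
      (if ν ≤ k + 1 then F (ν + 1) - F ν else F ν - F (ν + 1)) * Real.cos α
        + (F (ν + 1) - F ν) * Real.sin α
        + 2 * Real.sin α * (‖a ((ν : ℤ) - 2)‖ / t1 ^ (n - ν + 1)) := by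
    intro ν hν
    have hνn : ν ≤ n := by
      have := Finset.mem_range.mp hν; omega
    have hkey := sector_key_aux α β hα hα0 (a ν) (a ((ν : ℤ) - 1)) (a ((ν : ℤ) - 2))
      (hsec ν (by omega) (by exact_mod_cast hνn))
      (hsec _ (by omega) (by push_cast; omega))
      (hsec _ (by omega) (by push_cast; omega))
      (t1 * t2) (t1 - t2) (by positivity) (by linarith)
    have hp : (0 : ℝ) < t1 ^ (n - ν + 1) := by positivity
    have step1 : ‖a ν * ((t1 * t2 : ℝ) : ℂ) + a ((ν : ℤ) - 1) * ((t1 - t2 : ℝ) : ℂ) -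
        a ((ν : ℤ) - 2)‖ / t1 ^ (n - ν + 1) ≤
        (|t1 * t2 * ‖a ν‖ + (t1 - t2) * ‖a ((ν : ℤ) - 1)‖ -
          ‖a ((ν : ℤ) - 2)‖| * Real.cos α
          + (t1 * t2 * ‖a ν‖ + (t1 - t2) * ‖a ((ν : ℤ) - 1)‖ +
            ‖a ((ν : ℤ) - 2)‖) * Real.sin α) / t1 ^ (n - ν + 1) := by
      gcongr
    refine le_trans step1 (le_of_eq ?_)
    rcases le_or_gt ν (k + 1) with hcase | hcase
    · have hD0 : 0 ≤ t1 * t2 * ‖a ν‖ + (t1 - t2) * ‖a ((ν : ℤ) - 1)‖ -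
          ‖a ((ν : ℤ) - 2)‖ := by
        rcases Nat.eq_zero_or_pos ν with rfl | hν1
        · have e1 : ((0 : ℕ) : ℤ) - 1 = -1 := by norm_num
          have e2 : ((0 : ℕ) : ℤ) - 2 = -2 := by norm_num
          rw [e1, e2, hm1, hm2]
          simp only [norm_zero, mul_zero, sub_zero, add_zero]
          positivity
        · exact hc1 ν (by exact_mod_cast hν1) (by push_cast; omega)
      rw [if_pos hcase, hFd ν hνn, abs_of_nonneg hD0]
      ring
    · have hD0 : t1 * t2 * ‖a ν‖ + (t1 - t2) * ‖a ((ν : ℤ) - 1)‖ -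
          ‖a ((ν : ℤ) - 2)‖ ≤ 0 :=
        hc2 ν (by push_cast; omega) (by exact_mod_cast hνn)
      rw [if_neg (by omega), ← neg_sub (F (ν + 1)) (F ν), hFd ν hνn, abs_of_nonpos hD0]
      ring
  have hsum_le := Finset.sum_le_sum hterm
  -- telescoping identities
  have hF0 : F 0 = 0 := by
    have e1 : ((0 : ℕ) : ℤ) - 1 = -1 := by norm_num
    have e2 : ((0 : ℕ) : ℤ) - 2 = -2 := by norm_num
    simp only [hF, e1, e2, hm1, hm2]
    simp
  have hFtop : F (n + 1) = t2 * ‖a n‖ + ‖a ((n : ℤ) - 1)‖ := by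
    have e1 : ((n + 1 : ℕ) : ℤ) - 1 = (n : ℤ) := by push_cast; ring
    have e2 : ((n + 1 : ℕ) : ℤ) - 2 = (n : ℤ) - 1 := by push_cast; ring
    simp only [hF, e1, e2]
    rw [div_eq_iff (pow_ne_zero _ ht1')]
  have htel : ∑ ν ∈ Finset.range (n + 1), (F (ν + 1) - F ν) = F (n + 1) - F 0 :=
    Finset.sum_range_sub F (n + 1)
  set s : ℕ := min (k + 2) (n + 1) with hs
  have hs_le : s ≤ n + 1 := min_le_right _ _
  have hsplit : ∑ ν ∈ Finset.range (n + 1),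
      (if ν ≤ k + 1 then F (ν + 1) - F ν else F ν - F (ν + 1)) = 2 * F s - F (n + 1) - F 0 := by
    rw [← Finset.sum_range_add_sum_Ico _ hs_le]
    have e1 : ∑ ν ∈ Finset.range s, (if ν ≤ k + 1 then F (ν + 1) - F ν else F ν - F (ν + 1))
        = ∑ ν ∈ Finset.range s, (F (ν + 1) - F ν) := by
      refine Finset.sum_congr rfl fun ν hν => ?_
      have := Finset.mem_range.mp hν
      rw [if_pos (by omega)]
    have e2 : ∑ ν ∈ Finset.Ico s (n + 1),
        (if ν ≤ k + 1 then F (ν + 1) - F ν else F ν - F (ν + 1))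
        = ∑ ν ∈ Finset.Ico s (n + 1), (F ν - F (ν + 1)) := by
      refine Finset.sum_congr rfl fun ν hν => ?_
      have := Finset.mem_Ico.mp hν
      rw [if_neg (by omega)]
    rw [e1, e2]
    have e3 : ∑ ν ∈ Finset.Ico s (n + 1), (F ν - F (ν + 1))
        = -(∑ ν ∈ Finset.Ico s (n + 1), (F (ν + 1) - F ν)) := by
      rw [← Finset.sum_neg_distrib]
      exact Finset.sum_congr rfl fun ν _ => by ring
    rw [e3, Finset.sum_Ico_eq_sub _ hs_le, Finset.sum_range_sub F, Finset.sum_range_sub F]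
    ring
  have hYsum : ∑ ν ∈ Finset.range (n + 1),
      (‖a ((ν : ℤ) - 2)‖ / t1 ^ (n - ν + 1))
      = ∑ μ ∈ Finset.range (n - 1), ‖a μ‖ / t1 ^ (n - μ - 1) := by
    rw [Finset.sum_range_succ']
    have g0 : ‖a (((0 : ℕ) : ℤ) - 2)‖ / t1 ^ (n - 0 + 1) = 0 := by
      norm_num [hm2]
    rw [g0, add_zero]
    cases n with
    | zero => simp
    | succ m =>
      rw [Finset.sum_range_succ']
      have g1 : ‖a (((0 + 1 : ℕ) : ℤ) - 2)‖ / t1 ^ (m + 1 - (0 + 1) + 1) = 0 := by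
        norm_num [hm1]
      rw [g1, add_zero]
      have hm' : m + 1 - 1 = m := by omega
      rw [hm']
      refine Finset.sum_congr rfl fun i hi => ?_
      have hi' := Finset.mem_range.mp hi
      have ec : ((i + 1 + 1 : ℕ) : ℤ) - 2 = (i : ℤ) := by push_cast; ring
      have ee : m + 1 - (i + 1 + 1) + 1 = m + 1 - i - 1 := by omega
      rw [ec, ee]
  -- the k+1 boundary inequality
  have hFs : 2 * F s * Real.cos α ≤
      (2 * t2 * ‖a ((k : ℤ) + 1)‖ + 2 * ‖a (k : ℤ)‖) * Real.cos α /
        t1 ^ ((n : ℤ) - k - 1) := by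
    rcases le_or_gt (k + 1) n with hkn | hkn
    · have hsval : s = k + 2 := by omega
      have hz : ((n : ℤ) - k - 1) = ((n - (k + 1) : ℕ) : ℤ) := by
        push_cast [Nat.cast_sub hkn]; ring
      rw [hz, zpow_natCast]
      have e1 : ((k + 2 : ℕ) : ℤ) - 1 = (k : ℤ) + 1 := by push_cast; ring
      have e2 : ((k + 2 : ℕ) : ℤ) - 2 = (k : ℤ) := by push_cast; ring
      have hFsval : F s = (t2 * ‖a ((k : ℤ) + 1)‖ + ‖a (k : ℤ)‖) /
          t1 ^ (n - (k + 1)) := by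
        rw [hsval]
        simp only [hF, e1, e2]
        rw [div_eq_div_iff (pow_ne_zero _ ht1') (pow_ne_zero _ ht1'), mul_assoc, ← pow_add]
        congr 2
        omega
      rw [hFsval]
      apply le_of_eq
      ring
    · have hkn' : k = n := by omega
      have hsval : s = n + 1 := by omega
      have hz : ((n : ℤ) - k - 1) = -1 := by omega
      rw [hz]
      have hden : (2 * t2 * ‖a ((k : ℤ) + 1)‖ + 2 * ‖a (k : ℤ)‖) *
          Real.cos α / t1 ^ (-1 : ℤ) = (2 * t2 * ‖a ((k : ℤ) + 1)‖ +
          2 * ‖a (k : ℤ)‖) * Real.cos α * t1 := by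
        rw [zpow_neg_one]; field_simp
      rw [hden]
      have hB := hc1 ((n : ℤ) + 1) (by omega) (by omega)
      have e1 : ((n : ℤ) + 1) - 1 = (n : ℤ) := by ring
      have e2 : ((n : ℤ) + 1) - 2 = (n : ℤ) - 1 := by ring
      rw [e1, e2] at hB
      rw [hsval, hFtop, hkn']
      have hB' : t2 * ‖a (n : ℤ)‖ + ‖a ((n : ℤ) - 1)‖ ≤
          t1 * (t2 * ‖a ((n : ℤ) + 1)‖ + ‖a (n : ℤ)‖) := by linarith
      nlinarith [mul_le_mul_of_nonneg_right hB' hcos]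
  refine le_trans hsum_le ?_
  rw [Finset.sum_add_distrib, Finset.sum_add_distrib, ← Finset.sum_mul, ← Finset.sum_mul,
    hsplit, htel, ← Finset.mul_sum, hYsum, hF0, hFtop]
  linarith [hFs]
end

section
/- Let P(z) = Σ_{j=0}^n a_j z^j be a polynomial of degree n with complex coefficients such that |arg a_j − β| ≤ α ≤ π/2 for all j, for some real β. Suppose t_1 > t_2 ≥ 0 and 0 ≤ k ≤ n satisfy t_1 t_2|a_r| + (t_1 − t_2)|a_{r-1}| − |a_{r-2}| ≥ 0 for r = 1, ..., k+1 and ≤ 0 for r = k+2, ..., n+1 (a_{-1} = a_{n+1} = 0). Then every zero z of P satisfies |z| ≤ t_1[ ((2|a_k| + 2 t_2|a_{k+1}|)/(t_1^{n-k}|a_n|) − 1) cos α + sin α ] + (2 sin α /|a_n|) Σ_{j=0}^{n-1} |a_j| / t_1^{n-j-1}. -/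
lemma claimB (c s P N x : ℝ) (hc : 0 ≤ c) (hs : 0 ≤ s) (h1 : c^2+s^2 = 1)
    (hP : 0 ≤ P) (hN : 0 ≤ N) (hx1 : c*P ≤ x) (hx2 : x ≤ P) :
    x^2 + N^2 - 2*(c^2-s^2)*x*N ≤ (|P - N| * c + (P+N)*s)^2 := by
  have hc1 : c ≤ 1 := by nlinarith
  have hs1 : s ≤ 1 := by nlinarith
  have hsc : 1 - c ≤ s := by nlinarith [sq_nonneg (s - (1-c))]
  have hu2 : |P - N|^2 = (P-N)^2 := sq_abs _
  have hu0 : 0 ≤ |P - N| := abs_nonneg _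
  have hu1 : P - N ≤ |P - N| := le_abs_self _
  have hu1' : N - P ≤ |P - N| := by rw [abs_sub_comm]; exact le_abs_self _
  have hkey : 0 ≤ c*s + (1-c)*(1-2*c^2) := by
    rcases le_total (2*c^2-1) 0 with h' | h'
    · have : 0 ≤ (1-c)*(1-2*c^2) := mul_nonneg (by linarith) (by linarith)
      nlinarith [mul_nonneg hc hs]
    · have h2 : 2*c^2-1 ≤ c := by nlinarith
      have : (1-c)*(2*c^2-1) ≤ s*c :=
        calc (1-c)*(2*c^2-1) ≤ s*(2*c^2-1) := mul_le_mul_of_nonneg_right hsc h'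
          _ ≤ s*c := mul_le_mul_of_nonneg_left h2 hs
      nlinarith
  have hE2 : P^2 + N^2 - 2*(c^2-s^2)*P*N ≤ (|P - N| * c + (P+N)*s)^2 := by
    have id2 : (|P - N| * c + (P+N)*s)^2
        = P^2 + N^2 - 2*(c^2-s^2)*P*N + 2*|P - N| * (P+N)*c*s := by
      linear_combination c^2 * hu2 + (P^2+N^2) * h1
    rw [id2]
    have : 0 ≤ 2*|P - N| * (P+N)*c*s := by positivity
    linarith
  have hE1 : (c*P)^2 + N^2 - 2*(c^2-s^2)*(c*P)*N ≤ (|P - N| * c + (P+N)*s)^2 := by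
    have id1 : (|P - N| * c + (P+N)*s)^2
        = (c*P)^2 + N^2 - 2*(c^2-s^2)*(c*P)*N
          + (2*|P - N| * (P+N)*c*s + (1-c)*(1+c)*P^2 + 2*P*N*(1-c)*(1-2*c^2)) := by
      linear_combination c^2 * hu2 + (P^2+N^2+2*P*N*(1-c)) * h1
    rw [id1]
    apply le_add_of_nonneg_right
    rcases le_total N P with h | h
    · have h9 : 0 ≤ (1+c)*P^2 + 2*P*N*(1-2*c^2) := by
        rcases le_total 0 (1-2*c^2) with h' | h'
        · have := mul_nonneg (mul_nonneg (by positivity : (0:ℝ) ≤ 2*P) hN) h'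
          nlinarith
        · have hPN : 2*P*P*(1-2*c^2) ≤ 2*P*N*(1-2*c^2) := by
            apply mul_le_mul_of_nonpos_right _ h'
            exact mul_le_mul_of_nonneg_left h (by linarith)
          nlinarith [mul_nonneg (mul_nonneg (by linarith : (0:ℝ) ≤ 1-c) (by linarith : (0:ℝ) ≤ 3+4*c)) (sq_nonneg P)]
      have e' : 2*|P - N| * (P+N)*c*s + (1-c)*(1+c)*P^2 + 2*P*N*(1-c)*(1-2*c^2)
          = 2*|P - N| * (P+N)*c*s + (1-c)*((1+c)*P^2 + 2*P*N*(1-2*c^2)) := by ring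
      rw [e']
      have t1 : 0 ≤ 2*|P - N| * (P+N)*c*s := by positivity
      have t2 : 0 ≤ (1-c)*((1+c)*P^2 + 2*P*N*(1-2*c^2)) := mul_nonneg (by linarith) h9
      linarith
    · have e : 2*|P - N| * (P+N)*c*s + (1-c)*(1+c)*P^2 + 2*P*N*(1-c)*(1-2*c^2)
          = 2*(|P - N| - (N-P))*(P+N)*c*s + 2*(N-P)*N*c*s + P^2*(1-c)^2*(3+4*c)
            + 2*P*(N-P)*(c*s + (1-c)*(1-2*c^2)) := by ring
      rw [e]
      have t1 : 0 ≤ 2*(|P - N| - (N-P))*(P+N)*c*s :=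
        mul_nonneg (mul_nonneg (mul_nonneg (by linarith) (by linarith)) hc) hs
      have t2 : 0 ≤ 2*(N-P)*N*c*s :=
        mul_nonneg (mul_nonneg (mul_nonneg (by linarith) hN) hc) hs
      have t3 : 0 ≤ P^2*(1-c)^2*(3+4*c) :=
        mul_nonneg (mul_nonneg (sq_nonneg _) (sq_nonneg _)) (by linarith)
      have t4 : 0 ≤ 2*P*(N-P)*(c*s + (1-c)*(1-2*c^2)) :=
        mul_nonneg (mul_nonneg (by linarith) (by linarith)) hkey
      linarith
  -- chord argument
  rcases eq_or_lt_of_le (by nlinarith : c*P ≤ P) with he | hlt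
  · have hxP : x = P := le_antisymm hx2 (he ▸ hx1)
    rw [hxP]; exact hE2
  · have chord : (P - c*P) * ((|P - N| * c + (P+N)*s)^2 - (x^2 + N^2 - 2*(c^2-s^2)*x*N))
        = (P - c*P)*((P - x)*(x - c*P))
          + (P - x) * ((|P - N| * c + (P+N)*s)^2 - ((c*P)^2 + N^2 - 2*(c^2-s^2)*(c*P)*N))
          + (x - c*P) * ((|P - N| * c + (P+N)*s)^2 - (P^2 + N^2 - 2*(c^2-s^2)*P*N)) := by
      ring
    have hnn : 0 ≤ (P - c*P) * ((|P - N| * c + (P+N)*s)^2 - (x^2 + N^2 - 2*(c^2-s^2)*x*N)) := by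
      rw [chord]
      have u1 : 0 ≤ (P - c*P)*((P - x)*(x - c*P)) :=
        mul_nonneg (by linarith) (mul_nonneg (by linarith) (by linarith))
      have u2 : 0 ≤ (P - x) * ((|P - N| * c + (P+N)*s)^2 - ((c*P)^2 + N^2 - 2*(c^2-s^2)*(c*P)*N)) :=
        mul_nonneg (by linarith) (by linarith)
      have u3 : 0 ≤ (x - c*P) * ((|P - N| * c + (P+N)*s)^2 - (P^2 + N^2 - 2*(c^2-s^2)*P*N)) :=
        mul_nonneg (by linarith) (by linarith)
      linarith
    by_contra hcon
    push_neg at hcon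
    have : (P - c*P) * ((|P - N| * c + (P+N)*s)^2 - (x^2 + N^2 - 2*(c^2-s^2)*x*N)) < 0 :=
      mul_neg_of_pos_of_neg (by linarith) (by linarith)
    linarith

lemma sqrtfacts (c s x : ℝ) (hc : 0 ≤ c) (hs : 0 ≤ s) (h1 : c^2+s^2 = 1)
    (p : ℂ) (hx : ‖p‖ = x) (hA0 : 0 ≤ p.re) (him : c * |p.im| ≤ s * p.re) :
    c * x ≤ p.re ∧ |p.im| ≤ s * x := by
  have hx2 : p.re^2 + p.im^2 = x^2 := by
    rw [← hx, Complex.sq_norm, Complex.normSq_apply]; ring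
  have hx0 : 0 ≤ x := hx ▸ norm_nonneg p
  have hsq : c^2 * p.im^2 ≤ s^2 * p.re^2 := by
    have h2 := mul_self_le_mul_self (by positivity) him
    calc c^2 * p.im^2 = (c * |p.im|) * (c * |p.im|) := by
          rw [show (c*|p.im|)*(c*|p.im|) = c^2*|p.im|^2 by ring, sq_abs]
      _ ≤ (s * p.re) * (s * p.re) := h2
      _ = s^2 * p.re^2 := by ring
  constructor
  · nlinarith [sq_nonneg p.im, sq_nonneg (p.re - c*x), sq_nonneg (p.re + c*x)]
  · nlinarith [sq_abs p.im, abs_nonneg p.im, mul_nonneg hs hx0,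
      add_nonneg (abs_nonneg p.im) (mul_nonneg hs hx0), sq_nonneg (|p.im| - s*x)]

set_option maxHeartbeats 1000000 in
lemma sec (c s P : ℝ) (hc : 0 ≤ c) (hs : 0 ≤ s) (h1 : c^2+s^2 = 1)
    (p m : ℂ) (hxP : ‖p‖ ≤ P)
    (hpA : c * P ≤ p.re) (hA0 : 0 ≤ p.re) (hpim : c * |p.im| ≤ s * p.re)
    (hE0 : 0 ≤ m.re) (hmim : c * |m.im| ≤ s * m.re) :
    ‖p - m‖ ≤ |P - ‖m‖| * c + (P + ‖m‖) * s := by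
  set x := ‖p‖ with hxdef
  set N := ‖m‖ with hNdef
  obtain ⟨hpx, hpi⟩ := sqrtfacts c s x hc hs h1 p rfl hA0 hpim
  obtain ⟨hmx, hmi⟩ := sqrtfacts c s N hc hs h1 m rfl hE0 hmim
  have hx0 : 0 ≤ x := norm_nonneg p
  have hN0 : 0 ≤ N := norm_nonneg m
  have hAx : p.re ≤ x := Complex.re_le_norm p
  have hEN : m.re ≤ N := Complex.re_le_norm m
  have hx2 : p.re^2 + p.im^2 = x^2 := by
    rw [hxdef, Complex.sq_norm, Complex.normSq_apply]; ring
  have hN2 : m.re^2 + m.im^2 = N^2 := by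
    rw [hNdef, Complex.sq_norm, Complex.normSq_apply]; ring
  -- Step 1 : inner product lower bound
  have step1 : (c^2 - s^2) * x * N ≤ p.re * m.re + p.im * m.im := by
    have hAE : c*x * (c*N) ≤ p.re * m.re :=
      mul_le_mul hpx hmx (by positivity) hA0
    have hBF : -(|p.im| * |m.im|) ≤ p.im * m.im := by
      rw [← abs_mul]; exact neg_abs_le _
    have hBFu : |p.im| * |m.im| ≤ (s*x) * (s*N) :=
      mul_le_mul hpi hmi (abs_nonneg _) (by positivity)
    nlinarith
  -- Step 2 : squared bound
  have hP0 : 0 ≤ P := le_trans hx0 hxP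
  have hcB := claimB c s P N x hc hs h1 hP0 hN0 (le_trans hpA hAx) hxP
  have habs2 : ‖p - m‖^2 = (p.re - m.re)^2 + (p.im - m.im)^2 := by
    rw [Complex.sq_norm, Complex.normSq_apply, Complex.sub_re, Complex.sub_im]; ring
  have hsq : ‖p - m‖^2 ≤ (|P - N| * c + (P + N) * s)^2 := by
    rw [habs2]; nlinarith [step1, hcB, hx2, hN2]
  have hR0 : 0 ≤ |P - N| * c + (P + N) * s := by positivity
  have h2 := Real.sqrt_le_sqrt hsq
  rwa [Real.sqrt_sq (norm_nonneg _), Real.sqrt_sq hR0] at h2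


lemma comp (α β : ℝ) (hα : α ≤ Real.pi/2) (hα0 : 0 ≤ α) (w : ℂ)
    (hw : w = 0 ∨ |Complex.arg w - β| ≤ α) :
    Real.cos α * ‖w‖ ≤ (Complex.exp (-(β:ℂ) * Complex.I) * w).re ∧
    0 ≤ (Complex.exp (-(β:ℂ) * Complex.I) * w).re ∧
    Real.cos α * |(Complex.exp (-(β:ℂ) * Complex.I) * w).im| ≤
      Real.sin α * (Complex.exp (-(β:ℂ) * Complex.I) * w).re := by
  have hpi := Real.pi_pos
  have hcα : 0 ≤ Real.cos α := Real.cos_nonneg_of_mem_Icc ⟨by linarith, hα⟩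
  have hsα : 0 ≤ Real.sin α := Real.sin_nonneg_of_nonneg_of_le_pi hα0 (by linarith)
  rcases hw with h0 | hsec
  · simp [h0, hcα, hsα]
  · set θ : ℝ := Complex.arg w - β with hθ
    have hwe : Complex.exp (-(β:ℂ) * Complex.I) * w
        = (‖w‖ : ℂ) * Complex.exp ((θ:ℂ) * Complex.I) := by
      conv_lhs => rw [← Complex.norm_mul_exp_arg_mul_I w]
      rw [mul_left_comm, ← Complex.exp_add]
      congr 1
      push_cast [hθ]
      ring
    have hre : (Complex.exp (-(β:ℂ) * Complex.I) * w).re = ‖w‖ * Real.cos θ := by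
      rw [hwe, Complex.re_ofReal_mul, Complex.exp_ofReal_mul_I_re]
    have him : (Complex.exp (-(β:ℂ) * Complex.I) * w).im = ‖w‖ * Real.sin θ := by
      rw [hwe, Complex.im_ofReal_mul, Complex.exp_ofReal_mul_I_im]
    have habs : |θ| ≤ α := hsec
    have hct : Real.cos α ≤ Real.cos θ := by
      rw [← Real.cos_abs θ]
      exact Real.cos_le_cos_of_nonneg_of_le_pi (abs_nonneg _) (by linarith) habs
    have hw0 : 0 ≤ ‖w‖ := norm_nonneg w
    have hsinabs : |Real.sin θ| = Real.sin |θ| := by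
      rcases le_or_gt 0 θ with h | h
      · rw [abs_of_nonneg h, abs_of_nonneg (Real.sin_nonneg_of_nonneg_of_le_pi h (by
          have := le_trans (le_abs_self θ) habs; linarith))]
      · have hsl : Real.sin θ ≤ 0 :=
          Real.sin_nonpos_of_nonpos_of_neg_pi_le (by
            have := le_trans (neg_le_abs θ) habs; linarith) (by
            have := le_trans (neg_le_abs θ) habs; linarith)
        rw [abs_of_neg h, abs_of_nonpos hsl, Real.sin_neg]
    have hkey : Real.cos α * Real.sin |θ| ≤ Real.sin α * Real.cos |θ| := by
      have h1 : 0 ≤ Real.sin (α - |θ|) :=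
        Real.sin_nonneg_of_nonneg_of_le_pi (by linarith [abs_nonneg θ, habs]) (by linarith [abs_nonneg θ])
      rw [Real.sin_sub] at h1
      linarith
    refine ⟨?_, ?_, ?_⟩
    · rw [hre, mul_comm (Real.cos α)]
      exact mul_le_mul_of_nonneg_left hct hw0
    · rw [hre]; exact mul_nonneg hw0 (le_trans hcα hct)
    · rw [hre, him, abs_mul, abs_of_nonneg hw0, hsinabs, ← Real.cos_abs θ]
      calc Real.cos α * (‖w‖ * Real.sin |θ|)
          = ‖w‖ * (Real.cos α * Real.sin |θ|) := by ring
        _ ≤ ‖w‖ * (Real.sin α * Real.cos |θ|) := by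
            exact mul_le_mul_of_nonneg_left hkey hw0
        _ = Real.sin α * (‖w‖ * Real.cos |θ|) := by ring


set_option maxHeartbeats 2000000 in
/-- Theorem 1.5 (Rather–Gulzar–Mattoo). -/
theorem thm15 (n k : ℕ) (a : ℤ → ℂ) (han : a n ≠ 0) (hk : k ≤ n)
    (α β : ℝ) (hα : α ≤ Real.pi / 2)
    (harg : ∀ j : ℤ, 0 ≤ j → j ≤ n → |Complex.arg (a j) - β| ≤ α)
    (hm2 : a (-2) = 0) (hm1 : a (-1) = 0) (htop : a (n + 1) = 0)
    (t1 t2 : ℝ) (ht : t1 > t2) (ht2 : 0 ≤ t2)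
    (hc1 : ∀ r : ℤ, 1 ≤ r → r ≤ k + 1 →
      0 ≤ t1 * t2 * ‖a r‖ + (t1 - t2) * ‖a (r - 1)‖ -
        ‖a (r - 2)‖)
    (hc2 : ∀ r : ℤ, k + 2 ≤ r → r ≤ n + 1 →
      t1 * t2 * ‖a r‖ + (t1 - t2) * ‖a (r - 1)‖ -
        ‖a (r - 2)‖ ≤ 0)
    (z : ℂ) (hz : ∑ j ∈ Finset.range (n + 1), a j * z ^ j = 0) :
    ‖z‖ ≤
      t1 * (((2 * ‖a k‖ + 2 * t2 * ‖a (k + 1)‖) /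
          (t1 ^ (n - k) * ‖a n‖) - 1) * Real.cos α + Real.sin α)
      + (2 * Real.sin α / ‖a n‖) *
          ∑ j ∈ Finset.range n, ‖a j‖ / t1 ^ (n - j - 1) := by
  have ht1 : 0 < t1 := lt_of_le_of_lt ht2 ht
  set c := Real.cos α with hcdef
  set s := Real.sin α with hsdef
  set b : ℤ → ℝ := fun j => ‖a j‖ with hbdef
  have hα0 : 0 ≤ α := le_trans (abs_nonneg _) (harg 0 le_rfl (by exact_mod_cast Nat.zero_le n))
  have hpi := Real.pi_pos
  have hcα : 0 ≤ c := Real.cos_nonneg_of_mem_Icc ⟨by linarith, hα⟩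
  have hsα : 0 ≤ s := Real.sin_nonneg_of_nonneg_of_le_pi hα0 (by linarith)
  have h1 : c^2 + s^2 = 1 := by rw [hcdef, hsdef]; rw [add_comm]; exact Real.sin_sq_add_cos_sq α
  have hcs1 : 1 ≤ c + s := by nlinarith
  have hbn : 0 < b n := by simpa [hbdef] using (norm_pos_iff.mpr han)
  have hb0 : ∀ j : ℤ, 0 ≤ b j := fun j => norm_nonneg _
  have hbm1 : b (-1) = 0 := by simp [hbdef, hm1]
  have hbm2 : b (-2) = 0 := by simp [hbdef, hm2]
  have hbtop : b (n+1) = 0 := by simp [hbdef, htop]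
  -- the chain inequality: t1^(n-k) * b n ≤ t2 * b (k+1) + b k
  have chain : t1^(n-k) * b n ≤ t2 * b (↑k+1) + b k := by
    have hstep : ∀ i : ℕ, i ≤ n - k →
        t1^i * b n ≤ t2 * b ((n:ℤ) - i + 1) + b ((n:ℤ) - i) := by
      intro i
      induction i with
      | zero =>
          intro _
          simp only [pow_zero, one_mul, Nat.cast_zero, sub_zero]
          rw [show (n:ℤ) + 1 = ((n:ℤ)+1) by ring, hbtop]
          simp
      | succ i ih =>
          intro hle
          have h1' := ih (by omega)
          have h2 := hc2 ((n:ℤ) - i + 1) (by omega) (by omega)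
          have e1 : (n:ℤ) - i + 1 - 1 = (n:ℤ) - i := by ring
          have e2 : (n:ℤ) - i + 1 - 2 = (n:ℤ) - (i+1) := by ring
          have e3 : (n:ℤ) - (i+1:ℕ) + 1 = (n:ℤ) - i := by push_cast; ring
          have e4 : ((i+1:ℕ):ℤ) = (i:ℤ)+1 := by push_cast; ring
          rw [e3, e4]
          rw [e1, e2] at h2
          have hmul := mul_le_mul_of_nonneg_left h1' ht1.le
          calc t1^(i+1) * b n = t1 * (t1^i * b n) := by ring
            _ ≤ t1 * (t2 * b ((n:ℤ) - i + 1) + b ((n:ℤ) - i)) := hmul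
            _ ≤ t2 * b ((n:ℤ) - i) + b ((n:ℤ) - (i+1)) := by
                have hb2 := hb0 ((n:ℤ) - i + 1)
                nlinarith [hb0 ((n:ℤ) - i)]
    have := hstep (n-k) le_rfl
    have ecast : (n:ℤ) - ((n-k : ℕ):ℤ) = (k:ℤ) := by omega
    rw [ecast] at this
    exact this
  -- RHS ≥ t1
  have hRHS : t1 ≤ t1 * (((2 * b k + 2 * t2 * b (↑k + 1)) /
          (t1 ^ (n - k) * b n) - 1) * c + s)
      + (2 * s / b n) * ∑ j ∈ Finset.range n, b j / t1 ^ (n - j - 1) := by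
    have hden : 0 < t1^(n-k) * b n := by positivity
    have hX : 2 ≤ (2 * b k + 2 * t2 * b (↑k + 1)) / (t1 ^ (n - k) * b n) := by
      rw [le_div_iff₀ hden]
      nlinarith [chain]
    have hsum0 : 0 ≤ (2 * s / b n) * ∑ j ∈ Finset.range n, b j / t1 ^ (n - j - 1) := by
      apply mul_nonneg (by positivity)
      apply Finset.sum_nonneg
      intro j _
      exact div_nonneg (hb0 j) (by positivity)
    have h2' : 1 ≤ ((2 * b k + 2 * t2 * b (↑k + 1)) / (t1 ^ (n - k) * b n) - 1) * c + s := by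
      nlinarith
    nlinarith [mul_le_mul_of_nonneg_left h2' ht1.le]
  rcases le_or_gt (‖z‖) t1 with hzle | hzgt
  · exact le_trans hzle hRHS
  -- main case
  set C : ℕ → ℂ := fun r => ((t1*t2 : ℝ):ℂ) * a r + ((t1-t2:ℝ):ℂ) * a ((r:ℤ)-1) - a ((r:ℤ)-2) with hCdef
  have key : ∑ r ∈ Finset.range (n+2), C r * z^r = a n * z^(n+2) := by
    have htop' : a ((n+1 : ℕ) : ℤ) = 0 := by push_cast; exact htop
    have e0 : ∑ r ∈ Finset.range (n+2), ((t1*t2:ℝ):ℂ) * a r * z^r = 0 := by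
      rw [Finset.sum_range_succ, htop']
      have : ∑ r ∈ Finset.range (n+1), ((t1*t2:ℝ):ℂ) * a r * z^r
          = ((t1*t2:ℝ):ℂ) * ∑ r ∈ Finset.range (n+1), a r * z^r := by
        rw [Finset.mul_sum]
        exact Finset.sum_congr rfl (fun r _ => by ring)
      rw [this, hz]
      ring
    have e1 : ∑ r ∈ Finset.range (n+2), ((t1-t2:ℝ):ℂ) * a ((r:ℤ)-1) * z^r = 0 := by
      rw [Finset.sum_range_succ']
      have hf0 : ((t1-t2:ℝ):ℂ) * a ((0:ℕ)-1:ℤ) * z^(0:ℕ) = 0 := by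
        norm_num [hm1]
      rw [hf0, add_zero]
      have : ∑ i ∈ Finset.range (n+1), ((t1-t2:ℝ):ℂ) * a ((i+1:ℕ)-1:ℤ) * z^(i+1)
          = (((t1-t2:ℝ):ℂ) * z) * ∑ i ∈ Finset.range (n+1), a i * z^i := by
        rw [Finset.mul_sum]
        apply Finset.sum_congr rfl
        intro i _
        have : ((i+1:ℕ):ℤ) - 1 = (i:ℤ) := by push_cast; ring
        rw [this]
        ring
      rw [this, hz]
      ring
    have e2 : ∑ r ∈ Finset.range (n+2), a ((r:ℤ)-2) * z^r = -(a n * z^(n+2)) := by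
      rw [Finset.sum_range_succ']
      have hf0 : a ((0:ℕ)-2:ℤ) * z^(0:ℕ) = 0 := by norm_num [hm2]
      rw [hf0, add_zero]
      rw [Finset.sum_range_succ']
      have hf1 : a (((0:ℕ)+1:ℕ)-2:ℤ) * z^((0:ℕ)+1) = 0 := by norm_num [hm1]
      rw [hf1, add_zero]
      have : ∑ i ∈ Finset.range n, a ((i+1+1:ℕ)-2:ℤ) * z^(i+1+1)
          = (z^2) * ∑ i ∈ Finset.range n, a i * z^i := by
        rw [Finset.mul_sum]
        apply Finset.sum_congr rfl
        intro i _
        have : ((i+1+1:ℕ):ℤ) - 2 = (i:ℤ) := by push_cast; ring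
        rw [this]
        ring
      rw [this]
      have hzn : ∑ i ∈ Finset.range n, a i * z^i = -(a n * z^n) := by
        have := hz
        rw [Finset.sum_range_succ] at this
        linear_combination this
      rw [hzn]
      ring
    calc ∑ r ∈ Finset.range (n+2), C r * z^r
        = ∑ r ∈ Finset.range (n+2), (((t1*t2:ℝ):ℂ) * a r * z^r
            + ((t1-t2:ℝ):ℂ) * a ((r:ℤ)-1) * z^r - a ((r:ℤ)-2) * z^r) := by
          apply Finset.sum_congr rfl
          intro r _
          rw [hCdef]
          ring
      _ = (∑ r ∈ Finset.range (n+2), ((t1*t2:ℝ):ℂ) * a r * z^r)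
          + (∑ r ∈ Finset.range (n+2), ((t1-t2:ℝ):ℂ) * a ((r:ℤ)-1) * z^r)
          - ∑ r ∈ Finset.range (n+2), a ((r:ℤ)-2) * z^r := by
          rw [← Finset.sum_add_distrib, ← Finset.sum_sub_distrib]
      _ = a n * z^(n+2) := by rw [e0, e1, e2]; ring
  set d : ℕ → ℝ := fun r => t1*t2*b r + (t1-t2)*b ((r:ℤ)-1) - b ((r:ℤ)-2) with hddef
  have hCb : ∀ r ∈ Finset.range (n+2), ‖C r‖
      ≤ |d r| * c + (t1*t2*b r + (t1-t2)*b ((r:ℤ)-1) + b ((r:ℤ)-2)) * s := by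
    intro r hr
    rw [Finset.mem_range] at hr
    set E : ℂ := Complex.exp (-(β:ℂ) * Complex.I) with hE
    have hEabs : ‖E‖ = 1 := by
      rw [hE, Complex.norm_exp]
      simp
    have hcomp : ∀ j : ℤ, -2 ≤ j → j ≤ (n:ℤ)+1 →
        (c * b j ≤ (E * a j).re ∧ 0 ≤ (E * a j).re ∧
          c * |(E * a j).im| ≤ s * (E * a j).re) := by
      intro j hj1 hj2
      apply comp α β hα hα0
      rcases lt_or_ge j 0 with h | h
      · left
        have : j = -1 ∨ j = -2 := by omega
        rcases this with h'' | h'' <;> rw [h'']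
        · exact hm1
        · exact hm2
      · rcases lt_or_ge j ((n:ℤ)+1) with h' | h'
        · right
          exact harg j h (by omega)
        · left
          have : j = (n:ℤ)+1 := le_antisymm hj2 h'
          rw [this]
          exact htop
    have ht1t2 : 0 ≤ t1*t2 := mul_nonneg ht1.le ht2
    have ht12 : 0 ≤ t1-t2 := by linarith
    set w1 : ℂ := E * a r with hw1
    set w2 : ℂ := E * a ((r:ℤ)-1) with hw2
    set w3 : ℂ := E * a ((r:ℤ)-2) with hw3
    obtain ⟨hw1a, hw1b, hw1c⟩ := hcomp r (by omega) (by omega)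
    obtain ⟨hw2a, hw2b, hw2c⟩ := hcomp ((r:ℤ)-1) (by omega) (by omega)
    obtain ⟨hw3a, hw3b, hw3c⟩ := hcomp ((r:ℤ)-2) (by omega) (by omega)
    set p : ℂ := ((t1*t2:ℝ):ℂ) * w1 + ((t1-t2:ℝ):ℂ) * w2 with hp
    have hpe : E * C r = p - w3 := by
      rw [hp, hCdef, hw1, hw2, hw3]
      ring
    have habsC : ‖C r‖ = ‖p - w3‖ := by
      rw [← hpe, norm_mul, hEabs, one_mul]
    have habsw1 : ‖w1‖ = b r := by
      rw [hw1, norm_mul, hEabs, one_mul]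
    have habsw2 : ‖w2‖ = b ((r:ℤ)-1) := by
      rw [hw2, norm_mul, hEabs, one_mul]
    have habsw3 : ‖w3‖ = b ((r:ℤ)-2) := by
      rw [hw3, norm_mul, hEabs, one_mul]
    have hpre : p.re = (t1*t2) * w1.re + (t1-t2) * w2.re := by
      rw [hp]
      simp [Complex.add_re, Complex.re_ofReal_mul]
    have hpim : p.im = (t1*t2) * w1.im + (t1-t2) * w2.im := by
      rw [hp]
      simp [Complex.add_im, Complex.im_ofReal_mul]
    set P : ℝ := t1*t2*b r + (t1-t2)*b ((r:ℤ)-1) with hP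
    have habsp : ‖p‖ ≤ P := by
      rw [hp, hP]
      calc ‖((t1*t2:ℝ):ℂ) * w1 + ((t1-t2:ℝ):ℂ) * w2‖
          ≤ ‖((t1*t2:ℝ):ℂ) * w1‖ + ‖((t1-t2:ℝ):ℂ) * w2‖ :=
            norm_add_le _ _
        _ = (t1*t2) * ‖w1‖ + (t1-t2) * ‖w2‖ := by
            rw [norm_mul (((t1*t2:ℝ):ℂ)) w1,
              norm_mul (((t1-t2:ℝ):ℂ)) w2]
            simp only [Complex.norm_real, Real.norm_eq_abs]
            rw [abs_of_nonneg ht1t2, abs_of_nonneg ht12]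
        _ = t1*t2*b r + (t1-t2)*b ((r:ℤ)-1) := by rw [habsw1, habsw2]
    have hpA : c * P ≤ p.re := by
      rw [hpre, hP]
      have h1' := mul_le_mul_of_nonneg_left hw1a ht1t2
      have h2' := mul_le_mul_of_nonneg_left hw2a ht12
      nlinarith
    have hA0 : 0 ≤ p.re := by
      rw [hpre]
      have := mul_nonneg ht1t2 hw1b
      have := mul_nonneg ht12 hw2b
      linarith
    have hpimb : c * |p.im| ≤ s * p.re := by
      rw [hpre, hpim]
      have habs' : |(t1*t2) * w1.im + (t1-t2) * w2.im|
          ≤ (t1*t2) * |w1.im| + (t1-t2) * |w2.im| := by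
        calc |(t1*t2) * w1.im + (t1-t2) * w2.im|
            ≤ |(t1*t2) * w1.im| + |(t1-t2) * w2.im| := abs_add_le _ _
          _ = (t1*t2) * |w1.im| + (t1-t2) * |w2.im| := by
              rw [abs_mul (t1*t2) w1.im, abs_mul (t1-t2) w2.im,
                abs_of_nonneg ht1t2, abs_of_nonneg ht12]
      have h1' := mul_le_mul_of_nonneg_left hw1c ht1t2
      have h2' := mul_le_mul_of_nonneg_left hw2c ht12
      have hc' := mul_le_mul_of_nonneg_left habs' hcα
      nlinarith
    have hsec := sec c s P hcα hsα h1 p w3 habsp hpA hA0 hpimb hw3b hw3c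
    rw [habsw3] at hsec
    rw [habsC]
    have hde : d r = P - b ((r:ℤ)-2) := by rw [hP]
    have hdabs : |d r| = |P - b ((r:ℤ)-2)| := by rw [hde]
    rw [hdabs]
    calc ‖p - w3‖
        ≤ |P - b ((r:ℤ)-2)| * c + (P + b ((r:ℤ)-2)) * s := hsec
      _ = |P - b ((r:ℤ)-2)| * c + (t1*t2*b r + (t1-t2)*b ((r:ℤ)-1) + b ((r:ℤ)-2)) * s := by
          rw [hP]
  have eval1 : ∑ r ∈ Finset.range (n+2), |d r| * t1^r
      = 2*t1^(k+2)*(t2*b (↑k+1) + b k) - t1^(n+2)*b n := by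
    set g : ℕ → ℝ := fun r => t1^r * (t2 * b ((r:ℤ)-1) + b ((r:ℤ)-2)) with hgdef
    have htel : ∀ r : ℕ, d r * t1^r = g (r+1) - g r := by
      intro r
      rw [hgdef, hddef]
      simp only
      have e1 : ((r+1:ℕ):ℤ) - 1 = (r:ℤ) := by push_cast; ring
      have e2 : ((r+1:ℕ):ℤ) - 2 = (r:ℤ) - 1 := by push_cast; ring
      rw [e1, e2]
      ring
    have hg0 : g 0 = 0 := by
      rw [hgdef]
      norm_num [hbm1, hbm2]
    have hdpos : ∀ r ∈ Finset.range (k+2), |d r| = d r := by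
      intro r hr
      rw [Finset.mem_range] at hr
      apply abs_of_nonneg
      rcases Nat.eq_zero_or_pos r with h0 | hpos
      · subst h0
        rw [hddef]
        simp only [Nat.cast_zero, zero_sub]
        rw [hbm1, hbm2]
        nlinarith [mul_nonneg (mul_nonneg ht1.le ht2) (hb0 0)]
      · have := hc1 r (by exact_mod_cast hpos) (by
          have : r ≤ k+1 := by omega
          exact_mod_cast this)
        rw [hddef]
        exact this
    have hdneg : ∀ r ∈ Finset.Ico (k+2) (n+2), |d r| = -(d r) := by
      intro r hr
      rw [Finset.mem_Ico] at hr
      apply abs_of_nonpos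
      have := hc2 r (by exact_mod_cast hr.1) (by
        have : r ≤ n+1 := by omega
        exact_mod_cast this)
      rw [hddef]
      exact this
    have hsplit : ∑ r ∈ Finset.range (n+2), |d r| * t1^r
        = (∑ r ∈ Finset.range (k+2), |d r| * t1^r)
          + ∑ r ∈ Finset.Ico (k+2) (n+2), |d r| * t1^r := by
      rw [Finset.sum_range_add_sum_Ico _ (by omega : k+2 ≤ n+2)]
    have htel1 : ∑ r ∈ Finset.range (k+2), d r * t1^r = g (k+2) - g 0 := by
      calc ∑ r ∈ Finset.range (k+2), d r * t1^r
          = ∑ r ∈ Finset.range (k+2), (g (r+1) - g r) := Finset.sum_congr rfl (fun r _ => htel r)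
        _ = g (k+2) - g 0 := Finset.sum_range_sub g (k+2)
    have htel2 : ∑ r ∈ Finset.range (n+2), d r * t1^r = g (n+2) - g 0 := by
      calc ∑ r ∈ Finset.range (n+2), d r * t1^r
          = ∑ r ∈ Finset.range (n+2), (g (r+1) - g r) := Finset.sum_congr rfl (fun r _ => htel r)
        _ = g (n+2) - g 0 := Finset.sum_range_sub g (n+2)
    have hIco : ∑ r ∈ Finset.Ico (k+2) (n+2), d r * t1^r = g (n+2) - g (k+2) := by
      have := Finset.sum_range_add_sum_Ico (fun r => d r * t1^r) (by omega : k+2 ≤ n+2)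
      rw [htel1, htel2] at this
      linarith
    have h1s : ∑ r ∈ Finset.range (k+2), |d r| * t1^r
        = ∑ r ∈ Finset.range (k+2), d r * t1^r :=
      Finset.sum_congr rfl (fun r hr => by rw [hdpos r hr])
    have h2s : ∑ r ∈ Finset.Ico (k+2) (n+2), |d r| * t1^r
        = -∑ r ∈ Finset.Ico (k+2) (n+2), d r * t1^r := by
      rw [← Finset.sum_neg_distrib]
      exact Finset.sum_congr rfl (fun r hr => by rw [hdneg r hr]; ring)
    rw [hsplit, h1s, h2s, htel1, hIco, hg0]
    have hgk : g (k+2) = t1^(k+2) * (t2 * b (↑k+1) + b k) := by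
      rw [hgdef]
      simp only
      have e1 : ((k+2:ℕ):ℤ) - 1 = (k:ℤ)+1 := by push_cast; ring
      have e2 : ((k+2:ℕ):ℤ) - 2 = (k:ℤ) := by push_cast; ring
      rw [e1, e2]
    have hgn : g (n+2) = t1^(n+2) * b n := by
      rw [hgdef]
      simp only
      have e1 : ((n+2:ℕ):ℤ) - 1 = (n:ℤ)+1 := by push_cast; ring
      have e2 : ((n+2:ℕ):ℤ) - 2 = (n:ℤ) := by push_cast; ring
      rw [e1, e2, hbtop]
      ring
    rw [hgk, hgn]
    ring
  have eval2 : ∑ r ∈ Finset.range (n+2), (t1*t2*b r + (t1-t2)*b ((r:ℤ)-1) + b ((r:ℤ)-2)) * t1^r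
      = t1^(n+2)*b n + 2*∑ j ∈ Finset.range n, b j * t1^(j+2) := by
    have hsplit3 : ∀ r : ℕ, (t1*t2*b r + (t1-t2)*b ((r:ℤ)-1) + b ((r:ℤ)-2)) * t1^r
        = t1*t2*b r * t1^r + (t1-t2)*b ((r:ℤ)-1) * t1^r + b ((r:ℤ)-2) * t1^r := fun r => by ring
    rw [Finset.sum_congr rfl (fun r _ => hsplit3 r), Finset.sum_add_distrib, Finset.sum_add_distrib]
    have hTa : ∑ r ∈ Finset.range (n+2), t1*t2*b r * t1^r
        = ∑ r ∈ Finset.range (n+1), t1*t2*b r * t1^r := by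
      rw [Finset.sum_range_succ]
      have : b ((n+1:ℕ):ℤ) = 0 := by push_cast; exact hbtop
      rw [this]
      ring
    have hTb : ∑ r ∈ Finset.range (n+2), (t1-t2)*b ((r:ℤ)-1) * t1^r
        = ∑ i ∈ Finset.range (n+1), (t1-t2)*b i * t1^(i+1) := by
      rw [Finset.sum_range_succ']
      have hf0 : (t1-t2)*b ((0:ℕ)-1:ℤ) * t1^(0:ℕ) = 0 := by norm_num [hbm1]
      rw [hf0, add_zero]
      apply Finset.sum_congr rfl
      intro i _
      have : ((i+1:ℕ):ℤ) - 1 = (i:ℤ) := by push_cast; ring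
      rw [this]
    have hTc : ∑ r ∈ Finset.range (n+2), b ((r:ℤ)-2) * t1^r
        = ∑ i ∈ Finset.range n, b i * t1^(i+2) := by
      rw [Finset.sum_range_succ']
      have hf0 : b ((0:ℕ)-2:ℤ) * t1^(0:ℕ) = 0 := by norm_num [hbm2]
      rw [hf0, add_zero, Finset.sum_range_succ']
      have hf1 : b (((0:ℕ)+1:ℕ)-2:ℤ) * t1^((0:ℕ)+1) = 0 := by norm_num [hbm1]
      rw [hf1, add_zero]
      apply Finset.sum_congr rfl
      intro i _
      have : ((i+1+1:ℕ):ℤ) - 2 = (i:ℤ) := by push_cast; ring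
      rw [this]
    rw [hTa, hTb, hTc]
    have hcomb : ∑ r ∈ Finset.range (n+1), t1*t2*b r * t1^r
        + ∑ i ∈ Finset.range (n+1), (t1-t2)*b i * t1^(i+1)
        = ∑ i ∈ Finset.range (n+1), b i * t1^(i+2) := by
      rw [← Finset.sum_add_distrib]
      apply Finset.sum_congr rfl
      intro i _
      ring
    rw [hcomb, Finset.sum_range_succ]
    ring
  -- sum bound
  have hS : ∑ r ∈ Finset.range (n+2), ‖C r‖ * t1^r
      ≤ c * (2*t1^(k+2)*(t2*b (↑k+1) + b k) - t1^(n+2)*b n)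
        + s * (t1^(n+2)*b n + 2*∑ j ∈ Finset.range n, b j * t1^(j+2)) := by
    rw [← eval1, ← eval2]
    calc ∑ r ∈ Finset.range (n+2), ‖C r‖ * t1^r
        ≤ ∑ r ∈ Finset.range (n+2),
            (|d r| * c + (t1*t2*b r + (t1-t2)*b ((r:ℤ)-1) + b ((r:ℤ)-2)) * s) * t1^r := by
          apply Finset.sum_le_sum
          intro r hr
          exact mul_le_mul_of_nonneg_right (hCb r hr) (by positivity)
      _ = c * ∑ r ∈ Finset.range (n+2), |d r| * t1^r
          + s * ∑ r ∈ Finset.range (n+2), (t1*t2*b r + (t1-t2)*b ((r:ℤ)-1) + b ((r:ℤ)-2)) * t1^r := by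
          rw [Finset.mul_sum, Finset.mul_sum, ← Finset.sum_add_distrib]
          apply Finset.sum_congr rfl
          intro r _
          ring
  -- from key : |a n| |z|^{n+2} ≤ sum
  have habs : b n * ‖z‖^(n+2) ≤ ∑ r ∈ Finset.range (n+2), ‖C r‖ * ‖z‖^r := by
    have h1' : b n * ‖z‖^(n+2) = ‖a n * z^(n+2)‖ := by
      rw [norm_mul, norm_pow]
    rw [h1', ← key]
    calc ‖∑ r ∈ Finset.range (n+2), C r * z^r‖
        ≤ ∑ r ∈ Finset.range (n+2), ‖C r * z^r‖ :=
          norm_sum_le _ _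
      _ = ∑ r ∈ Finset.range (n+2), ‖C r‖ * ‖z‖^r := by
          apply Finset.sum_congr rfl
          intro r _
          rw [norm_mul, norm_pow]
  have hzpow : b n * ‖z‖ * t1^(n+1) ≤ ∑ r ∈ Finset.range (n+2), ‖C r‖ * t1^r := by
    have hz0 : 0 < ‖z‖ := lt_trans ht1 hzgt
    have hper : ∀ r ∈ Finset.range (n+2),
        ‖C r‖ * ‖z‖^r * t1^(n+1)
          ≤ ‖C r‖ * t1^r * ‖z‖^(n+1) := by
      intro r hr
      rw [Finset.mem_range] at hr
      have hrr : r ≤ n+1 := by omega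
      have hp1 : t1^(n+1) = t1^r * t1^(n+1-r) := by
        rw [← pow_add]
        congr 1
        omega
      have hp2 : ‖z‖^(n+1) = ‖z‖^r * ‖z‖^(n+1-r) := by
        rw [← pow_add]
        congr 1
        omega
      rw [hp1, hp2]
      have hle : t1^(n+1-r) ≤ ‖z‖^(n+1-r) :=
        pow_le_pow_left₀ ht1.le hzgt.le _
      have hCn : 0 ≤ ‖C r‖ := norm_nonneg _
      calc ‖C r‖ * ‖z‖^r * (t1^r * t1^(n+1-r))
          = (‖C r‖ * ‖z‖^r * t1^r) * t1^(n+1-r) := by ring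
        _ ≤ (‖C r‖ * ‖z‖^r * t1^r) * ‖z‖^(n+1-r) := by
            apply mul_le_mul_of_nonneg_left hle
            positivity
        _ = ‖C r‖ * (t1^r * ‖z‖^r) * ‖z‖^(n+1-r) := by ring
        _ = ‖C r‖ * t1^r * (‖z‖^r * ‖z‖^(n+1-r)) := by ring
    have hsum : (∑ r ∈ Finset.range (n+2), ‖C r‖ * ‖z‖^r) * t1^(n+1)
        ≤ (∑ r ∈ Finset.range (n+2), ‖C r‖ * t1^r) * ‖z‖^(n+1) := by
      rw [Finset.sum_mul, Finset.sum_mul]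
      exact Finset.sum_le_sum hper
    have hmul := mul_le_mul_of_nonneg_right habs (by positivity : (0:ℝ) ≤ t1^(n+1))
    have hchain2 : b n * ‖z‖^(n+2) * t1^(n+1)
        ≤ (∑ r ∈ Finset.range (n+2), ‖C r‖ * t1^r) * ‖z‖^(n+1) :=
      le_trans hmul hsum
    have hzpow2 : b n * ‖z‖^(n+2) * t1^(n+1)
        = (b n * ‖z‖ * t1^(n+1)) * ‖z‖^(n+1) := by
      rw [show n+2 = (n+1)+1 by ring, pow_succ]
      ring
    rw [hzpow2] at hchain2
    exact le_of_mul_le_mul_right hchain2 (by positivity)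
  -- final arithmetic
  have hsum12 : (∑ j ∈ Finset.range n, b j / t1^(n-j-1)) * t1^(n+1)
      = ∑ j ∈ Finset.range n, b j * t1^(j+2) := by
    rw [Finset.sum_mul]
    apply Finset.sum_congr rfl
    intro j hj
    rw [Finset.mem_range] at hj
    have hp : t1^(n-j-1) * t1^(j+2) = t1^(n+1) := by rw [← pow_add]; congr 1; omega
    field_simp
    linear_combination (-(b (j:ℤ))) * hp
  have hS1eq : (∑ j ∈ Finset.range n, b j / t1^(n-j-1))
      = (∑ j ∈ Finset.range n, b j * t1^(j+2)) / t1^(n+1) := by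
    rw [eq_div_iff (by positivity : (t1:ℝ)^(n+1) ≠ 0)]
    exact hsum12
  have hpow2 : t1^(n-k) * t1^k = t1^n := by rw [← pow_add]; congr 1; omega
  have EQ : (t1 * (((2 * b k + 2 * t2 * b (↑k + 1)) / (t1 ^ (n - k) * b n) - 1) * c + s)
        + 2 * s / b n * ∑ j ∈ Finset.range n, b j / t1 ^ (n - j - 1)) * (b n * t1^(n+1))
      = c * (2*t1^(k+2)*(t2*b (↑k+1) + b k) - t1^(n+2)*b n)
        + s * (t1^(n+2)*b n + 2*∑ j ∈ Finset.range n, b j * t1^(j+2)) := by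
    rw [hS1eq]
    field_simp
    linear_combination (-(2*b (k:ℤ) + 2*t2*b ((k:ℤ)+1)) * c * t1^2) * hpow2
  have hpos : (0:ℝ) < b n * t1^(n+1) := by positivity
  refine le_of_mul_le_mul_right ?_ hpos
  calc ‖z‖ * (b n * t1^(n+1))
      = b n * ‖z‖ * t1^(n+1) := by ring
    _ ≤ ∑ r ∈ Finset.range (n+2), ‖C r‖ * t1^r := hzpow
    _ ≤ c * (2*t1^(k+2)*(t2*b (↑k+1) + b k) - t1^(n+2)*b n)
        + s * (t1^(n+2)*b n + 2*∑ j ∈ Finset.range n, b j * t1^(j+2)) := hS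
    _ = (t1 * (((2 * b k + 2 * t2 * b (↑k + 1)) / (t1 ^ (n - k) * b n) - 1) * c + s)
        + 2 * s / b n * ∑ j ∈ Finset.range n, b j / t1 ^ (n - j - 1)) * (b n * t1^(n+1)) := EQ.symm
end

section
/- Let a_{n-1}, a_n be complex numbers with a_n ≠ 0, both satisfying |arg w − β| ≤ α ≤ π/2 for some real β, and let t_1 > t_2 ≥ 0. Then |a_{n-1}/a_n − (t_1 − t_2)| ≤ ( |a_{n-1}/a_n| − (t_1 − t_2) ) cos α + ( t_1 − t_2 + |a_{n-1}/a_n| ) sin α, provided the hypothesis (t_1 − t_2)|a_n| ≤ |a_{n-1}| holds. -/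
set_option maxHeartbeats 1000000 in
/-- Estimate from Lemma 2.1 with j = n+1, used in Remark 1.8 and Theorem 1.7. -/
theorem lemma21_top (an1 an : ℂ) (han : an ≠ 0)
    (α β : ℝ) (hα0 : 0 ≤ α) (hα : α ≤ Real.pi / 2)
    (ha : |Complex.arg an1 - β| ≤ α) (hb : |Complex.arg an - β| ≤ α)
    (t1 t2 : ℝ) (ht : t1 > t2) (ht2 : 0 ≤ t2)
    (hcond : (t1 - t2) * ‖an‖ ≤ ‖an1‖) :
    ‖an1 / an - ((t1 - t2 : ℝ) : ℂ)‖ ≤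
      (‖an1 / an‖ - (t1 - t2)) * Real.cos α
      + (t1 - t2 + ‖an1 / an‖) * Real.sin α := by
  have hanpos : 0 < ‖an‖ := norm_pos_iff.mpr han
  set t : ℝ := t1 - t2 with htdef
  have htpos : 0 < t := sub_pos.2 ht
  have han1 : an1 ≠ 0 := by
    intro h
    rw [h] at hcond
    simp only [norm_zero] at hcond
    nlinarith
  set q : ℂ := an1 / an with hq
  clear_value t q
  have hq0 : q ≠ 0 := hq ▸ div_ne_zero han1 han
  have hrq : 0 < ‖q‖ := norm_pos_iff.mpr hq0
  have hr : t ≤ ‖q‖ := by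
    rw [hq, norm_div, le_div_iff₀ hanpos]; exact hcond
  -- cos of arg q equals cos of the difference of args
  have hangle : (Complex.arg q : Real.Angle) = (↑(Complex.arg an1 - Complex.arg an) : Real.Angle) := by
    rw [hq, Complex.arg_div_coe_angle han1 han, Real.Angle.coe_sub]
  have hcosq : Real.cos (Complex.arg q) = Real.cos (Complex.arg an1 - Complex.arg an) := by
    have := congrArg Real.Angle.cos hangle
    rw [Real.Angle.cos_coe, Real.Angle.cos_coe] at this; exact this
  -- |arg an1 - arg an| ≤ 2α
  have hδ : |Complex.arg an1 - Complex.arg an| ≤ 2 * α := by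
    have : Complex.arg an1 - Complex.arg an =
        (Complex.arg an1 - β) - (Complex.arg an - β) := by ring
    rw [this]
    calc |(Complex.arg an1 - β) - (Complex.arg an - β)| ≤
        |Complex.arg an1 - β| + |Complex.arg an - β| := abs_sub _ _
      _ ≤ 2 * α := by linarith
  have hcos2 : Real.cos (2 * α) ≤ Real.cos (Complex.arg q) := by
    have h1 := Real.cos_le_cos_of_nonneg_of_le_pi (abs_nonneg (Complex.arg an1 - Complex.arg an))
      (show 2 * α ≤ Real.pi by linarith [Real.pi_pos]) hδ
    rw [Real.cos_abs] at h1
    rw [hcosq]; exact h1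
  have hcos2α : Real.cos (2 * α) = 2 * Real.cos α ^ 2 - 1 := Real.cos_two_mul α
  have hre : q.re = ‖q‖ * Real.cos (Complex.arg q) := by
    rw [Complex.cos_arg hq0]
    field_simp
  have hA2 : ‖q - (t : ℂ)‖ ^ 2 =
      ‖q‖ ^ 2 + t ^ 2 - 2 * t * q.re := by
    rw [Complex.sq_norm, Complex.normSq_sub, ← Complex.sq_norm q, ← Complex.sq_norm ((t:ℂ))]
    simp [Complex.norm_real, abs_of_pos htpos, Complex.mul_re, Complex.conj_ofReal]
    ring
  have hs : 0 ≤ Real.sin α := Real.sin_nonneg_of_nonneg_of_le_pi hα0 (by linarith [Real.pi_pos])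
  have hc : 0 ≤ Real.cos α := Real.cos_nonneg_of_mem_Icc ⟨by linarith [Real.pi_pos], hα⟩
  have hsc : Real.sin α ^ 2 + Real.cos α ^ 2 = 1 := Real.sin_sq_add_cos_sq α
  have hA0 : 0 ≤ ‖q - (t : ℂ)‖ := norm_nonneg _
  have hB0 : 0 ≤ (‖q‖ - t) * Real.cos α + (t + ‖q‖) * Real.sin α := by
    have := mul_nonneg (sub_nonneg.2 hr) hc
    have := mul_nonneg (by linarith : (0:ℝ) ≤ t + ‖q‖) hs
    linarith
  have expand : ((‖q‖ - t) * Real.cos α + (t + ‖q‖) * Real.sin α) ^ 2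
      = ‖q‖ ^ 2 + t ^ 2 - 2 * t * ‖q‖ * (2 * Real.cos α ^ 2 - 1)
        + 2 * (‖q‖ ^ 2 - t ^ 2) * Real.sin α * Real.cos α := by
    linear_combination (t + ‖q‖) ^ 2 * hsc
  have hsq : ‖q - (t : ℂ)‖ ^ 2 ≤
      ((‖q‖ - t) * Real.cos α + (t + ‖q‖) * Real.sin α) ^ 2 := by
    rw [expand, hA2, hre]
    have h1 : t * ‖q‖ * Real.cos (2 * α) ≤
        t * ‖q‖ * Real.cos q.arg :=
      mul_le_mul_of_nonneg_left hcos2 (le_of_lt (mul_pos htpos hrq))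
    rw [hcos2α] at h1
    have h2 : 0 ≤ (‖q‖ ^ 2 - t ^ 2) * Real.sin α * Real.cos α := by
      have : 0 ≤ ‖q‖ ^ 2 - t ^ 2 := by nlinarith
      positivity
    nlinarith [h1, h2]
  exact le_of_sq_le_sq hsq hB0
end
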